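/- arXiv:1710.08794 — 6 statements merged into one kernel-verified Lean document; each statement's English description precedes it below -/
import Mathlib

section
/- Let N ≥ 1 and let f : ℝ → ℝ be Lebesgue integrable. Suppose that f(x) ≥ 0 for all x ∈ ℝ, and that for all x, y ∈ ℝ^N one has Δ_N(x)·Δ_N(y)·det[f(x_b − y_c)]_{b,c=1,…,N} ≥ 0. Then f is a Pólya frequency function of order N, i.e. for every m = 1,…,N and all x, y ∈ ℝ^m one has Δ_m(x)·Δ_m(y)·det[f(x_b − y_c)]_{b,c=1,…,m} ≥ 0. -/
open MeasureTheory Finset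

/-- The Vandermonde determinant `Δ_m(a) = ∏_{1 ≤ b < c ≤ m} (a_c − a_b)`. -/
noncomputable def vdm {m : ℕ} (a : Fin m → ℝ) : ℝ :=
  ∏ p ∈ Finset.univ.filter (fun p : Fin m × Fin m => p.1 < p.2), (a p.2 - a p.1)

lemma vdm_eq_prod {m : ℕ} (a : Fin m → ℝ) :
    vdm a = ∏ i : Fin m, ∏ j : Fin m, if i < j then a j - a i else 1 := by
  rw [vdm, Finset.prod_filter]
  exact Fintype.prod_prod_type _

lemma vdm_snoc {n : ℕ} (x : Fin n → ℝ) (T : ℝ) :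
    vdm (Fin.snoc x T) = vdm x * ∏ b, (T - x b) := by
  rw [vdm_eq_prod, vdm_eq_prod, Fin.prod_univ_castSucc]
  simp only [Fin.prod_univ_castSucc, Fin.snoc_castSucc, Fin.snoc_last,
    Fin.castSucc_lt_castSucc_iff, Fin.castSucc_lt_last, if_true, lt_self_iff_false, if_false]
  have h1 : ∀ j : Fin n, ¬ (Fin.last n < Fin.castSucc j) := fun j =>
    (Fin.castSucc_lt_last j).not_gt
  simp only [h1, if_false, Finset.prod_const_one, mul_one, Finset.prod_mul_distrib]


lemma exists_far {n : ℕ} (f : ℝ → ℝ) (hf : Integrable f) (x y : Fin n → ℝ)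
    (t0 : ℝ) {ε : ℝ} (hε : 0 < ε) (k : ℝ) :
    ∃ S : ℝ, k ≤ S ∧ (∀ b, f (x b - S) < ε) ∧ (∀ c, f (S + t0 - y c) < ε) := by
  set Bad : Set ℝ :=
    (⋃ b, {S : ℝ | ε ≤ f (x b - S)}) ∪ ⋃ c, {S : ℝ | ε ≤ f (S + (t0 - y c))} with hBadDef
  have hb : ∀ b : Fin n, volume {S : ℝ | ε ≤ f (x b - S)} < ⊤ :=
    fun b => (hf.comp_sub_left (x b)).measure_ge_lt_top hε
  have hc : ∀ c : Fin n, volume {S : ℝ | ε ≤ f (S + (t0 - y c))} < ⊤ :=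
    fun c => (hf.comp_add_right (t0 - y c)).measure_ge_lt_top hε
  have hBad : volume Bad < ⊤ := by
    refine lt_of_le_of_lt (measure_union_le (μ := (volume : Measure ℝ)) _ _) (ENNReal.add_lt_top.2 ⟨?_, ?_⟩)
    · exact lt_of_le_of_lt (measure_iUnion_fintype_le (volume : Measure ℝ) _)
        (ENNReal.sum_lt_top.2 fun b _ => hb b)
    · exact lt_of_le_of_lt (measure_iUnion_fintype_le (volume : Measure ℝ) _)
        (ENNReal.sum_lt_top.2 fun c _ => hc c)
  have hnot : ¬ (Set.Ici k ⊆ Bad) := by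
    intro h
    have := measure_mono (μ := (volume : Measure ℝ)) h
    rw [Real.volume_Ici] at this
    exact absurd (lt_of_le_of_lt this hBad) (by simp)
  obtain ⟨S, hS1, hS2⟩ := Set.not_subset.1 hnot
  refine ⟨S, hS1, ?_, ?_⟩
  · intro b
    by_contra hcon
    exact hS2 (Set.mem_union_left _ (Set.mem_iUnion.2 ⟨b, not_lt.1 hcon⟩))
  · intro c
    by_contra hcon
    refine hS2 (Set.mem_union_right _ (Set.mem_iUnion.2 ⟨c, ?_⟩))
    show ε ≤ f (S + (t0 - y c))
    have h2 : S + t0 - y c = S + (t0 - y c) := by ring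
    rw [← h2]
    exact not_lt.1 hcon

lemma step (f : ℝ → ℝ) (hf : Integrable f) (hpos : ∀ t : ℝ, 0 ≤ f t) (n : ℕ)
    (h : ∀ x y : Fin (n+1) → ℝ,
      0 ≤ vdm x * vdm y * Matrix.det (Matrix.of fun b c : Fin (n+1) => f (x b - y c))) :
    ∀ x y : Fin n → ℝ,
      0 ≤ vdm x * vdm y * Matrix.det (Matrix.of fun b c : Fin n => f (x b - y c)) := by
  intro x y
  rcases Nat.eq_zero_or_pos n with rfl | hn
  · simp [vdm, Matrix.det_fin_zero]
  by_cases hzero : ∀ t : ℝ, f t = 0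
  · have hM0 : (Matrix.of fun b c : Fin n => f (x b - y c)) = 0 := by
      ext b c; simp [hzero]
    haveI : Nonempty (Fin n) := ⟨⟨0, hn⟩⟩
    rw [hM0, Matrix.det_zero, mul_zero]
  push_neg at hzero
  obtain ⟨t0, ht0⟩ := hzero
  have ht0' : 0 < f t0 := lt_of_le_of_ne (hpos t0) (Ne.symm ht0)
  have hch : ∀ k : ℕ, ∃ S : ℝ, (k : ℝ) ≤ S ∧ (∀ b, f (x b - S) < 1/((k:ℝ)+1)) ∧
      (∀ c, f (S + t0 - y c) < 1/((k:ℝ)+1)) := fun k =>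
    exists_far f hf x y t0 (by positivity) (k : ℝ)
  choose S hSk hSx hSy using hch
  set A : Matrix (Fin n) (Fin n) ℝ := Matrix.of fun b c => f (x b - y c) with hA
  set Mk : ℕ → Matrix (Fin (n+1)) (Fin (n+1)) ℝ := fun k =>
    Matrix.of fun b c => f ((Fin.snoc x (S k + t0) : Fin (n+1) → ℝ) b - (Fin.snoc y (S k) : Fin (n+1) → ℝ) c) with hMk
  set M : Matrix (Fin (n+1)) (Fin (n+1)) ℝ :=
    Matrix.of (Fin.snoc (fun b : Fin n => Fin.snoc (fun c => f (x b - y c)) 0)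
      (Fin.snoc (fun _ : Fin n => (0:ℝ)) (f t0))) with hM
  have h1n : Filter.Tendsto (fun k : ℕ => 1/((k:ℝ)+1)) Filter.atTop (nhds 0) :=
    tendsto_one_div_add_atTop_nhds_zero_nat
  have hent : ∀ b c, Filter.Tendsto (fun k => Mk k b c) Filter.atTop (nhds (M b c)) := by
    intro b c
    induction b using Fin.lastCases with
    | last =>
      induction c using Fin.lastCases with
      | last =>
        simp only [hMk, hM, Matrix.of_apply, Fin.snoc_last, add_sub_cancel_left]
        exact tendsto_const_nhds
      | cast j =>
        simp only [hMk, hM, Matrix.of_apply, Fin.snoc_last, Fin.snoc_castSucc]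
        exact squeeze_zero (fun k => hpos _) (fun k => (hSy k j).le) h1n
    | cast i =>
      induction c using Fin.lastCases with
      | last =>
        simp only [hMk, hM, Matrix.of_apply, Fin.snoc_last, Fin.snoc_castSucc]
        exact squeeze_zero (fun k => hpos _) (fun k => (hSx k i).le) h1n
      | cast j =>
        simp only [hMk, hM, Matrix.of_apply, Fin.snoc_castSucc]
        exact tendsto_const_nhds
  have hdet : Filter.Tendsto (fun k => (Mk k).det) Filter.atTop (nhds M.det) := by
    have htM : Filter.Tendsto Mk Filter.atTop (nhds M) := by
      refine tendsto_pi_nhds.2 ?_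
      intro b
      refine tendsto_pi_nhds.2 ?_
      intro c
      exact hent b c
    exact ((continuous_id.matrix_det).tendsto M).comp htM
  have hsub : M.submatrix Fin.castSucc Fin.castSucc = A := by
    ext i j
    simp [hM, hA, Fin.snoc_castSucc]
  have hdetM : M.det = f t0 * A.det := by
    rw [Matrix.det_succ_row M (Fin.last n), Finset.sum_eq_single (Fin.last n)]
    · rw [Fin.succAbove_last, hsub]
      have hMll : M (Fin.last n) (Fin.last n) = f t0 := by simp [hM]
      rw [hMll]
      have : ((-1 : ℝ)) ^ ((Fin.last n : ℕ) + (Fin.last n : ℕ)) = 1 :=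
        Even.neg_one_pow ⟨n, by simp [Fin.val_last]⟩
      rw [this, one_mul]
    · intro j _ hj
      obtain ⟨i, rfl⟩ := Fin.exists_castSucc_eq.2 hj
      have : M (Fin.last n) (Fin.castSucc i) = 0 := by simp [hM]
      rw [this, mul_zero, zero_mul]
    · simp
  have hStend : Filter.Tendsto S Filter.atTop Filter.atTop :=
    Filter.tendsto_atTop_mono hSk tendsto_natCast_atTop_atTop
  have hev : ∀ᶠ k in Filter.atTop, 0 ≤ vdm x * vdm y * (Mk k).det := by
    have hx' : ∀ᶠ k in Filter.atTop, ∀ b, x b - t0 < S k :=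
      Filter.eventually_all.2 fun b => hStend.eventually_gt_atTop _
    have hy' : ∀ᶠ k in Filter.atTop, ∀ c, y c < S k :=
      Filter.eventually_all.2 fun c => hStend.eventually_gt_atTop _
    filter_upwards [hx', hy'] with k hkx hky
    have hP : 0 < ∏ b, (S k + t0 - x b) :=
      Finset.prod_pos fun b _ => by have := hkx b; linarith
    have hQ : 0 < ∏ c, (S k - y c) :=
      Finset.prod_pos fun c _ => by have := hky c; linarith
    have h0 := h (Fin.snoc x (S k + t0)) (Fin.snoc y (S k))
    rw [vdm_snoc, vdm_snoc] at h0
    have heq : vdm x * (∏ b, (S k + t0 - x b)) * (vdm y * ∏ c, (S k - y c)) *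
        Matrix.det (Matrix.of fun b c : Fin (n+1) =>
          f ((Fin.snoc x (S k + t0) : Fin (n+1) → ℝ) b - (Fin.snoc y (S k) : Fin (n+1) → ℝ) c))
        = (vdm x * vdm y * (Mk k).det) * ((∏ b, (S k + t0 - x b)) * ∏ c, (S k - y c)) := by
      rw [hMk]; ring
    rw [heq] at h0
    exact (mul_nonneg_iff_of_pos_right (mul_pos hP hQ)).1 h0
  have hlim : 0 ≤ vdm x * vdm y * M.det :=
    ge_of_tendsto (hdet.const_mul (vdm x * vdm y)) hev
  rw [hdetM] at hlim
  have hre : vdm x * vdm y * (f t0 * A.det) = f t0 * (vdm x * vdm y * A.det) := by ring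
  rw [hre] at hlim
  exact (mul_nonneg_iff_of_pos_left ht0').1 hlim

/-- an integrable nonnegative `f` satisfying the sign condition of order `N`
satisfies it for every order `m = 1, …, N`, i.e. it is a Pólya frequency function of order `N`. -/
theorem integrable_nonneg_detCond_isPolyaFrequencyFunction
    (N : ℕ) (hN : 1 ≤ N) (f : ℝ → ℝ)
    (hf : Integrable f)
    (hpos : ∀ x : ℝ, 0 ≤ f x)
    (hdetN : ∀ x y : Fin N → ℝ,
      0 ≤ vdm x * vdm y * Matrix.det (Matrix.of fun b c : Fin N => f (x b - y c))) :
    ∀ m : ℕ, 1 ≤ m → m ≤ N → ∀ x y : Fin m → ℝ,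
      0 ≤ vdm x * vdm y * Matrix.det (Matrix.of fun b c : Fin m => f (x b - y c)) := by
  have desc : ∀ k m : ℕ,
      (∀ x y : Fin (m + k) → ℝ,
        0 ≤ vdm x * vdm y * Matrix.det (Matrix.of fun b c : Fin (m + k) => f (x b - y c))) →
      ∀ x y : Fin m → ℝ,
        0 ≤ vdm x * vdm y * Matrix.det (Matrix.of fun b c : Fin m => f (x b - y c)) := by
    intro k
    induction k with
    | zero => intro m h; exact h
    | succ k ih =>
      intro m h
      exact ih m (step f hf hpos (m + k) h)
  intro m _ hm
  apply desc (N - m) m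
  have : m + (N - m) = N := Nat.add_sub_cancel' hm
  rw [this]
  exact hdetN
end

section
/- Let n ≥ 2, let ν ∈ ℕ₀ ∪ {−1/2, 1/2}, and let ω̃ belong to the class L¹_{H₂}(ℝ) for n with support contained in [0,∞) (so that in particular lim_{y→0⁺} ω̃^{(j)}(y) = 0 for j = 0,…,n−2). Define ω : (0,∞) → ℝ by ω(x) = (1/Γ(ν+1)) ∫₀^∞ (x/y)^ν · e^{−x/y} · ω̃(y) · y^{−1} dy. Then for every l = 0,…,n−1 and every x > 0 one has (D_ν^l ω)(x) = (1/Γ(ν+1)) ∫₀^∞ (x/y)^ν · e^{−x/y} · (−1)^l · ω̃^{(l)}(y) · y^{−1} dy. -/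
open MeasureTheory Finset

/-- The differential operator `(D_ν f)(x) = x^ν · d/dx( x^{1−ν} · f′(x) )`. -/
noncomputable def Dnu (ν : ℝ) (f : ℝ → ℝ) : ℝ → ℝ :=
  fun x => x ^ ν * deriv (fun t : ℝ => t ^ (1 - ν) * deriv f t) x

open Set Filter Topology

lemma aux_pow_exp_bound (p : ℝ) (hp : 0 ≤ p) :
    ∃ C : ℝ, 0 < C ∧ ∀ u : ℝ, 0 < u → u ^ p * Real.exp (-u) ≤ C := by
  refine ⟨1 + (Nat.factorial ⌈p⌉₊ : ℝ), by positivity, fun u hu => ?_⟩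
  rcases le_or_gt u 1 with h1 | h1
  · have h2 : u ^ p ≤ 1 := Real.rpow_le_one hu.le h1 hp
    have h3 : Real.exp (-u) ≤ 1 := Real.exp_le_one_iff.2 (by linarith)
    nlinarith [Real.exp_pos (-u), Real.rpow_pos_of_pos hu p,
      (Nat.cast_pos (α := ℝ)).mpr (Nat.factorial_pos ⌈p⌉₊)]
  · have h2 : u ^ p ≤ u ^ (⌈p⌉₊ : ℝ) :=
      Real.rpow_le_rpow_of_exponent_le h1.le (Nat.le_ceil p)
    rw [Real.rpow_natCast] at h2
    have h3 : u ^ ⌈p⌉₊ ≤ (Nat.factorial ⌈p⌉₊ : ℝ) * Real.exp u := by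
      have := Real.pow_div_factorial_le_exp (x := u) (by linarith) ⌈p⌉₊
      rw [div_le_iff₀ (by positivity)] at this
      linarith
    have h4 : u ^ p * Real.exp (-u) ≤ (Nat.factorial ⌈p⌉₊ : ℝ) * Real.exp u * Real.exp (-u) := by
      have := Real.exp_pos (-u)
      nlinarith [h2.trans h3]
    rw [mul_assoc, ← Real.exp_add] at h4
    simp at h4
    linarith

/-- Key kernel bound: `(x/y)^q e^{-x/y} y^{-k} ≤ C x^{-k}` when `q + k ≥ 0`. -/
lemma kernel_bd (q k : ℝ) (hqk : 0 ≤ q + k) :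
    ∃ C : ℝ, 0 < C ∧ ∀ x y : ℝ, 0 < x → 0 < y →
      (x / y) ^ q * Real.exp (-(x / y)) * y ^ (-k) ≤ C * x ^ (-k) := by
  obtain ⟨C, hC, hbd⟩ := aux_pow_exp_bound (q + k) hqk
  refine ⟨C, hC, fun x y hx hy => ?_⟩
  have hu : 0 < x / y := div_pos hx hy
  have key : y ^ (-k) = (x / y) ^ k * x ^ (-k) := by
    rw [Real.div_rpow hx.le hy.le, Real.rpow_neg hx.le, Real.rpow_neg hy.le]
    have h1 : (x:ℝ) ^ k ≠ 0 := (Real.rpow_pos_of_pos hx k).ne'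
    have h2 : (y:ℝ) ^ k ≠ 0 := (Real.rpow_pos_of_pos hy k).ne'
    field_simp
  rw [key, show (x / y) ^ q * Real.exp (-(x / y)) * ((x / y) ^ k * x ^ (-k))
      = ((x / y) ^ q * (x / y) ^ k * Real.exp (-(x / y))) * x ^ (-k) by ring,
    ← Real.rpow_add hu]
  have := hbd (x / y) hu
  have hxk : (0:ℝ) ≤ x ^ (-k) := (Real.rpow_pos_of_pos hx (-k)).le
  exact mul_le_mul_of_nonneg_right this hxk

/-- `t ↦ t^{-c}` is antitone on `[a,∞)` for `c ≥ 0`. -/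
lemma rpow_neg_anti {a t c : ℝ} (ha : 0 < a) (hat : a ≤ t) (hc : 0 ≤ c) :
    t ^ (-c) ≤ a ^ (-c) := by
  have ht : 0 < t := lt_of_lt_of_le ha hat
  rw [Real.rpow_neg ht.le, Real.rpow_neg ha.le]
  exact inv_anti₀ (Real.rpow_pos_of_pos ha c) (Real.rpow_le_rpow ha.le hat hc)


noncomputable def Pfun (ν : ℝ) (h : ℝ → ℝ) (t y : ℝ) : ℝ :=
  (ν * (t / y) ^ (ν - 1) * (1 / y) * Real.exp (-(t / y)) +
    (t / y) ^ ν * (Real.exp (-(t / y)) * -(1 / y))) * h y / y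

noncomputable def Gfun (ν : ℝ) (h : ℝ → ℝ) (t y : ℝ) : ℝ :=
  (ν - t / y) * Real.exp (-(t / y)) * y ^ (-ν - 1) * h y

noncomputable def Qfun (ν : ℝ) (h : ℝ → ℝ) (t y : ℝ) : ℝ :=
  (-(1 / y) * Real.exp (-(t / y)) + (ν - t / y) * (Real.exp (-(t / y)) * -(1 / y))) *
    y ^ (-ν - 1) * h y

lemma kernel_hasDerivAt (ν y t : ℝ) (hy : 0 < y) (ht : 0 < t) :
    HasDerivAt (fun t : ℝ => (t / y) ^ ν * Real.exp (-(t / y)))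
      (ν * (t / y) ^ (ν - 1) * (1 / y) * Real.exp (-(t / y)) +
        (t / y) ^ ν * (Real.exp (-(t / y)) * -(1 / y))) t := by
  have h1 : HasDerivAt (fun t : ℝ => t / y) (1 / y) t := by
    simpa using (hasDerivAt_id t).div_const y
  have h2 : HasDerivAt (fun t : ℝ => (t / y) ^ ν) (ν * (t / y) ^ (ν - 1) * (1 / y)) t := by
    have := (Real.hasDerivAt_rpow_const (x := t / y) (p := ν)
      (Or.inl (div_pos ht hy).ne')).comp t h1
    simpa [Function.comp_def] using this
  have h3 : HasDerivAt (fun t : ℝ => Real.exp (-(t / y))) (Real.exp (-(t / y)) * -(1 / y)) t :=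
    h1.neg.exp
  exact h2.mul h3

lemma kernel2_hasDerivAt (ν y t : ℝ) (hy : 0 < y) :
    HasDerivAt (fun t : ℝ => (ν - t / y) * Real.exp (-(t / y)))
      (-(1 / y) * Real.exp (-(t / y)) + (ν - t / y) * (Real.exp (-(t / y)) * -(1 / y))) t := by
  have h1 : HasDerivAt (fun t : ℝ => t / y) (1 / y) t := by
    simpa using (hasDerivAt_id t).div_const y
  have h5 : HasDerivAt (fun t : ℝ => ν - t / y) (-(1 / y)) t := h1.const_sub ν
  have h3 : HasDerivAt (fun t : ℝ => Real.exp (-(t / y))) (Real.exp (-(t / y)) * -(1 / y)) t :=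
    h1.neg.exp
  exact h5.mul h3

lemma identity_S2 (ν t y : ℝ) (ht : 0 < t) (hy : 0 < y) (h : ℝ → ℝ) :
    t ^ (1 - ν) * Pfun ν h t y = Gfun ν h t y := by
  unfold Pfun Gfun
  have hty : (0:ℝ) < t / y := div_pos ht hy
  have htν : (0:ℝ) < t ^ ν := Real.rpow_pos_of_pos ht ν
  have hyν : (0:ℝ) < y ^ ν := Real.rpow_pos_of_pos hy ν
  have e1 : (t / y) ^ (ν - 1) = (t / y) ^ ν / (t / y) := Real.rpow_sub_one hty.ne' ν
  have e2 : (t / y) ^ ν = t ^ ν / y ^ ν := Real.div_rpow ht.le hy.le ν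
  have e3 : t ^ (1 - ν) = t / t ^ ν := by
    rw [Real.rpow_sub ht, Real.rpow_one]
  have e4 : y ^ (-ν - 1) = y ^ (-ν) / y := Real.rpow_sub_one hy.ne' (-ν)
  have e5 : y ^ (-ν) = (y ^ ν)⁻¹ := Real.rpow_neg hy.le ν
  rw [e1, e2, e3, e4, e5]
  field_simp
  ring

lemma V_hasDerivAt (ν x : ℝ) (hx : 0 < x) (h h' : ℝ → ℝ)
    (hd : ∀ y, HasDerivAt h (h' y) y) (y : ℝ) (hy : 0 < y) :
    HasDerivAt (fun y : ℝ => (x / y) ^ ν * Real.exp (-(x / y)) * h y / y)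
      (x ^ ν * Qfun ν h x y + (x / y) ^ ν * Real.exp (-(x / y)) * h' y / y) y := by
  have r1 : HasDerivAt (fun y : ℝ => x / y) (-(x / y ^ 2)) y := by
    have := (hasDerivAt_const y x).div (hasDerivAt_id y) hy.ne'
    simpa [neg_div, Pi.div_def] using this
  have r2 : HasDerivAt (fun y : ℝ => (x / y) ^ ν) (ν * (x / y) ^ (ν - 1) * -(x / y ^ 2)) y := by
    have := (Real.hasDerivAt_rpow_const (x := x / y) (p := ν)
      (Or.inl (div_pos hx hy).ne')).comp y r1
    simpa [Function.comp_def] using this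
  have r3 : HasDerivAt (fun y : ℝ => Real.exp (-(x / y))) (Real.exp (-(x / y)) * (x / y ^ 2)) y := by
    simpa using r1.neg.exp
  have r4 := ((r2.mul r3).mul (hd y)).div (hasDerivAt_id y) hy.ne'
  simp only [id_eq, mul_one, Pi.mul_apply] at r4
  refine r4.congr_deriv ?_
  unfold Qfun
  have hty : (0:ℝ) < x / y := div_pos hx hy
  have htν : (0:ℝ) < x ^ ν := Real.rpow_pos_of_pos hx ν
  have hyν : (0:ℝ) < y ^ ν := Real.rpow_pos_of_pos hy ν
  have e1 : (x / y) ^ (ν - 1) = (x / y) ^ ν / (x / y) := Real.rpow_sub_one hty.ne' ν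
  have e2 : (x / y) ^ ν = x ^ ν / y ^ ν := Real.div_rpow hx.le hy.le ν
  have e4 : y ^ (-ν - 1) = y ^ (-ν) / y := Real.rpow_sub_one hy.ne' (-ν)
  have e5 : y ^ (-ν) = (y ^ ν)⁻¹ := Real.rpow_neg hy.le ν
  rw [e1, e2, e4, e5]
  field_simp
  ring

lemma Ffun_bound (ν : ℝ) (hν : -(1/2:ℝ) ≤ ν) (h : ℝ → ℝ) :
    ∃ C : ℝ, 0 < C ∧ ∀ t y : ℝ, 0 < t → 0 < y →
      |(t / y) ^ ν * Real.exp (-(t / y)) * h y / y| ≤ C * t ^ (-1:ℝ) * |h y| := by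
  obtain ⟨C, hC, hb⟩ := kernel_bd ν 1 (by linarith)
  refine ⟨C, hC, fun t y ht hy => ?_⟩
  have e1 : (t / y) ^ ν * Real.exp (-(t / y)) * h y / y
      = ((t / y) ^ ν * Real.exp (-(t / y)) * y ^ (-1:ℝ)) * h y := by
    rw [Real.rpow_neg_one]; ring
  have hK : (0:ℝ) ≤ (t / y) ^ ν * Real.exp (-(t / y)) * y ^ (-1:ℝ) := by positivity
  rw [e1, abs_mul, abs_of_nonneg hK]
  exact mul_le_mul_of_nonneg_right (hb t y ht hy) (abs_nonneg _)

lemma Pfun_bound (ν : ℝ) (hν : -(1/2:ℝ) ≤ ν) (h : ℝ → ℝ) :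
    ∃ C : ℝ, 0 < C ∧ ∀ t y : ℝ, 0 < t → 0 < y →
      |Pfun ν h t y| ≤ C * t ^ (-2:ℝ) * |h y| := by
  obtain ⟨C₁, hC₁, hb₁⟩ := kernel_bd (ν - 1) 2 (by linarith)
  obtain ⟨C₂, hC₂, hb₂⟩ := kernel_bd ν 2 (by linarith)
  refine ⟨|ν| * C₁ + C₂ + 1, by positivity, fun t y ht hy => ?_⟩
  set A := (t / y) ^ (ν - 1) * Real.exp (-(t / y)) * y ^ (-2:ℝ) with hA
  set B := (t / y) ^ ν * Real.exp (-(t / y)) * y ^ (-2:ℝ) with hB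
  have hA0 : 0 ≤ A := by positivity
  have hB0 : 0 ≤ B := by positivity
  have e1 : Pfun ν h t y = (ν * A - B) * h y := by
    unfold Pfun; rw [hA, hB, Real.rpow_neg hy.le, show ((2:ℝ)) = ((2:ℕ):ℝ) by norm_num,
      Real.rpow_natCast]
    field_simp
    ring
  rw [e1, abs_mul]
  have h2 : |ν * A - B| ≤ |ν| * A + B := by
    calc |ν * A - B| ≤ |ν * A| + |B| := abs_sub _ _
    _ = |ν| * A + B := by rw [abs_mul, abs_of_nonneg hA0, abs_of_nonneg hB0]
  have h3 : |ν| * A + B ≤ (|ν| * C₁ + C₂ + 1) * t ^ (-2:ℝ) := by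
    have b1 := hb₁ t y ht hy
    have b2 := hb₂ t y ht hy
    have ht2 : (0:ℝ) < t ^ (-2:ℝ) := Real.rpow_pos_of_pos ht _
    nlinarith [abs_nonneg ν, mul_le_mul_of_nonneg_left b1 (abs_nonneg ν)]
  calc |ν * A - B| * |h y| ≤ ((|ν| * C₁ + C₂ + 1) * t ^ (-2:ℝ)) * |h y| :=
        mul_le_mul_of_nonneg_right (h2.trans h3) (abs_nonneg _)
  _ = (|ν| * C₁ + C₂ + 1) * t ^ (-2:ℝ) * |h y| := by ring

lemma Gfun_bound (ν : ℝ) (hν : -(1/2:ℝ) ≤ ν) (h : ℝ → ℝ) :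
    ∃ C : ℝ, 0 < C ∧ ∀ t y : ℝ, 0 < t → 0 < y →
      |Gfun ν h t y| ≤ C * t ^ (-(ν+1)) * |h y| := by
  obtain ⟨C₁, hC₁, hb₁⟩ := kernel_bd 0 (ν+1) (by linarith)
  obtain ⟨C₂, hC₂, hb₂⟩ := kernel_bd 1 (ν+1) (by linarith)
  refine ⟨|ν| * C₁ + C₂ + 1, by positivity, fun t y ht hy => ?_⟩
  set A := Real.exp (-(t / y)) * y ^ (-(ν+1)) with hA
  set B := (t / y) * Real.exp (-(t / y)) * y ^ (-(ν+1)) with hB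
  have hty : (0:ℝ) < t / y := div_pos ht hy
  have hA0 : 0 ≤ A := by positivity
  have hB0 : 0 ≤ B := by positivity
  have e1 : Gfun ν h t y = (ν * A - B) * h y := by
    unfold Gfun
    rw [show (-ν - 1 : ℝ) = -(ν+1) by ring, hA, hB]; ring
  rw [e1, abs_mul]
  have h2 : |ν * A - B| ≤ |ν| * A + B := by
    calc |ν * A - B| ≤ |ν * A| + |B| := abs_sub _ _
    _ = |ν| * A + B := by rw [abs_mul, abs_of_nonneg hA0, abs_of_nonneg hB0]
  have b1 := hb₁ t y ht hy
  have b2 := hb₂ t y ht hy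
  rw [Real.rpow_zero, one_mul] at b1
  rw [Real.rpow_one] at b2
  have h3 : |ν| * A + B ≤ (|ν| * C₁ + C₂ + 1) * t ^ (-(ν+1)) := by
    have ht2 : (0:ℝ) < t ^ (-(ν+1)) := Real.rpow_pos_of_pos ht _
    nlinarith [abs_nonneg ν, mul_le_mul_of_nonneg_left b1 (abs_nonneg ν)]
  calc |ν * A - B| * |h y| ≤ ((|ν| * C₁ + C₂ + 1) * t ^ (-(ν+1))) * |h y| :=
        mul_le_mul_of_nonneg_right (h2.trans h3) (abs_nonneg _)
  _ = (|ν| * C₁ + C₂ + 1) * t ^ (-(ν+1)) * |h y| := by ring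

lemma Qfun_bound (ν : ℝ) (hν : -(1/2:ℝ) ≤ ν) (h : ℝ → ℝ) :
    ∃ C : ℝ, 0 < C ∧ ∀ t y : ℝ, 0 < t → 0 < y →
      |Qfun ν h t y| ≤ C * t ^ (-(ν+2)) * |h y| := by
  obtain ⟨C₁, hC₁, hb₁⟩ := kernel_bd 0 (ν+2) (by linarith)
  obtain ⟨C₂, hC₂, hb₂⟩ := kernel_bd 1 (ν+2) (by linarith)
  refine ⟨(|ν|+1) * C₁ + C₂ + 1, by positivity, fun t y ht hy => ?_⟩
  set A := Real.exp (-(t / y)) * y ^ (-(ν+2)) with hA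
  set B := (t / y) * Real.exp (-(t / y)) * y ^ (-(ν+2)) with hB
  have hty : (0:ℝ) < t / y := div_pos ht hy
  have hA0 : 0 ≤ A := by positivity
  have hB0 : 0 ≤ B := by positivity
  have e1 : Qfun ν h t y = (B - (ν+1) * A) * h y := by
    unfold Qfun
    have ee : y ^ (-(ν+2)) = y ^ (-ν-1) * y⁻¹ := by
      rw [← Real.rpow_neg_one y, ← Real.rpow_add hy]
      ring_nf
    rw [hA, hB, ee]
    field_simp
    ring
  rw [e1, abs_mul]
  have h2 : |B - (ν+1) * A| ≤ B + (|ν|+1) * A := by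
    calc |B - (ν+1) * A| ≤ |B| + |(ν+1) * A| := abs_sub _ _
    _ = B + |ν + 1| * A := by rw [abs_of_nonneg hB0, abs_mul, abs_of_nonneg hA0]
    _ ≤ B + (|ν|+1) * A := by
        have : |ν + 1| ≤ |ν| + 1 := (abs_add_le ν 1).trans (by norm_num)
        nlinarith
  have b1 := hb₁ t y ht hy
  have b2 := hb₂ t y ht hy
  rw [Real.rpow_zero, one_mul] at b1
  rw [Real.rpow_one] at b2
  have h3 : B + (|ν|+1) * A ≤ ((|ν|+1) * C₁ + C₂ + 1) * t ^ (-(ν+2)) := by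
    have ht2 : (0:ℝ) < t ^ (-(ν+2)) := Real.rpow_pos_of_pos ht _
    nlinarith [abs_nonneg ν, mul_le_mul_of_nonneg_left b1 (by positivity : (0:ℝ) ≤ |ν|+1)]
  calc |B - (ν+1) * A| * |h y| ≤ (((|ν|+1) * C₁ + C₂ + 1) * t ^ (-(ν+2))) * |h y| :=
        mul_le_mul_of_nonneg_right (h2.trans h3) (abs_nonneg _)
  _ = ((|ν|+1) * C₁ + C₂ + 1) * t ^ (-(ν+2)) * |h y| := by ring

lemma contOn_div (t : ℝ) : ContinuousOn (fun y : ℝ => t / y) (Ioi 0) :=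
  continuousOn_const.div continuousOn_id (fun y hy => ne_of_gt hy)

lemma contOn_kernel (q t : ℝ) (ht : 0 < t) : ContinuousOn (fun y : ℝ => (t / y) ^ q) (Ioi 0) :=
  (contOn_div t).rpow_const (fun y hy => Or.inl (div_pos ht hy).ne')

lemma contOn_exp (t : ℝ) : ContinuousOn (fun y : ℝ => Real.exp (-(t / y))) (Ioi 0) :=
  Real.continuous_exp.comp_continuousOn (contOn_div t).neg

lemma contOn_rpow (c : ℝ) : ContinuousOn (fun y : ℝ => y ^ c) (Ioi 0) :=
  continuousOn_id.rpow_const (fun y hy => Or.inl (ne_of_gt hy))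

lemma measF (ν t : ℝ) (ht : 0 < t) (h : ℝ → ℝ) (hc : Continuous h) :
    AEStronglyMeasurable (fun y : ℝ => (t / y) ^ ν * Real.exp (-(t / y)) * h y / y)
      (volume.restrict (Ioi 0)) :=
  ((((contOn_kernel ν t ht).mul (contOn_exp t)).mul hc.continuousOn).div
    continuousOn_id (fun y hy => ne_of_gt hy)).aestronglyMeasurable measurableSet_Ioi

lemma measP (ν t : ℝ) (ht : 0 < t) (h : ℝ → ℝ) (hc : Continuous h) :
    AEStronglyMeasurable (fun y : ℝ => Pfun ν h t y) (volume.restrict (Ioi 0)) := by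
  unfold Pfun
  exact ((((((contOn_kernel (ν - 1) t ht).const_smul ν).smul
      (continuousOn_const.div continuousOn_id (fun y hy => ne_of_gt hy))).mul
      (contOn_exp t)).add ((contOn_kernel ν t ht).mul ((contOn_exp t).mul
      (continuousOn_const.div continuousOn_id (fun y hy => ne_of_gt hy)).neg))).mul
      hc.continuousOn).div continuousOn_id
      (fun y hy => ne_of_gt hy) |>.aestronglyMeasurable measurableSet_Ioi

lemma measG (ν t : ℝ) (h : ℝ → ℝ) (hc : Continuous h) :
    AEStronglyMeasurable (fun y : ℝ => Gfun ν h t y) (volume.restrict (Ioi 0)) := by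
  unfold Gfun
  exact ((((continuousOn_const.sub (contOn_div t)).mul (contOn_exp t)).mul
    (contOn_rpow (-ν - 1))).mul hc.continuousOn).aestronglyMeasurable measurableSet_Ioi

lemma measQ (ν t : ℝ) (h : ℝ → ℝ) (hc : Continuous h) :
    AEStronglyMeasurable (fun y : ℝ => Qfun ν h t y) (volume.restrict (Ioi 0)) := by
  unfold Qfun
  exact (((((continuousOn_const.div continuousOn_id (fun y hy => ne_of_gt hy)).neg.mul
    (contOn_exp t)).add ((continuousOn_const.sub (contOn_div t)).mul ((contOn_exp t).mul
    (continuousOn_const.div continuousOn_id (fun y hy => ne_of_gt hy)).neg))).mul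
    (contOn_rpow (-ν - 1))).mul hc.continuousOn).aestronglyMeasurable measurableSet_Ioi

lemma integrable_of_bound {f g : ℝ → ℝ} (hf : AEStronglyMeasurable f (volume.restrict (Ioi 0)))
    (hg : IntegrableOn g (Ioi 0)) (C : ℝ) (hb : ∀ y ∈ Ioi (0:ℝ), |f y| ≤ C * |g y|) :
    IntegrableOn f (Ioi 0) := by
  apply Integrable.mono' (hg.abs.const_mul C) hf
  filter_upwards [ae_restrict_mem measurableSet_Ioi] with y hy
  simpa [Real.norm_eq_abs] using hb y hy

lemma ball_pos {t₀ : ℝ} (ht₀ : 0 < t₀) {t : ℝ} (htb : t ∈ Metric.ball t₀ (t₀ / 2)) :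
    0 < t ∧ t₀ / 2 ≤ t := by
  rw [Metric.mem_ball, Real.dist_eq] at htb
  obtain ⟨h1, h2⟩ := abs_lt.mp htb
  constructor <;> linarith

lemma stepF (ν : ℝ) (hν : -(1/2:ℝ) ≤ ν) (h : ℝ → ℝ) (hc : Continuous h)
    (hi : IntegrableOn h (Ioi 0)) (t₀ : ℝ) (ht₀ : 0 < t₀) :
    IntegrableOn (fun y => Pfun ν h t₀ y) (Ioi 0) ∧
      HasDerivAt (fun t => ∫ y in Ioi (0:ℝ), (t / y) ^ ν * Real.exp (-(t / y)) * h y / y)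
        (∫ y in Ioi (0:ℝ), Pfun ν h t₀ y) t₀ := by
  obtain ⟨C, hC, hb⟩ := Pfun_bound ν hν h
  obtain ⟨C₀, hC₀, hb₀⟩ := Ffun_bound ν hν h
  have hhalf : 0 < t₀ / 2 := half_pos ht₀
  apply hasDerivAt_integral_of_dominated_loc_of_deriv_le
    (F' := fun t y => Pfun ν h t y)
    (bound := fun y => C * (t₀ / 2) ^ (-2:ℝ) * |h y|) (Metric.ball_mem_nhds t₀ hhalf)
  · filter_upwards [Ioi_mem_nhds ht₀] with t ht
    exact measF ν t ht h hc
  · apply integrable_of_bound (measF ν t₀ ht₀ h hc) hi (C₀ * t₀ ^ (-1:ℝ))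
    intro y hy
    exact (hb₀ t₀ y ht₀ hy).trans_eq (by ring)
  · exact measP ν t₀ ht₀ h hc
  · filter_upwards [ae_restrict_mem measurableSet_Ioi] with y hy
    intro t htb
    obtain ⟨ht, hle⟩ := ball_pos ht₀ htb
    have step1 : |Pfun ν h t y| ≤ C * t ^ (-2:ℝ) * |h y| := hb t y ht hy
    have step2 : t ^ (-2:ℝ) ≤ (t₀ / 2) ^ (-2:ℝ) := by
      have := rpow_neg_anti hhalf hle (by norm_num : (0:ℝ) ≤ 2)
      simpa using this
    have : C * t ^ (-2:ℝ) * |h y| ≤ C * (t₀ / 2) ^ (-2:ℝ) * |h y| := by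
      have h1 : C * t ^ (-2:ℝ) ≤ C * (t₀ / 2) ^ (-2:ℝ) :=
        mul_le_mul_of_nonneg_left step2 hC.le
      exact mul_le_mul_of_nonneg_right h1 (abs_nonneg _)
    exact (step1.trans this).trans_eq rfl
  · exact hi.abs.const_mul _
  · filter_upwards [ae_restrict_mem measurableSet_Ioi] with y hy
    intro t htb
    have ht := (ball_pos ht₀ htb).1
    exact ((kernel_hasDerivAt ν y t hy ht).mul_const (h y)).div_const y

lemma stepG (ν : ℝ) (hν : -(1/2:ℝ) ≤ ν) (h : ℝ → ℝ) (hc : Continuous h)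
    (hi : IntegrableOn h (Ioi 0)) (t₀ : ℝ) (ht₀ : 0 < t₀) :
    IntegrableOn (fun y => Qfun ν h t₀ y) (Ioi 0) ∧
      HasDerivAt (fun t => ∫ y in Ioi (0:ℝ), Gfun ν h t y)
        (∫ y in Ioi (0:ℝ), Qfun ν h t₀ y) t₀ := by
  obtain ⟨C, hC, hb⟩ := Qfun_bound ν hν h
  obtain ⟨C₀, hC₀, hb₀⟩ := Gfun_bound ν hν h
  have hhalf : 0 < t₀ / 2 := half_pos ht₀
  apply hasDerivAt_integral_of_dominated_loc_of_deriv_le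
    (F' := fun t y => Qfun ν h t y)
    (bound := fun y => C * (t₀ / 2) ^ (-(ν + 2)) * |h y|) (Metric.ball_mem_nhds t₀ hhalf)
  · filter_upwards [Ioi_mem_nhds ht₀] with t ht
    exact measG ν t h hc
  · apply integrable_of_bound (measG ν t₀ h hc) hi (C₀ * t₀ ^ (-(ν + 1)))
    intro y hy
    exact (hb₀ t₀ y ht₀ hy).trans_eq (by ring)
  · exact measQ ν t₀ h hc
  · filter_upwards [ae_restrict_mem measurableSet_Ioi] with y hy
    intro t htb
    obtain ⟨ht, hle⟩ := ball_pos ht₀ htb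
    have step1 : |Qfun ν h t y| ≤ C * t ^ (-(ν + 2)) * |h y| := hb t y ht hy
    have step2 : t ^ (-(ν + 2)) ≤ (t₀ / 2) ^ (-(ν + 2)) :=
      rpow_neg_anti hhalf hle (by linarith)
    have : C * t ^ (-(ν + 2)) * |h y| ≤ C * (t₀ / 2) ^ (-(ν + 2)) * |h y| :=
      mul_le_mul_of_nonneg_right (mul_le_mul_of_nonneg_left step2 hC.le) (abs_nonneg _)
    exact step1.trans this
  · exact hi.abs.const_mul _
  · filter_upwards [ae_restrict_mem measurableSet_Ioi] with y hy
    intro t htb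
    have ht := (ball_pos ht₀ htb).1
    exact ((kernel2_hasDerivAt ν y t hy).mul_const (y ^ (-ν - 1))).mul_const (h y)

lemma h_tendsto (h h' : ℝ → ℝ) (hd : ∀ y, HasDerivAt h (h' y) y)
    (hi' : IntegrableOn h' (Ioi 0)) : ∃ L, Tendsto h atTop (𝓝 L) := by
  have hsub : IntegrableOn h' (Ioi 1) := hi'.mono_set (Ioi_subset_Ioi (by norm_num))
  have key : ∀ t : ℝ, 1 ≤ t → h t = h 1 + ∫ s in (1:ℝ)..t, h' s := by
    intro t ht
    rw [intervalIntegral.integral_eq_sub_of_hasDerivAt (fun s _ => hd s) ?_]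
    · ring
    · rw [intervalIntegrable_iff]
      apply hi'.mono_set
      rw [uIoc_of_le ht]
      exact Ioc_subset_Ioi_self.trans (Ioi_subset_Ioi (by norm_num))
  refine ⟨h 1 + ∫ s in Ioi (1:ℝ), h' s, ?_⟩
  have t1 := MeasureTheory.intervalIntegral_tendsto_integral_Ioi 1 hsub tendsto_id
  have t2 := (tendsto_const_nhds (x := h 1)).add t1
  apply t2.congr'
  filter_upwards [eventually_ge_atTop (1:ℝ)] with t ht
  exact (key t ht).symm

lemma kernel_identity (ν x y : ℝ) (hx : 0 < x) (hy : 0 < y) (v : ℝ) :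
    (x / y) ^ ν * Real.exp (-(x / y)) * v / y
      = (x / y) ^ (ν + 1) * Real.exp (-(x / y)) / x * v := by
  rw [Real.rpow_add_one (div_pos hx hy).ne']
  field_simp

lemma KV_tendsto_atTop (ν : ℝ) (hν : -(1/2:ℝ) ≤ ν) (h : ℝ → ℝ) {L : ℝ}
    (hL : Tendsto h atTop (𝓝 L)) (x : ℝ) (hx : 0 < x) :
    Tendsto (fun y : ℝ => (x / y) ^ ν * Real.exp (-(x / y)) * h y / y) atTop (𝓝 0) := by
  have l1 : Tendsto (fun y : ℝ => x / y) atTop (𝓝 0) := Tendsto.const_div_atTop tendsto_id x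
  have l2 : Tendsto (fun y : ℝ => (x / y) ^ (ν + 1)) atTop (𝓝 0) := by
    have c := (Real.continuousAt_rpow_const 0 (ν + 1) (Or.inr (by linarith))).tendsto
    have := c.comp l1
    simpa [Real.zero_rpow (show ν + 1 ≠ 0 by linarith), Function.comp_def] using this
  have l3 : Tendsto (fun y : ℝ => Real.exp (-(x / y))) atTop (𝓝 1) := by
    have l1n : Tendsto (fun y : ℝ => -(x / y)) atTop (𝓝 0) := by simpa using l1.neg
    have := (Real.continuous_exp.tendsto 0).comp l1n
    simpa [Function.comp_def] using this
  have l4 := ((l2.mul l3).div_const x).mul hL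
  rw [show (0:ℝ) * 1 / x * L = 0 by ring] at l4
  apply l4.congr'
  filter_upwards [eventually_gt_atTop (0:ℝ)] with y hy
  exact (kernel_identity ν x y hx hy (h y)).symm

lemma KV_tendsto_zero (ν : ℝ) (hν : -(1/2:ℝ) ≤ ν) (h : ℝ → ℝ) (hc : Continuous h)
    (x : ℝ) (hx : 0 < x) :
    Tendsto (fun y : ℝ => (x / y) ^ ν * Real.exp (-(x / y)) * h y / y) (nhdsWithin 0 (Ioi 0)) (𝓝 0) := by
  have m1 : Tendsto (fun y : ℝ => x / y) (nhdsWithin 0 (Ioi 0)) atTop := by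
    have h1 := tendsto_inv_nhdsGT_zero (𝕜 := ℝ)
    have h2 := (tendsto_const_mul_atTop_of_pos hx).mpr h1
    simpa [div_eq_mul_inv] using h2
  have m2 : Tendsto (fun u : ℝ => u ^ (ν + 1) * Real.exp (-u)) atTop (𝓝 0) := by
    have := tendsto_rpow_mul_exp_neg_mul_atTop_nhds_zero (ν + 1) 1 one_pos
    simpa using this
  have m3 : Tendsto (fun y : ℝ => (x / y) ^ (ν + 1) * Real.exp (-(x / y)))
      (nhdsWithin 0 (Ioi 0)) (𝓝 0) := m2.comp m1
  have m4 : Tendsto h (nhdsWithin 0 (Ioi 0)) (𝓝 (h 0)) :=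
    (hc.tendsto 0).mono_left nhdsWithin_le_nhds
  have m5 := (m3.div_const x).mul m4
  rw [show (0:ℝ) / x * h 0 = 0 by ring] at m5
  apply m5.congr'
  filter_upwards [self_mem_nhdsWithin] with y hy
  exact (kernel_identity ν x y hx hy (h y)).symm

lemma key (ν : ℝ) (hν : -(1/2:ℝ) ≤ ν) (h h' : ℝ → ℝ)
    (hd : ∀ y, HasDerivAt h (h' y) y)
    (h'meas : AEStronglyMeasurable h' (volume.restrict (Ioi 0)))
    (hi : IntegrableOn h (Ioi 0)) (hi' : IntegrableOn h' (Ioi 0))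
    (x : ℝ) (hx : 0 < x) :
    Dnu ν (fun t => ∫ y in Ioi (0:ℝ), (t / y) ^ ν * Real.exp (-(t / y)) * h y / y) x
      = ∫ y in Ioi (0:ℝ), (x / y) ^ ν * Real.exp (-(x / y)) * (-(h' y)) / y := by
  have hc : Continuous h := continuous_iff_continuousAt.mpr (fun y => (hd y).continuousAt)
  set F := fun t => ∫ y in Ioi (0:ℝ), (t / y) ^ ν * Real.exp (-(t / y)) * h y / y with hF
  have hFd : ∀ t, 0 < t → t ^ (1 - ν) * deriv F t = ∫ y in Ioi (0:ℝ), Gfun ν h t y := by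
    intro t ht
    rw [(stepF ν hν h hc hi t ht).2.deriv, ← integral_const_mul]
    exact setIntegral_congr_fun measurableSet_Ioi (fun y hy => identity_S2 ν t y ht hy h)
  have hDnu : Dnu ν F x = x ^ ν * ∫ y in Ioi (0:ℝ), Qfun ν h x y := by
    unfold Dnu
    congr 1
    have e : deriv (fun t => t ^ (1 - ν) * deriv F t) x
        = deriv (fun t => ∫ y in Ioi (0:ℝ), Gfun ν h t y) x := by
      apply Filter.EventuallyEq.deriv_eq
      filter_upwards [Ioi_mem_nhds hx] with t ht
      exact hFd t ht
    rw [e, (stepG ν hν h hc hi x hx).2.deriv]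
  obtain ⟨L, hL⟩ := h_tendsto h h' hd hi'
  set Vext : ℝ → ℝ :=
    fun y => if y ≤ 0 then 0 else (x / y) ^ ν * Real.exp (-(x / y)) * h y / y with hVext
  have hQint : IntegrableOn (fun y => x ^ ν * Qfun ν h x y) (Ioi 0) :=
    ((stepG ν hν h hc hi x hx).1).const_mul _
  have hKh'int : IntegrableOn (fun y => (x / y) ^ ν * Real.exp (-(x / y)) * h' y / y) (Ioi 0) := by
    obtain ⟨C₀, hC₀, hb₀⟩ := kernel_bd ν 1 (by linarith)
    have mK : AEStronglyMeasurable (fun y : ℝ => (x / y) ^ ν * Real.exp (-(x / y)))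
        (volume.restrict (Ioi 0)) :=
      ((contOn_kernel ν x hx).mul (contOn_exp x)).aestronglyMeasurable measurableSet_Ioi
    have minv : AEStronglyMeasurable (fun y : ℝ => y⁻¹) (volume.restrict (Ioi 0)) :=
      (continuousOn_id.inv₀ (fun y hy => ne_of_gt hy)).aestronglyMeasurable measurableSet_Ioi
    apply integrable_of_bound ?_ hi' (C₀ * x ^ (-1:ℝ))
    · intro y hy
      have hy' : (0:ℝ) < y := hy
      have e1 : (x / y) ^ ν * Real.exp (-(x / y)) * h' y / y
          = ((x / y) ^ ν * Real.exp (-(x / y)) * y ^ (-1:ℝ)) * h' y := by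
        rw [Real.rpow_neg_one]; ring
      rw [e1, abs_mul, abs_of_nonneg (by positivity)]
      exact mul_le_mul_of_nonneg_right (hb₀ x y hx hy') (abs_nonneg _)
    · have := (mK.mul h'meas).mul minv
      apply this.congr
      filter_upwards with y
      simp [div_eq_mul_inv]
  have hVder : ∀ y ∈ Ioi (0:ℝ), HasDerivAt Vext
      (x ^ ν * Qfun ν h x y + (x / y) ^ ν * Real.exp (-(x / y)) * h' y / y) y := by
    intro y hy
    apply (V_hasDerivAt ν x hx h h' hd y hy).congr_of_eventuallyEq
    filter_upwards [Ioi_mem_nhds hy] with z hz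
    simp only [hVext, if_neg (not_le.mpr (show (0:ℝ) < z from hz))]
  have hV0 : Vext 0 = 0 := if_pos le_rfl
  have hcont0 : ContinuousWithinAt Vext (Ici 0) 0 := by
    rw [← Set.Ioi_insert, continuousWithinAt_insert_self]
    show Tendsto Vext (nhdsWithin 0 (Ioi 0)) (𝓝 (Vext 0))
    rw [hV0]
    apply (KV_tendsto_zero ν hν h hc x hx).congr'
    filter_upwards [self_mem_nhdsWithin] with y hy
    simp only [hVext, if_neg (not_le.mpr (mem_Ioi.mp hy))]
  have htop : Tendsto Vext atTop (𝓝 0) := by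
    apply (KV_tendsto_atTop ν hν h hL x hx).congr'
    filter_upwards [eventually_gt_atTop (0:ℝ)] with y hy
    simp only [hVext, if_neg (not_le.mpr hy)]
  have ibp := integral_Ioi_of_hasDerivAt_of_tendsto hcont0 hVder (hQint.add hKh'int) htop
  rw [integral_add hQint hKh'int, hV0, zero_sub, neg_zero] at ibp
  have flip : ∫ y in Ioi (0:ℝ), (x / y) ^ ν * Real.exp (-(x / y)) * (-(h' y)) / y
      = -∫ y in Ioi (0:ℝ), (x / y) ^ ν * Real.exp (-(x / y)) * h' y / y := by
    rw [← integral_neg]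
    congr 1
    funext y
    ring
  rw [hDnu, flip, integral_const_mul] at *
  linarith [ibp]

lemma Dnu_congr (ν : ℝ) (f g : ℝ → ℝ) (hfg : ∀ t ∈ Ioi (0:ℝ), f t = g t) (x : ℝ)
    (hx : 0 < x) : Dnu ν f x = Dnu ν g x := by
  unfold Dnu
  congr 1
  apply Filter.EventuallyEq.deriv_eq
  filter_upwards [Ioi_mem_nhds hx] with t ht
  congr 1
  apply Filter.EventuallyEq.deriv_eq
  filter_upwards [Ioi_mem_nhds ht] with z hz
  exact hfg z hz

lemma Dnu_const_mul (ν c : ℝ) (f : ℝ → ℝ) (x : ℝ) :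
    Dnu ν (fun t => c * f t) x = c * Dnu ν f x := by
  unfold Dnu
  have e1 : (fun t : ℝ => t ^ (1 - ν) * deriv (fun s => c * f s) t)
      = fun t => c * (t ^ (1 - ν) * deriv f t) := by
    funext t
    rw [deriv_const_mul_field]
    ring
  rw [e1, deriv_const_mul_field]
  ring


/-- for `ω̃ ∈ L¹_{H₂}(ℝ)` supported in `[0,∞)` and
`ω(x) = (1/Γ(ν+1)) ∫₀^∞ (x/y)^ν e^{−x/y} ω̃(y) y⁻¹ dy`, one has
`(D_ν^l ω)(x) = (1/Γ(ν+1)) ∫₀^∞ (x/y)^ν e^{−x/y} (−1)^l ω̃^{(l)}(y) y⁻¹ dy`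
for `l = 0, …, n−1` and `x > 0`. -/
theorem Dnu_iterate_of_gammaTransform
    (n : ℕ) (hn : 2 ≤ n) (ν : ℝ)
    (hν : (∃ k : ℕ, ν = k) ∨ ν = -(1/2) ∨ ν = 1/2)
    (tω : ℝ → ℝ)
    (hpos : ∀ x : ℝ, 0 ≤ tω x)
    (hdiff : ∀ j : ℕ, j < n - 1 → Differentiable ℝ (iteratedDeriv j tω))
    (hint : ∀ κ : ℝ, 1 ≤ κ → κ ≤ n → ∀ j : ℕ, j ≤ n - 1 →
      Integrable (fun x : ℝ => |x| ^ (κ - 1) * |iteratedDeriv j tω x|))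
    (hsupp : ∀ x : ℝ, x < 0 → tω x = 0)
    (ω : ℝ → ℝ)
    (hω : ∀ x : ℝ, 0 < x →
      ω x = (1 / Real.Gamma (ν + 1)) *
        ∫ y in Set.Ioi (0:ℝ), (x / y) ^ ν * Real.exp (-(x / y)) * tω y / y) :
    ∀ l : ℕ, l ≤ n - 1 → ∀ x : ℝ, 0 < x →
      ((Dnu ν)^[l] ω) x = (1 / Real.Gamma (ν + 1)) *
        ∫ y in Set.Ioi (0:ℝ),
          (x / y) ^ ν * Real.exp (-(x / y)) * ((-1 : ℝ) ^ l * iteratedDeriv l tω y) / y := by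
  have hν' : -(1/2:ℝ) ≤ ν := by
    rcases hν with ⟨k, rfl⟩ | rfl | rfl
    · have := Nat.cast_nonneg (α := ℝ) k
      linarith
    · norm_num
    · norm_num
  have hmeas : ∀ j : ℕ, j ≤ n - 1 → AEStronglyMeasurable (iteratedDeriv j tω) volume := by
    intro j hj
    rcases lt_or_eq_of_le hj with hlt | heq
    · exact (hdiff j hlt).continuous.aestronglyMeasurable
    · obtain ⟨i, rfl⟩ : ∃ i, j = i + 1 := ⟨j - 1, by omega⟩
      rw [iteratedDeriv_succ]
      exact (stronglyMeasurable_deriv _).aestronglyMeasurable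
  have hint' : ∀ j : ℕ, j ≤ n - 1 → IntegrableOn (iteratedDeriv j tω) (Ioi 0) := by
    intro j hj
    have h1 := hint 1 le_rfl (by exact_mod_cast Nat.one_le_cast.mpr (by omega)) j hj
    simp only [sub_self, Real.rpow_zero, one_mul] at h1
    exact ((integrable_norm_iff (hmeas j hj)).mp
      (by simpa [Real.norm_eq_abs] using h1)).integrableOn
  intro l
  induction l with
  | zero =>
    intro _ x hx
    rw [Function.iterate_zero_apply, hω x hx]
    congr 1
    exact setIntegral_congr_fun measurableSet_Ioi (fun y _ => by simp [iteratedDeriv_zero])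
  | succ l IH =>
    intro hl x hx
    have hl' : l ≤ n - 1 := by omega
    have hlt : l < n - 1 := by omega
    rw [Function.iterate_succ_apply']
    have congr1 : Dnu ν ((Dnu ν)^[l] ω) x
        = Dnu ν (fun t => (1 / Real.Gamma (ν + 1)) *
            ∫ y in Set.Ioi (0:ℝ),
              (t / y) ^ ν * Real.exp (-(t / y)) * ((-1 : ℝ) ^ l * iteratedDeriv l tω y) / y) x :=
      Dnu_congr ν _ _ (fun t ht => IH hl' t ht) x hx
    rw [congr1, Dnu_const_mul]
    congr 1
    have hd : ∀ y, HasDerivAt (fun y => (-1:ℝ) ^ l * iteratedDeriv l tω y)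
        ((-1:ℝ) ^ l * iteratedDeriv (l + 1) tω y) y := by
      intro y
      rw [iteratedDeriv_succ]
      exact HasDerivAt.const_mul _ ((hdiff l hlt) y).hasDerivAt
    have h'meas : AEStronglyMeasurable (fun y => (-1:ℝ) ^ l * iteratedDeriv (l + 1) tω y)
        (volume.restrict (Ioi 0)) :=
      ((hmeas (l + 1) (by omega)).restrict).const_mul _
    have hi : IntegrableOn (fun y => (-1:ℝ) ^ l * iteratedDeriv l tω y) (Ioi 0) :=
      (hint' l hl').const_mul _
    have hi' : IntegrableOn (fun y => (-1:ℝ) ^ l * iteratedDeriv (l + 1) tω y) (Ioi 0) :=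
      (hint' (l + 1) (by omega)).const_mul _
    have hkey := key ν hν' (fun y => (-1:ℝ) ^ l * iteratedDeriv l tω y)
      (fun y => (-1:ℝ) ^ l * iteratedDeriv (l + 1) tω y) hd h'meas hi hi' x hx
    refine hkey.trans ?_
    exact setIntegral_congr_fun measurableSet_Ioi (fun y _ => by rw [pow_succ]; ring)
end

section
/- Let n ≥ 2, let ν ∈ ℕ₀ ∪ {−1/2, 1/2}, and let ω̃ belong to the class L¹_{H₂}(ℝ) for n with support contained in [0,∞). Define ω : (0,∞) → ℝ by ω(x) = (1/Γ(ν+1)) ∫₀^∞ (x/y)^ν · e^{−x/y} · ω̃(y) · y^{−1} dy. Then for every κ ∈ [1,n] and every l = 0,…,n−1 one has ∫₀^∞ x^{κ−1} · |(D_ν^l ω)(x)| dx ≤ (Γ(ν+κ)/Γ(ν+1)) · ∫₀^∞ y^{κ−1} · |ω̃^{(l)}(y)| dy < ∞. -/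
open MeasureTheory Finset

open Set Filter Topology

namespace DnuAux


/-- The Gamma-type kernel. -/
noncomputable def ker (ν x y : ℝ) : ℝ := (x/y) ^ ν * Real.exp (-(x/y)) / y

lemma ker_zero (ν x : ℝ) : ker ν x 0 = 0 := by simp [ker]

lemma ker_nonneg {ν x y : ℝ} (hx : 0 ≤ x) (hy : 0 ≤ y) : 0 ≤ ker ν x y := by
  have h : (0:ℝ) ≤ x / y := div_nonneg hx hy
  exact div_nonneg (mul_nonneg (Real.rpow_nonneg h ν) (Real.exp_pos _).le) hy

/-- boundedness of `u^p e^{-u}` on `(0,∞)`. -/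
lemma expBound (p : ℝ) (hp : 0 ≤ p) :
    ∃ C : ℝ, 0 < C ∧ ∀ u : ℝ, 0 < u → u ^ p * Real.exp (-u) ≤ C := by
  set m : ℕ := ⌈p⌉₊
  refine ⟨(m.factorial : ℝ), by positivity, fun u hu => ?_⟩
  have hfac : (1:ℝ) ≤ (m.factorial : ℝ) := by exact_mod_cast m.factorial_pos
  rcases le_or_gt u 1 with h1 | h1
  · have h2 : u ^ p ≤ 1 := Real.rpow_le_one hu.le h1 hp
    have h3 : Real.exp (-u) ≤ 1 := Real.exp_le_one_iff.mpr (by linarith)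
    nlinarith [Real.exp_pos (-u), Real.rpow_nonneg hu.le p]
  · have h2 : u ^ p ≤ u ^ (m:ℝ) :=
      Real.rpow_le_rpow_of_exponent_le h1.le (Nat.le_ceil p)
    rw [Real.rpow_natCast] at h2
    have h3 : u ^ m ≤ (m.factorial : ℝ) * Real.exp u := by
      have hsum : u ^ m / (m.factorial : ℝ) ≤ ∑ i ∈ range (m+1), u ^ i / (i.factorial : ℝ) := by
        refine Finset.single_le_sum (f := fun i => u ^ i / (i.factorial : ℝ))
          (fun i _ => by positivity) (self_mem_range_succ m)
      have := hsum.trans (Real.sum_le_exp_of_nonneg (by positivity) (m+1))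
      have hfp : (0:ℝ) < (m.factorial : ℝ) := by positivity
      calc u ^ m = u ^ m / (m.factorial:ℝ) * (m.factorial:ℝ) := by field_simp
        _ ≤ Real.exp u * (m.factorial:ℝ) := by
            apply mul_le_mul_of_nonneg_right this hfp.le
        _ = (m.factorial:ℝ) * Real.exp u := by ring
    calc u ^ p * Real.exp (-u) ≤ u ^ m * Real.exp (-u) := by
          apply mul_le_mul_of_nonneg_right h2 (Real.exp_pos _).le
      _ ≤ (m.factorial : ℝ) * Real.exp u * Real.exp (-u) := by
          apply mul_le_mul_of_nonneg_right h3 (Real.exp_pos _).le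
      _ = (m.factorial : ℝ) := by rw [mul_assoc, ← Real.exp_add, add_neg_cancel, Real.exp_zero,
            mul_one]

/-- A function integrable on `(0,∞)` with a limit at `+∞` must have limit `0`. -/
lemma limit_zero {G : ℝ → ℝ} (hG : IntegrableOn G (Set.Ioi 0)) {L : ℝ}
    (hL : Tendsto G atTop (𝓝 L)) : L = 0 := by
  by_contra h
  have hpos : 0 < |L| / 2 := by positivity
  obtain ⟨N, hN⟩ := (Metric.tendsto_atTop.mp hL) (|L|/2) hpos
  set M : ℝ := max N 1
  have hsub : Set.Ioi M ⊆ Set.Ioi (0:ℝ) := Ioi_subset_Ioi (by positivity)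
  have hGM : IntegrableOn G (Set.Ioi M) := hG.mono_set hsub
  have hconst : IntegrableOn (fun _ : ℝ => |L|/2) (Set.Ioi M) := by
    refine Integrable.mono hGM aestronglyMeasurable_const ?_
    refine (ae_restrict_iff' measurableSet_Ioi).mpr (ae_of_all _ fun y hy => ?_)
    have h1 : dist (G y) L < |L|/2 := hN y (le_trans (le_max_left _ _) (le_of_lt hy))
    have h2 : |L| - |G y| ≤ |G y - L| := by
      have := abs_sub_abs_le_abs_sub L (G y)
      rwa [abs_sub_comm] at this
    rw [Real.dist_eq] at h1
    simp only [Real.norm_eq_abs]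
    rw [abs_of_nonneg (by positivity : (0:ℝ) ≤ |L|/2)]
    linarith
  rw [integrableOn_const_iff enorm_ne_top] at hconst
  rcases hconst with h0 | hfin
  · have : |L| = 0 := by rw [enorm_eq_zero] at h0; linarith [abs_nonneg L]
    exact h (abs_eq_zero.mp this)
  · rw [Real.volume_Ioi] at hfin
    exact (lt_irrefl _ hfin).elim


noncomputable def ker1 (ν x y : ℝ) : ℝ := (x/y) ^ ν * (ν/x - 1/y) * Real.exp (-(x/y)) / y
noncomputable def hker (ν x y : ℝ) : ℝ := (ν - x/y) * Real.exp (-(x/y)) / y ^ (ν+1)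
noncomputable def hker' (ν x y : ℝ) : ℝ := -(((ν+1) - x/y) * Real.exp (-(x/y)) / y ^ (ν+2))
noncomputable def ker2 (ν x y : ℝ) : ℝ := (x/y) ^ ν * (x/y - (ν+1)) * Real.exp (-(x/y)) / y ^ 2

lemma hasDerivAt_ker_x (ν : ℝ) {x y : ℝ} (hx : 0 < x) (hy : 0 < y) :
    HasDerivAt (fun t => ker ν t y) (ker1 ν x y) x := by
  have hu : 0 < x / y := div_pos hx hy
  have h1 : HasDerivAt (fun t : ℝ => t / y) (1 / y) x := by
    simpa using (hasDerivAt_id x).div_const y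
  have h2 : HasDerivAt (fun t : ℝ => (t / y) ^ ν) (ν * (x/y) ^ (ν - 1) * (1/y)) x := by
    have := (Real.hasDerivAt_rpow_const (x := x/y) (p := ν) (Or.inl hu.ne')).comp x h1
    simpa [Function.comp_def] using this
  have h3 : HasDerivAt (fun t : ℝ => Real.exp (-(t / y))) (Real.exp (-(x/y)) * (-(1/y))) x := by
    have := (Real.hasDerivAt_exp (-(x/y))).comp x h1.neg
    simpa [Function.comp_def] using this
  have h4 := (h2.mul h3).div_const y
  simp only [ker]
  refine HasDerivAt.congr_deriv h4 ?_
  unfold ker1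
  rw [Real.rpow_sub_one hu.ne' ν]
  field_simp
  ring

lemma hasDerivAt_hker_x (ν : ℝ) {x y : ℝ} (hy : 0 < y) :
    HasDerivAt (fun t => hker ν t y) (hker' ν x y) x := by
  have h1 : HasDerivAt (fun t : ℝ => t / y) (1 / y) x := by
    simpa using (hasDerivAt_id x).div_const y
  have ha : HasDerivAt (fun t : ℝ => ν - t / y) (-(1/y)) x := h1.const_sub ν
  have h3 : HasDerivAt (fun t : ℝ => Real.exp (-(t / y))) (Real.exp (-(x/y)) * (-(1/y))) x := by
    have := (Real.hasDerivAt_exp (-(x/y))).comp x h1.neg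
    simpa [Function.comp_def] using this
  have h4 := (ha.mul h3).div_const (y ^ (ν+1))
  simp only [hker]
  refine HasDerivAt.congr_deriv h4 ?_
  unfold hker'
  have hy1 : y ^ (ν+1) ≠ 0 := (Real.rpow_pos_of_pos hy _).ne'
  have hy2 : y ^ (ν+2) = y ^ (ν+1) * y := by
    rw [← Real.rpow_add_one hy.ne' (ν+1)]; ring_nf
  rw [hy2]
  field_simp
  ring

lemma hasDerivAt_ker_y (ν : ℝ) {x y : ℝ} (hx : 0 < x) (hy : 0 < y) :
    HasDerivAt (fun z => ker ν x z) (ker2 ν x y) y := by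
  have hu : 0 < x / y := div_pos hx hy
  have h1 : HasDerivAt (fun z : ℝ => x / z) (x * -(y ^ 2)⁻¹) y := by
    simpa [div_eq_mul_inv] using (hasDerivAt_inv hy.ne').const_mul x
  have h2 : HasDerivAt (fun z : ℝ => (x / z) ^ ν) (ν * (x/y) ^ (ν - 1) * (x * -(y ^ 2)⁻¹)) y := by
    have := (Real.hasDerivAt_rpow_const (x := x/y) (p := ν) (Or.inl hu.ne')).comp y h1
    simpa [Function.comp_def] using this
  have h3 : HasDerivAt (fun z : ℝ => Real.exp (-(x / z)))
      (Real.exp (-(x/y)) * -(x * -(y ^ 2)⁻¹)) y := by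
    have := (Real.hasDerivAt_exp (-(x/y))).comp y h1.neg
    simpa [Function.comp_def] using this
  have h4 := (h2.mul h3).div (hasDerivAt_id y) hy.ne'
  simp only [ker]
  refine HasDerivAt.congr_deriv h4 ?_
  unfold ker2
  simp only [id, Pi.mul_apply]
  rw [Real.rpow_sub_one hu.ne' ν]
  field_simp
  ring

lemma rel1 (ν : ℝ) {x y : ℝ} (hx : 0 < x) (hy : 0 < y) :
    x ^ (1 - ν) * ker1 ν x y = hker ν x y := by
  unfold ker1 hker
  have h1 : (x/y) ^ ν = x ^ ν / y ^ ν := Real.div_rpow hx.le hy.le ν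
  have h2 : x ^ (1-ν) = x / x ^ ν := by
    rw [Real.rpow_sub hx, Real.rpow_one]
  have h3 : y ^ (ν+1) = y ^ ν * y := Real.rpow_add_one hy.ne' ν
  have hyν : (0:ℝ) < y ^ ν := Real.rpow_pos_of_pos hy ν
  have hxν : (0:ℝ) < x ^ ν := Real.rpow_pos_of_pos hx ν
  rw [h1, h2, h3]
  field_simp

lemma rel2 (ν : ℝ) {x y : ℝ} (hx : 0 < x) (hy : 0 < y) :
    x ^ ν * hker' ν x y = ker2 ν x y := by
  unfold hker' ker2
  have h1 : (x/y) ^ ν = x ^ ν / y ^ ν := Real.div_rpow hx.le hy.le ν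
  have h3 : y ^ (ν+2) = y ^ ν * y ^ 2 := by
    rw [← Real.rpow_natCast y 2, ← Real.rpow_add hy]; norm_num
  have hyν : (0:ℝ) < y ^ ν := Real.rpow_pos_of_pos hy ν
  rw [h1, h3]
  field_simp
  ring


lemma expBound2 (p : ℝ) (hp : 0 ≤ p) (c : ℝ) :
    ∃ C : ℝ, 0 < C ∧ ∀ u : ℝ, 0 < u → u ^ p * |c - u| * Real.exp (-u) ≤ C := by
  obtain ⟨C1, hC1, h1⟩ := expBound p hp
  obtain ⟨C2, hC2, h2⟩ := expBound (p+1) (by linarith)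
  refine ⟨|c| * C1 + C2, by positivity, fun u hu => ?_⟩
  have habs : |c - u| ≤ |c| + u := (abs_sub c u).trans (by rw [abs_of_pos hu])
  calc u ^ p * |c - u| * Real.exp (-u)
      ≤ u ^ p * (|c| + u) * Real.exp (-u) :=
        mul_le_mul_of_nonneg_right
          (mul_le_mul_of_nonneg_left habs (Real.rpow_nonneg hu.le p)) (Real.exp_pos _).le
    _ = |c| * (u ^ p * Real.exp (-u)) + u ^ (p+1) * Real.exp (-u) := by
        rw [Real.rpow_add_one hu.ne' p]; ring
    _ ≤ |c| * C1 + C2 :=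
        add_le_add (mul_le_mul_of_nonneg_left (h1 u hu) (abs_nonneg c)) (h2 u hu)

lemma ker_eq_u (ν : ℝ) {x y : ℝ} (hx : 0 < x) (hy : 0 < y) :
    ker ν x y = (x/y) ^ (ν+1) * Real.exp (-(x/y)) / x := by
  unfold ker
  rw [Real.rpow_add_one (div_pos hx hy).ne' ν]
  field_simp

lemma ker1_eq_u (ν : ℝ) {x y : ℝ} (hx : 0 < x) (hy : 0 < y) :
    ker1 ν x y = (x/y) ^ (ν+1) * (ν - x/y) * Real.exp (-(x/y)) / x ^ 2 := by
  unfold ker1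
  rw [Real.rpow_add_one (div_pos hx hy).ne' ν]
  field_simp

lemma hker_eq_u (ν : ℝ) {x y : ℝ} (hx : 0 < x) (hy : 0 < y) :
    hker ν x y = (x/y) ^ (ν+1) * (ν - x/y) * Real.exp (-(x/y)) / x ^ (ν+1) := by
  unfold hker
  rw [Real.div_rpow hx.le hy.le]
  have h1 : (0:ℝ) < x ^ (ν+1) := Real.rpow_pos_of_pos hx _
  have h2 : (0:ℝ) < y ^ (ν+1) := Real.rpow_pos_of_pos hy _
  field_simp

lemma hker'_eq_u (ν : ℝ) {x y : ℝ} (hx : 0 < x) (hy : 0 < y) :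
    hker' ν x y = -((x/y) ^ (ν+2) * ((ν+1) - x/y) * Real.exp (-(x/y)) / x ^ (ν+2)) := by
  unfold hker'
  rw [Real.div_rpow hx.le hy.le]
  have h1 : (0:ℝ) < x ^ (ν+2) := Real.rpow_pos_of_pos hx _
  have h2 : (0:ℝ) < y ^ (ν+2) := Real.rpow_pos_of_pos hy _
  field_simp

lemma ker2_eq_u (ν : ℝ) {x y : ℝ} (hx : 0 < x) (hy : 0 < y) :
    ker2 ν x y = (x/y) ^ (ν+2) * ((x/y) - (ν+1)) * Real.exp (-(x/y)) / x ^ 2 := by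
  unfold ker2
  have hu := (div_pos hx hy).ne'
  have : (x/y) ^ (ν+2) = (x/y) ^ ν * (x/y) ^ (2:ℕ) := by
    rw [← Real.rpow_natCast (x/y) 2, ← Real.rpow_add (div_pos hx hy)]; norm_num
  rw [this]
  field_simp

lemma ker_bound (ν : ℝ) (hν : -(1/2:ℝ) ≤ ν) :
    ∃ C : ℝ, 0 < C ∧ ∀ x y : ℝ, 0 < x → 0 < y → |ker ν x y| ≤ C / x := by
  obtain ⟨C, hC, h⟩ := expBound (ν+1) (by linarith)
  refine ⟨C, hC, fun x y hx hy => ?_⟩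
  have hu : 0 < x/y := div_pos hx hy
  rw [ker_eq_u ν hx hy, abs_div, abs_of_pos hx, abs_mul,
    abs_of_nonneg (Real.rpow_nonneg hu.le _), abs_of_pos (Real.exp_pos _)]
  exact div_le_div_of_nonneg_right (h _ hu) hx.le

lemma ker1_bound (ν : ℝ) (hν : -(1/2:ℝ) ≤ ν) :
    ∃ C : ℝ, 0 < C ∧ ∀ x y : ℝ, 0 < x → 0 < y → |ker1 ν x y| ≤ C / x ^ 2 := by
  obtain ⟨C, hC, h⟩ := expBound2 (ν+1) (by linarith) ν
  refine ⟨C, hC, fun x y hx hy => ?_⟩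
  have hu : 0 < x/y := div_pos hx hy
  rw [ker1_eq_u ν hx hy, abs_div, abs_of_pos (pow_pos hx 2), abs_mul, abs_mul,
    abs_of_nonneg (Real.rpow_nonneg hu.le _), abs_of_pos (Real.exp_pos _)]
  exact div_le_div_of_nonneg_right (h _ hu) (pow_pos hx 2).le

lemma hker_bound (ν : ℝ) (hν : -(1/2:ℝ) ≤ ν) :
    ∃ C : ℝ, 0 < C ∧ ∀ x y : ℝ, 0 < x → 0 < y → |hker ν x y| ≤ C / x ^ (ν+1) := by
  obtain ⟨C, hC, h⟩ := expBound2 (ν+1) (by linarith) ν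
  refine ⟨C, hC, fun x y hx hy => ?_⟩
  have hu : 0 < x/y := div_pos hx hy
  rw [hker_eq_u ν hx hy, abs_div, abs_of_pos (Real.rpow_pos_of_pos hx _), abs_mul, abs_mul,
    abs_of_nonneg (Real.rpow_nonneg hu.le _), abs_of_pos (Real.exp_pos _)]
  exact div_le_div_of_nonneg_right (h _ hu) (Real.rpow_pos_of_pos hx _).le

lemma hker'_bound (ν : ℝ) (hν : -(1/2:ℝ) ≤ ν) :
    ∃ C : ℝ, 0 < C ∧ ∀ x y : ℝ, 0 < x → 0 < y → |hker' ν x y| ≤ C / x ^ (ν+2) := by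
  obtain ⟨C, hC, h⟩ := expBound2 (ν+2) (by linarith) (ν+1)
  refine ⟨C, hC, fun x y hx hy => ?_⟩
  have hu : 0 < x/y := div_pos hx hy
  rw [hker'_eq_u ν hx hy, abs_neg, abs_div, abs_of_pos (Real.rpow_pos_of_pos hx _), abs_mul,
    abs_mul, abs_of_nonneg (Real.rpow_nonneg hu.le _), abs_of_pos (Real.exp_pos _)]
  exact div_le_div_of_nonneg_right (h _ hu) (Real.rpow_pos_of_pos hx _).le

lemma ker2_bound (ν : ℝ) (hν : -(1/2:ℝ) ≤ ν) :
    ∃ C : ℝ, 0 < C ∧ ∀ x y : ℝ, 0 < x → 0 < y → |ker2 ν x y| ≤ C / x ^ 2 := by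
  obtain ⟨C, hC, h⟩ := expBound2 (ν+2) (by linarith) (ν+1)
  refine ⟨C, hC, fun x y hx hy => ?_⟩
  have hu : 0 < x/y := div_pos hx hy
  have habs : |(x/y) - (ν+1)| = |(ν+1) - (x/y)| := abs_sub_comm _ _
  rw [ker2_eq_u ν hx hy, abs_div, abs_of_pos (pow_pos hx 2), abs_mul, abs_mul,
    abs_of_nonneg (Real.rpow_nonneg hu.le _), abs_of_pos (Real.exp_pos _), habs]
  exact div_le_div_of_nonneg_right (h _ hu) (pow_pos hx 2).le


-- continuity in y
lemma contOn_div (x : ℝ) : ContinuousOn (fun y : ℝ => x / y) (Ioi 0) :=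
  continuousOn_const.div continuousOn_id (fun y hy => (mem_Ioi.mp hy).ne')

lemma contOn_base (ν x : ℝ) (hx : 0 < x) :
    ContinuousOn (fun y : ℝ => (x/y) ^ ν * Real.exp (-(x/y))) (Ioi 0) := by
  refine ContinuousOn.mul ?_ ?_
  · exact (contOn_div x).rpow_const (fun y hy => Or.inl (div_pos hx (mem_Ioi.mp hy)).ne')
  · exact Real.continuous_exp.comp_continuousOn (contOn_div x).neg

lemma contOn_ker (ν x : ℝ) (hx : 0 < x) : ContinuousOn (fun y => ker ν x y) (Ioi 0) := by
  unfold ker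
  exact (contOn_base ν x hx).div continuousOn_id (fun y hy => (mem_Ioi.mp hy).ne')

lemma contOn_ker2 (ν x : ℝ) (hx : 0 < x) : ContinuousOn (fun y => ker2 ν x y) (Ioi 0) := by
  unfold ker2
  refine ContinuousOn.div ?_ (continuousOn_pow 2) (fun y hy => pow_ne_zero 2 (mem_Ioi.mp hy).ne')
  refine ContinuousOn.mul (ContinuousOn.mul ?_ ?_) ?_
  · exact (contOn_div x).rpow_const (fun y hy => Or.inl (div_pos hx (mem_Ioi.mp hy)).ne')
  · exact (contOn_div x).sub continuousOn_const
  · exact Real.continuous_exp.comp_continuousOn (contOn_div x).neg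

lemma contOn_ker1 (ν x : ℝ) (hx : 0 < x) : ContinuousOn (fun y => ker1 ν x y) (Ioi 0) := by
  unfold ker1
  refine ContinuousOn.div ?_ continuousOn_id (fun y hy => (mem_Ioi.mp hy).ne')
  refine ContinuousOn.mul (ContinuousOn.mul ?_ ?_) ?_
  · exact (contOn_div x).rpow_const (fun y hy => Or.inl (div_pos hx (mem_Ioi.mp hy)).ne')
  · exact continuousOn_const.sub (continuousOn_const.div continuousOn_id
      (fun y hy => (mem_Ioi.mp hy).ne'))
  · exact Real.continuous_exp.comp_continuousOn (contOn_div x).neg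

lemma contOn_hker (ν x : ℝ) : ContinuousOn (fun y => hker ν x y) (Ioi 0) := by
  unfold hker
  refine ContinuousOn.div ?_ ?_ (fun y hy => (Real.rpow_pos_of_pos (mem_Ioi.mp hy) _).ne')
  · exact ((continuousOn_const.sub (contOn_div x)).mul
      (Real.continuous_exp.comp_continuousOn (contOn_div x).neg))
  · exact continuousOn_id.rpow_const (fun y hy => Or.inl (mem_Ioi.mp hy).ne')

lemma contOn_hker' (ν x : ℝ) : ContinuousOn (fun y => hker' ν x y) (Ioi 0) := by
  unfold hker'
  refine ContinuousOn.neg ?_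
  refine ContinuousOn.div ?_ ?_ (fun y hy => (Real.rpow_pos_of_pos (mem_Ioi.mp hy) _).ne')
  · exact ((continuousOn_const.sub (contOn_div x)).mul
      (Real.continuous_exp.comp_continuousOn (contOn_div x).neg))
  · exact continuousOn_id.rpow_const (fun y hy => Or.inl (mem_Ioi.mp hy).ne')

-- integrability of kernel × integrable function
lemma integrable_kernel_mul {k : ℝ → ℝ} (hk : AEStronglyMeasurable k (volume.restrict (Ioi 0)))
    {g : ℝ → ℝ} (hgi : IntegrableOn g (Ioi 0)) {B : ℝ}
    (hb : ∀ y ∈ Ioi (0:ℝ), |k y| ≤ B) :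
    IntegrableOn (fun y => k y * g y) (Ioi 0) := by
  refine Integrable.mono' (hgi.abs.const_mul B) (hk.mul hgi.aestronglyMeasurable) ?_
  refine (ae_restrict_iff' measurableSet_Ioi).mpr (ae_of_all _ fun y hy => ?_)
  rw [Real.norm_eq_abs, abs_mul]
  exact mul_le_mul_of_nonneg_right (hb y hy) (abs_nonneg _)

lemma hasDerivAt_T (ν : ℝ) (hν : -(1/2:ℝ) ≤ ν) (g : ℝ → ℝ)
    (hgi : IntegrableOn g (Ioi 0)) {x : ℝ} (hx : 0 < x) :
    HasDerivAt (fun t => ∫ y in Ioi 0, ker ν t y * g y)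
      (∫ y in Ioi 0, ker1 ν x y * g y) x := by
  obtain ⟨C1, hC1, h1⟩ := ker_bound ν hν
  obtain ⟨C2, hC2, h2⟩ := ker1_bound ν hν
  have hε : 0 < x/2 := by linarith
  have hball : ∀ t ∈ Metric.ball x (x/2), x/2 < t := by
    intro t ht
    rw [Metric.mem_ball, Real.dist_eq, abs_lt] at ht
    linarith [ht.1]
  refine (hasDerivAt_integral_of_dominated_loc_of_deriv_le (s := Metric.ball x (x/2)) (Metric.ball_mem_nhds x hε)
    (F := fun t y => ker ν t y * g y) (F' := fun t y => ker1 ν t y * g y)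
    (bound := fun y => (C2 / (x/2) ^ 2) * |g y|) ?_ ?_ ?_ ?_ ?_ ?_).2
  · filter_upwards [isOpen_Ioi.mem_nhds (mem_Ioi.mpr hx)] with t ht
    exact ((contOn_ker ν t ht).aestronglyMeasurable measurableSet_Ioi).mul
      hgi.aestronglyMeasurable
  · exact integrable_kernel_mul ((contOn_ker ν x hx).aestronglyMeasurable measurableSet_Ioi)
      hgi (fun y hy => h1 x y hx (mem_Ioi.mp hy))
  · exact ((contOn_ker1 ν x hx).aestronglyMeasurable measurableSet_Ioi).mul
      hgi.aestronglyMeasurable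
  · refine (ae_restrict_iff' measurableSet_Ioi).mpr (ae_of_all _ fun y hy => fun t ht => ?_)
    have ht2 : x/2 < t := hball t ht
    have ht0 : 0 < t := lt_trans hε ht2
    rw [Real.norm_eq_abs, abs_mul]
    refine mul_le_mul_of_nonneg_right ?_ (abs_nonneg _)
    refine (h2 t y ht0 (mem_Ioi.mp hy)).trans ?_
    exact div_le_div_of_nonneg_left hC2.le (pow_pos hε 2)
      (pow_le_pow_left₀ hε.le ht2.le 2)
  · exact (hgi.abs.const_mul _)
  · refine (ae_restrict_iff' measurableSet_Ioi).mpr (ae_of_all _ fun y hy => fun t ht => ?_)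
    exact (hasDerivAt_ker_x ν (lt_trans hε (hball t ht)) (mem_Ioi.mp hy)).mul_const (g y)

lemma hasDerivAt_Th (ν : ℝ) (hν : -(1/2:ℝ) ≤ ν) (g : ℝ → ℝ)
    (hgi : IntegrableOn g (Ioi 0)) {x : ℝ} (hx : 0 < x) :
    HasDerivAt (fun t => ∫ y in Ioi 0, hker ν t y * g y)
      (∫ y in Ioi 0, hker' ν x y * g y) x := by
  obtain ⟨C1, hC1, h1⟩ := hker_bound ν hν
  obtain ⟨C2, hC2, h2⟩ := hker'_bound ν hν
  have hε : 0 < x/2 := by linarith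
  have hball : ∀ t ∈ Metric.ball x (x/2), x/2 < t := by
    intro t ht
    rw [Metric.mem_ball, Real.dist_eq, abs_lt] at ht
    linarith [ht.1]
  refine (hasDerivAt_integral_of_dominated_loc_of_deriv_le (s := Metric.ball x (x/2)) (Metric.ball_mem_nhds x hε)
    (F := fun t y => hker ν t y * g y) (F' := fun t y => hker' ν t y * g y)
    (bound := fun y => (C2 / (x/2) ^ (ν+2)) * |g y|) ?_ ?_ ?_ ?_ ?_ ?_).2
  · filter_upwards [isOpen_Ioi.mem_nhds (mem_Ioi.mpr hx)] with t ht
    exact ((contOn_hker ν t).aestronglyMeasurable measurableSet_Ioi).mul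
      hgi.aestronglyMeasurable
  · exact integrable_kernel_mul ((contOn_hker ν x).aestronglyMeasurable measurableSet_Ioi)
      hgi (fun y hy => h1 x y hx (mem_Ioi.mp hy))
  · exact ((contOn_hker' ν x).aestronglyMeasurable measurableSet_Ioi).mul
      hgi.aestronglyMeasurable
  · refine (ae_restrict_iff' measurableSet_Ioi).mpr (ae_of_all _ fun y hy => fun t ht => ?_)
    have ht2 : x/2 < t := hball t ht
    have ht0 : 0 < t := lt_trans hε ht2
    rw [Real.norm_eq_abs, abs_mul]
    refine mul_le_mul_of_nonneg_right ?_ (abs_nonneg _)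
    refine (h2 t y ht0 (mem_Ioi.mp hy)).trans ?_
    exact div_le_div_of_nonneg_left hC2.le (Real.rpow_pos_of_pos hε _)
      (Real.rpow_le_rpow hε.le ht2.le (by linarith))
  · exact (hgi.abs.const_mul _)
  · refine (ae_restrict_iff' measurableSet_Ioi).mpr (ae_of_all _ fun y hy => fun t ht => ?_)
    exact (hasDerivAt_hker_x ν (mem_Ioi.mp hy)).mul_const (g y)

lemma ibp (ν : ℝ) (hν : -(1/2:ℝ) ≤ ν) (g : ℝ → ℝ)
    (hgd : Differentiable ℝ g)
    (hgm' : AEStronglyMeasurable (deriv g) (volume.restrict (Ioi 0)))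
    (hgi : IntegrableOn g (Ioi 0)) (hgi' : IntegrableOn (deriv g) (Ioi 0))
    {x : ℝ} (hx : 0 < x) :
    ∫ y in Ioi 0, ker2 ν x y * g y = -∫ y in Ioi 0, ker ν x y * deriv g y := by
  obtain ⟨C1, hC1, h1⟩ := ker_bound ν hν
  obtain ⟨C2, hC2, h2⟩ := ker2_bound ν hν
  set G := fun y => ker ν x y * g y with hGdef
  have hder : ∀ y ∈ Ioi (0:ℝ), HasDerivAt G (ker2 ν x y * g y + ker ν x y * deriv g y) y :=
    fun y hy => (hasDerivAt_ker_y ν hx (mem_Ioi.mp hy)).mul (hgd y).hasDerivAt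
  have hint1 : IntegrableOn (fun y => ker2 ν x y * g y) (Ioi 0) :=
    integrable_kernel_mul ((contOn_ker2 ν x hx).aestronglyMeasurable measurableSet_Ioi)
      hgi (fun y hy => h2 x y hx (mem_Ioi.mp hy))
  have hint2 : IntegrableOn (fun y => ker ν x y * deriv g y) (Ioi 0) := by
    refine integrable_kernel_mul ((contOn_ker ν x hx).aestronglyMeasurable measurableSet_Ioi)
      hgi' (fun y hy => h1 x y hx (mem_Ioi.mp hy))
  have hint : IntegrableOn (fun y => ker2 ν x y * g y + ker ν x y * deriv g y) (Ioi 0) :=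
    hint1.add hint2
  have hGint : IntegrableOn G (Ioi 0) :=
    integrable_kernel_mul ((contOn_ker ν x hx).aestronglyMeasurable measurableSet_Ioi)
      hgi (fun y hy => h1 x y hx (mem_Ioi.mp hy))
  have htend : Tendsto G atTop (𝓝 (limUnder atTop G)) :=
    tendsto_limUnder_of_hasDerivAt_of_integrableOn_Ioi hder hint
  have hlim : limUnder atTop G = 0 := limit_zero hGint htend
  rw [hlim] at htend
  have hG0 : G 0 = 0 := by simp [hGdef, ker_zero]
  have hcont : ContinuousWithinAt G (Ici 0) 0 := by
    rw [← continuousWithinAt_Ioi_iff_Ici]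
    unfold ContinuousWithinAt
    rw [hG0]
    have hd1 : Tendsto (fun y : ℝ => x / y) (𝓝[>] 0) atTop := by
      have h := tendsto_inv_nhdsGT_zero (𝕜 := ℝ)
      have h' := h.const_mul_atTop hx
      refine h'.congr (fun y => ?_)
      rw [div_eq_mul_inv]
    have hd2 : Tendsto (fun u : ℝ => u ^ (ν+1) * Real.exp (-u)) atTop (𝓝 0) := by
      have := tendsto_rpow_mul_exp_neg_mul_atTop_nhds_zero (ν+1) 1 one_pos
      simpa using this
    have hd3 : Tendsto (fun y : ℝ => (x/y) ^ (ν+1) * Real.exp (-(x/y))) (𝓝[>] 0) (𝓝 0) :=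
      hd2.comp hd1
    have hd4 : Tendsto g (𝓝[>] 0) (𝓝 (g 0)) :=
      (hgd.continuous.tendsto 0).mono_left nhdsWithin_le_nhds
    have hd5 := (hd3.mul hd4).div_const x
    rw [zero_mul, zero_div] at hd5
    refine Tendsto.congr' ?_ hd5
    filter_upwards [self_mem_nhdsWithin] with y hy
    rw [hGdef]
    simp only
    rw [ker_eq_u ν hx (mem_Ioi.mp hy)]
    ring
  have key := integral_Ioi_of_hasDerivAt_of_tendsto hcont hder hint htend
  rw [hG0, sub_zero] at key
  rw [integral_add hint1 hint2] at key
  linarith [key]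


/-- The key step: `Dnu` of the transform is the transform of minus the derivative. -/
lemma Dnu_step (ν : ℝ) (hν : -(1/2:ℝ) ≤ ν) (g : ℝ → ℝ)
    (hgd : Differentiable ℝ g)
    (hgm' : AEStronglyMeasurable (deriv g) (volume.restrict (Ioi 0)))
    (hgi : IntegrableOn g (Ioi 0)) (hgi' : IntegrableOn (deriv g) (Ioi 0))
    {x : ℝ} (hx : 0 < x) :
    Dnu ν (fun t => ∫ y in Ioi 0, ker ν t y * g y) x
      = ∫ y in Ioi 0, ker ν x y * (-(deriv g y)) := by
  have hEv : (fun t => t ^ (1-ν) * deriv (fun s => ∫ y in Ioi 0, ker ν s y * g y) t)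
      =ᶠ[𝓝 x] (fun t => ∫ y in Ioi 0, hker ν t y * g y) := by
    filter_upwards [isOpen_Ioi.mem_nhds (mem_Ioi.mpr hx)] with t ht
    rw [(hasDerivAt_T ν hν g hgi (mem_Ioi.mp ht)).deriv, ← integral_const_mul]
    refine setIntegral_congr_fun measurableSet_Ioi (fun y hy => ?_)
    rw [← mul_assoc, rel1 ν (mem_Ioi.mp ht) (mem_Ioi.mp hy)]
  show x ^ ν * deriv (fun t : ℝ => t ^ (1 - ν) * deriv _ t) x = _
  rw [Filter.EventuallyEq.deriv_eq hEv]
  rw [(hasDerivAt_Th ν hν g hgi hx).deriv, ← integral_const_mul]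
  have e1 : ∫ y in Ioi 0, x ^ ν * (hker' ν x y * g y) = ∫ y in Ioi 0, ker2 ν x y * g y :=
    setIntegral_congr_fun measurableSet_Ioi
      (fun y hy => by rw [← mul_assoc, rel2 ν hx (mem_Ioi.mp hy)])
  rw [e1, ibp ν hν g hgd hgm' hgi hgi' hx, ← integral_neg]
  refine setIntegral_congr_fun measurableSet_Ioi (fun y _ => ?_)
  ring

/-- integral of the kernel against the weight `x^{κ-1}`. -/
lemma kernel_int (ν κ : ℝ) (hν : -(1/2:ℝ) ≤ ν) (hκ : 1 ≤ κ) {y : ℝ} (hy : 0 < y) :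
    IntegrableOn (fun x => x ^ (κ-1) * ker ν x y) (Ioi 0) ∧
    ∫ x in Ioi 0, x ^ (κ-1) * ker ν x y = y ^ (κ-1) * Real.Gamma (ν+κ) := by
  have hs : 0 < ν + κ := by linarith
  set Gf : ℝ → ℝ := fun u => (y*u) ^ (κ-1) * ((u ^ ν * Real.exp (-u)) / y) with hGf
  have hGeq : ∀ x : ℝ, x ^ (κ-1) * ker ν x y = Gf (y⁻¹ * x) := by
    intro x
    rw [hGf]
    simp only
    rw [mul_inv_cancel_left₀ hy.ne', inv_mul_eq_div]
    unfold ker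
    ring
  have hGcong : EqOn Gf (fun u => (y ^ (κ-1) / y) * (Real.exp (-u) * u ^ ((ν+κ)-1))) (Ioi 0) := by
    intro u hu
    have h0 : 0 < u := mem_Ioi.mp hu
    rw [hGf]
    simp only
    rw [Real.mul_rpow hy.le h0.le, show (ν+κ)-1 = (κ-1) + ν by ring, Real.rpow_add h0]
    ring
  have hGint : IntegrableOn Gf (Ioi 0) := by
    refine IntegrableOn.congr_fun ?_ hGcong.symm measurableSet_Ioi
    exact (Real.GammaIntegral_convergent hs).const_mul _
  constructor
  · have h2 : IntegrableOn Gf (Ioi (y⁻¹ * 0)) := by simpa using hGint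
    have h3 := (integrableOn_Ioi_comp_mul_left_iff Gf 0 (inv_pos.mpr hy)).mpr h2
    refine h3.congr_fun (fun x _ => (hGeq x).symm) measurableSet_Ioi
  · calc ∫ x in Ioi 0, x ^ (κ-1) * ker ν x y = ∫ x in Ioi 0, Gf (y⁻¹ * x) := by
          simp_rw [hGeq]
      _ = (y⁻¹)⁻¹ • ∫ u in Ioi (y⁻¹ * 0), Gf u :=
          integral_comp_mul_left_Ioi Gf 0 (inv_pos.mpr hy)
      _ = y * ∫ u in Ioi 0, Gf u := by rw [inv_inv, mul_zero, smul_eq_mul]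
      _ = y * ((y ^ (κ-1) / y) * ∫ u in Ioi 0, Real.exp (-u) * u ^ ((ν+κ)-1)) := by
          rw [setIntegral_congr_fun measurableSet_Ioi hGcong, integral_const_mul]
      _ = y ^ (κ-1) * Real.Gamma (ν+κ) := by
          rw [← Real.Gamma_eq_integral hs]
          field_simp

/-- The weighted Tonelli bound for the transform. -/
lemma weighted (ν κ : ℝ) (hν : -(1/2:ℝ) ≤ ν) (hκ : 1 ≤ κ) (φ : ℝ → ℝ)
    (hφm : Measurable φ)
    (hφw : IntegrableOn (fun y => y ^ (κ-1) * |φ y|) (Ioi 0)) :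
    IntegrableOn (fun x => x ^ (κ-1) * |∫ y in Ioi 0, ker ν x y * φ y|) (Ioi 0) ∧
    (∫ x in Ioi 0, x ^ (κ-1) * |∫ y in Ioi 0, ker ν x y * φ y|) ≤
      Real.Gamma (ν+κ) * ∫ y in Ioi 0, y ^ (κ-1) * |φ y| := by
  have hs : 0 < ν + κ := by linarith
  set μ := volume.restrict (Ioi (0:ℝ)) with hμ
  set Q : ℝ → ℝ → ℝ := fun x y => x ^ (κ-1) * ker ν x y * |φ y| with hQ
  have hprod : (μ.prod μ) = (volume.prod volume).restrict ((Ioi (0:ℝ)) ×ˢ (Ioi (0:ℝ))) :=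
    Measure.prod_restrict _ _
  -- measurability on the product
  have hcont1 : ContinuousOn (fun p : ℝ × ℝ => p.1 ^ (κ-1) * ker ν p.1 p.2)
      ((Ioi (0:ℝ)) ×ˢ (Ioi (0:ℝ))) := by
    have hdivc : ContinuousOn (fun p : ℝ × ℝ => p.1 / p.2) ((Ioi (0:ℝ)) ×ˢ (Ioi (0:ℝ))) :=
      continuousOn_fst.div continuousOn_snd (fun p hp => (mem_Ioi.mp hp.2).ne')
    refine ContinuousOn.mul ?_ ?_
    · exact continuousOn_fst.rpow_const (fun p hp => Or.inl (mem_Ioi.mp hp.1).ne')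
    · unfold ker
      refine ContinuousOn.div (ContinuousOn.mul ?_ ?_) continuousOn_snd
        (fun p hp => (mem_Ioi.mp hp.2).ne')
      · exact hdivc.rpow_const
          (fun p hp => Or.inl (div_pos (mem_Ioi.mp hp.1) (mem_Ioi.mp hp.2)).ne')
      · exact Real.continuous_exp.comp_continuousOn hdivc.neg
  have hkerQm : AEStronglyMeasurable (fun p : ℝ × ℝ => p.1 ^ (κ-1) * ker ν p.1 p.2)
      (μ.prod μ) := by
    rw [hprod]
    exact hcont1.aestronglyMeasurable (measurableSet_Ioi.prod measurableSet_Ioi)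
  have hφm2 : AEStronglyMeasurable (fun p : ℝ × ℝ => φ p.2) (μ.prod μ) :=
    (hφm.comp measurable_snd).aestronglyMeasurable
  have hQum : AEStronglyMeasurable (Function.uncurry Q) (μ.prod μ) := hkerQm.mul hφm2.norm
  -- sections and their integrals
  have hsec : ∀ y ∈ Ioi (0:ℝ), Integrable (fun x => Q x y) μ := fun y hy =>
    ((kernel_int ν κ hν hκ (mem_Ioi.mp hy)).1.mul_const _)
  have hsecval : ∀ y ∈ Ioi (0:ℝ),
      ∫ x, Q x y ∂μ = Real.Gamma (ν+κ) * (y ^ (κ-1) * |φ y|) := by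
    intro y hy
    have : ∫ x, Q x y ∂μ = (∫ x in Ioi 0, x ^ (κ-1) * ker ν x y) * |φ y| := by
      rw [hQ, ← integral_mul_const]
    rw [this, (kernel_int ν κ hν hκ (mem_Ioi.mp hy)).2]
    ring
  have hQnonneg : ∀ x ∈ Ioi (0:ℝ), ∀ y ∈ Ioi (0:ℝ), 0 ≤ Q x y := fun x hx y hy =>
    mul_nonneg (mul_nonneg (Real.rpow_nonneg (le_of_lt (mem_Ioi.mp hx)) _)
      (ker_nonneg (le_of_lt (mem_Ioi.mp hx)) (le_of_lt (mem_Ioi.mp hy)))) (abs_nonneg _)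
  have hnormint : Integrable (fun y => ∫ x, ‖Q x y‖ ∂μ) μ := by
    refine Integrable.congr (hφw.const_mul (Real.Gamma (ν+κ))) ?_
    refine (ae_restrict_iff' measurableSet_Ioi).mpr (ae_of_all _ fun y hy => ?_)
    have heq : ∫ x, ‖Q x y‖ ∂μ = ∫ x, Q x y ∂μ := by
      refine setIntegral_congr_fun measurableSet_Ioi (fun x hx => ?_)
      rw [Real.norm_eq_abs, abs_of_nonneg (hQnonneg x hx y hy)]
    show Real.Gamma (ν+κ) * (y ^ (κ-1) * |φ y|) = ∫ x, ‖Q x y‖ ∂μ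
    rw [heq, hsecval y hy]
  have hQint : Integrable (Function.uncurry Q) (μ.prod μ) := by
    refine (integrable_prod_iff' hQum).mpr ⟨?_, hnormint⟩
    exact (ae_restrict_iff' measurableSet_Ioi).mpr (ae_of_all _ fun y hy => hsec y hy)
  -- measurability of the transform
  have hTker : AEStronglyMeasurable (fun p : ℝ × ℝ => ker ν p.1 p.2 * φ p.2) (μ.prod μ) := by
    refine AEStronglyMeasurable.mul ?_ hφm2
    rw [hprod]
    refine ContinuousOn.aestronglyMeasurable ?_ (measurableSet_Ioi.prod measurableSet_Ioi)
    have hdivc : ContinuousOn (fun p : ℝ × ℝ => p.1 / p.2) ((Ioi (0:ℝ)) ×ˢ (Ioi (0:ℝ))) :=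
      continuousOn_fst.div continuousOn_snd (fun p hp => (mem_Ioi.mp hp.2).ne')
    unfold ker
    refine ContinuousOn.div (ContinuousOn.mul ?_ ?_) continuousOn_snd
      (fun p hp => (mem_Ioi.mp hp.2).ne')
    · exact hdivc.rpow_const
        (fun p hp => Or.inl (div_pos (mem_Ioi.mp hp.1) (mem_Ioi.mp hp.2)).ne')
    · exact Real.continuous_exp.comp_continuousOn hdivc.neg
  have hTm : AEStronglyMeasurable (fun x => ∫ y, ker ν x y * φ y ∂μ) μ :=
    hTker.integral_prod_right'
  have hIm : AEStronglyMeasurable (fun x => x ^ (κ-1) * |∫ y in Ioi 0, ker ν x y * φ y|) μ := by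
    have h1 : AEStronglyMeasurable (fun x : ℝ => x ^ (κ-1)) μ := by
      rw [hμ]
      exact (continuousOn_id.rpow_const (fun x hx => Or.inl (mem_Ioi.mp hx).ne')).aestronglyMeasurable
        measurableSet_Ioi
    have := h1.mul hTm.norm
    simpa [Real.norm_eq_abs, Pi.mul_def] using this
  -- pointwise bound
  have hP : Integrable (fun x => ∫ y, Q x y ∂μ) μ := by
    have := hQint.integral_prod_left
    simpa using this
  have hpt : ∀ x ∈ Ioi (0:ℝ),
      x ^ (κ-1) * |∫ y in Ioi 0, ker ν x y * φ y| ≤ ∫ y, Q x y ∂μ := by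
    intro x hx
    have hxp := mem_Ioi.mp hx
    have h6 : |∫ y in Ioi 0, ker ν x y * φ y| ≤ ∫ y in Ioi 0, ker ν x y * |φ y| := by
      have h6' := norm_integral_le_integral_norm (μ := μ) (fun y => ker ν x y * φ y)
      rw [Real.norm_eq_abs] at h6'
      refine h6'.trans_eq ?_
      refine setIntegral_congr_fun measurableSet_Ioi (fun y hy => ?_)
      rw [Real.norm_eq_abs, abs_mul, abs_of_nonneg (ker_nonneg hxp.le (le_of_lt (mem_Ioi.mp hy)))]
    calc x ^ (κ-1) * |∫ y in Ioi 0, ker ν x y * φ y|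
        ≤ x ^ (κ-1) * ∫ y in Ioi 0, ker ν x y * |φ y| :=
          mul_le_mul_of_nonneg_left h6 (Real.rpow_nonneg hxp.le _)
      _ = ∫ y in Ioi 0, x ^ (κ-1) * (ker ν x y * |φ y|) := (integral_const_mul _ _).symm
      _ = ∫ y, Q x y ∂μ := by
          refine setIntegral_congr_fun measurableSet_Ioi (fun y _ => ?_)
          rw [hQ]; ring
  have hIint : IntegrableOn (fun x => x ^ (κ-1) * |∫ y in Ioi 0, ker ν x y * φ y|) (Ioi 0) := by
    refine Integrable.mono hP hIm ?_
    refine (ae_restrict_iff' measurableSet_Ioi).mpr (ae_of_all _ fun x hx => ?_)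
    rw [Real.norm_eq_abs, abs_of_nonneg (mul_nonneg
      (Real.rpow_nonneg (le_of_lt (mem_Ioi.mp hx)) _) (abs_nonneg _))]
    exact (hpt x hx).trans (le_abs_self _)
  refine ⟨hIint, ?_⟩
  have hmono : (∫ x in Ioi 0, x ^ (κ-1) * |∫ y in Ioi 0, ker ν x y * φ y|)
      ≤ ∫ x, (∫ y, Q x y ∂μ) ∂μ := by
    refine integral_mono_ae hIint hP ?_
    exact (ae_restrict_iff' measurableSet_Ioi).mpr (ae_of_all _ fun x hx => hpt x hx)
  refine hmono.trans ?_
  have hswap : ∫ x, (∫ y, Q x y ∂μ) ∂μ = ∫ y, (∫ x, Q x y ∂μ) ∂μ :=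
    integral_integral_swap hQint
  rw [hswap]
  have : ∫ y, (∫ x, Q x y ∂μ) ∂μ = ∫ y in Ioi 0, Real.Gamma (ν+κ) * (y ^ (κ-1) * |φ y|) :=
    setIntegral_congr_fun measurableSet_Ioi (fun y hy => hsecval y hy)
  rw [this, integral_const_mul]


end DnuAux

/-- for `ω̃ ∈ L¹_{H₂}(ℝ)` supported in `[0,∞)` and
`ω(x) = (1/Γ(ν+1)) ∫₀^∞ (x/y)^ν e^{−x/y} ω̃(y) y⁻¹ dy`, one has
`∫₀^∞ x^{κ−1} |(D_ν^l ω)(x)| dx ≤ (Γ(ν+κ)/Γ(ν+1)) ∫₀^∞ y^{κ−1} |ω̃^{(l)}(y)| dy < ∞`. -/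
theorem integrability_of_Dnu_iterate_gammaTransform
    (n : ℕ) (hn : 2 ≤ n) (ν : ℝ)
    (hν : (∃ k : ℕ, ν = k) ∨ ν = -(1/2) ∨ ν = 1/2)
    (tω : ℝ → ℝ)
    (hpos : ∀ x : ℝ, 0 ≤ tω x)
    (hdiff : ∀ j : ℕ, j < n - 1 → Differentiable ℝ (iteratedDeriv j tω))
    (hint : ∀ κ : ℝ, 1 ≤ κ → κ ≤ n → ∀ j : ℕ, j ≤ n - 1 →
      Integrable (fun x : ℝ => |x| ^ (κ - 1) * |iteratedDeriv j tω x|))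
    (hsupp : ∀ x : ℝ, x < 0 → tω x = 0)
    (ω : ℝ → ℝ)
    (hω : ∀ x : ℝ, 0 < x →
      ω x = (1 / Real.Gamma (ν + 1)) *
        ∫ y in Set.Ioi (0:ℝ), (x / y) ^ ν * Real.exp (-(x / y)) * tω y / y) :
    ∀ κ : ℝ, 1 ≤ κ → κ ≤ n → ∀ l : ℕ, l ≤ n - 1 →
      IntegrableOn (fun x : ℝ => x ^ (κ - 1) * |((Dnu ν)^[l] ω) x|) (Set.Ioi 0) ∧
      (∫ x in Set.Ioi (0:ℝ), x ^ (κ - 1) * |((Dnu ν)^[l] ω) x|) ≤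
        (Real.Gamma (ν + κ) / Real.Gamma (ν + 1)) *
          ∫ y in Set.Ioi (0:ℝ), y ^ (κ - 1) * |iteratedDeriv l tω y| := by
  classical
  have hν2 : -(1/2:ℝ) ≤ ν := by
    rcases hν with ⟨k, rfl⟩ | rfl | rfl
    · have : (0:ℝ) ≤ (k:ℝ) := Nat.cast_nonneg k
      linarith
    · norm_num
    · norm_num
  have hΓpos : 0 < Real.Gamma (ν + 1) := Real.Gamma_pos_of_pos (by linarith)
  have hn1 : (1:ℝ) ≤ (n:ℝ) := by
    have : (1:ℕ) ≤ n := by omega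
    exact_mod_cast this
  have hmeas : ∀ j, j ≤ n-1 → Measurable (iteratedDeriv j tω) := by
    intro j hj
    rcases lt_or_eq_of_le hj with h | h
    · exact (hdiff j h).continuous.measurable
    · have hj2 : j = (n-2) + 1 := by omega
      rw [hj2, iteratedDeriv_succ]
      exact measurable_deriv _
  have hL1 : ∀ j, j ≤ n-1 → IntegrableOn (iteratedDeriv j tω) (Set.Ioi 0) := by
    intro j hj
    have h1 := hint 1 le_rfl hn1 j hj
    simp only [sub_self, Real.rpow_zero, one_mul] at h1
    have h2 : Integrable (iteratedDeriv j tω) := by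
      rw [← integrable_norm_iff ((hmeas j hj).aestronglyMeasurable)]
      simpa [Real.norm_eq_abs] using h1
    exact h2.integrableOn
  set φ : ℕ → ℝ → ℝ := fun l y => ((-1:ℝ))^l / Real.Gamma (ν+1) * iteratedDeriv l tω y with hφ
  have hφm : ∀ l, l ≤ n-1 → Measurable (φ l) := fun l hl => (hmeas l hl).const_mul _
  have hφi : ∀ l, l ≤ n-1 → IntegrableOn (φ l) (Set.Ioi 0) := fun l hl =>
    (hL1 l hl).const_mul _
  have hrep : ∀ l : ℕ, l ≤ n-1 → ∀ x ∈ Set.Ioi (0:ℝ),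
      ((Dnu ν)^[l] ω) x = ∫ y in Set.Ioi 0, DnuAux.ker ν x y * φ l y := by
    intro l
    induction l with
    | zero =>
      intro _ x hx
      have hx0 := Set.mem_Ioi.mp hx
      simp only [Function.iterate_zero, id_eq]
      rw [hω x hx0, ← integral_const_mul]
      refine setIntegral_congr_fun measurableSet_Ioi (fun y _ => ?_)
      rw [hφ]
      simp only [pow_zero, iteratedDeriv_zero]
      unfold DnuAux.ker
      ring
    | succ l IH =>
      intro hl1 x hx
      have hl : l < n - 1 := by omega
      have hx0 := Set.mem_Ioi.mp hx
      have hgd : Differentiable ℝ (φ l) := (hdiff l hl).const_mul _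
      have hderφ : deriv (φ l) =
          fun y => ((-1:ℝ))^l / Real.Gamma (ν+1) * iteratedDeriv (l+1) tω y := by
        funext y
        rw [hφ]
        simp only
        rw [deriv_const_mul _ ((hdiff l hl) y), iteratedDeriv_succ]
      have hmeas' : AEStronglyMeasurable (deriv (φ l)) (volume.restrict (Set.Ioi 0)) := by
        rw [hderφ]
        exact ((hmeas (l+1) (by omega)).const_mul _).aestronglyMeasurable
      have hint'' : IntegrableOn (deriv (φ l)) (Set.Ioi 0) := by
        rw [hderφ]
        exact ((hL1 (l+1) (by omega)).const_mul _)
      have hstep := DnuAux.Dnu_step ν hν2 (φ l) hgd hmeas' (hφi l (by omega)) hint'' hx0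
      have hEv : ((Dnu ν)^[l] ω) =ᶠ[𝓝 x]
          (fun t => ∫ y in Set.Ioi 0, DnuAux.ker ν t y * φ l y) := by
        filter_upwards [isOpen_Ioi.mem_nhds hx] with t ht
        exact IH (by omega) t ht
      have hDeq : Dnu ν ((Dnu ν)^[l] ω) x =
          Dnu ν (fun t => ∫ y in Set.Ioi 0, DnuAux.ker ν t y * φ l y) x := by
        have r1 : Dnu ν ((Dnu ν)^[l] ω) x =
            x ^ ν * deriv (fun t : ℝ => t ^ (1 - ν) * deriv ((Dnu ν)^[l] ω) t) x := rfl
        have r2 : Dnu ν (fun t => ∫ y in Set.Ioi 0, DnuAux.ker ν t y * φ l y) x =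
            x ^ ν * deriv (fun t : ℝ => t ^ (1 - ν) *
              deriv (fun s => ∫ y in Set.Ioi 0, DnuAux.ker ν s y * φ l y) t) x := rfl
        rw [r1, r2]
        congr 1
        apply Filter.EventuallyEq.deriv_eq
        filter_upwards [hEv.deriv] with t ht
        rw [ht]
      rw [Function.iterate_succ_apply', hDeq, hstep]
      refine setIntegral_congr_fun measurableSet_Ioi (fun y _ => ?_)
      rw [hderφ, hφ]
      simp only
      rw [pow_succ]
      ring
  intro κ hκ1 hκn l hl
  have hconst : |((-1:ℝ))^l / Real.Gamma (ν+1)| = 1 / Real.Gamma (ν+1) := by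
    rw [abs_div, abs_pow, abs_neg, abs_one, one_pow, abs_of_pos hΓpos]
  have heqφ : ∀ y : ℝ, y ^ (κ-1) * |φ l y| =
      (1 / Real.Gamma (ν+1)) * (y ^ (κ-1) * |iteratedDeriv l tω y|) := by
    intro y
    rw [hφ]
    simp only
    rw [abs_mul, hconst]
    ring
  have hbase : IntegrableOn (fun y => y ^ (κ-1) * |iteratedDeriv l tω y|) (Set.Ioi 0) := by
    refine ((hint κ hκ1 hκn l hl).integrableOn).congr_fun (fun y hy => ?_) measurableSet_Ioi
    simp only [abs_of_pos (Set.mem_Ioi.mp hy)]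
  have hwφ : IntegrableOn (fun y => y ^ (κ-1) * |φ l y|) (Set.Ioi 0) := by
    exact IntegrableOn.congr_fun (hbase.const_mul (1 / Real.Gamma (ν+1)))
      (fun y _ => (heqφ y).symm) measurableSet_Ioi
  obtain ⟨hI, hB⟩ := DnuAux.weighted ν κ hν2 hκ1 (φ l) (hφm l hl) hwφ
  have hIcong : ∀ x ∈ Set.Ioi (0:ℝ),
      x ^ (κ-1) * |∫ y in Set.Ioi 0, DnuAux.ker ν x y * φ l y| =
      x ^ (κ-1) * |((Dnu ν)^[l] ω) x| := by
    intro x hx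
    rw [hrep l hl x hx]
  constructor
  · exact hI.congr_fun hIcong measurableSet_Ioi
  · have e1 : (∫ x in Set.Ioi (0:ℝ), x ^ (κ-1) * |((Dnu ν)^[l] ω) x|) =
        ∫ x in Set.Ioi (0:ℝ), x ^ (κ-1) * |∫ y in Set.Ioi 0, DnuAux.ker ν x y * φ l y| :=
      (setIntegral_congr_fun measurableSet_Ioi hIcong).symm
    rw [e1]
    refine hB.trans ?_
    have e2 : (∫ y in Set.Ioi (0:ℝ), y ^ (κ-1) * |φ l y|) =
        ∫ y in Set.Ioi (0:ℝ), (1 / Real.Gamma (ν+1)) *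
          (y ^ (κ-1) * |iteratedDeriv l tω y|) :=
      setIntegral_congr_fun measurableSet_Ioi (fun y _ => heqφ y)
    rw [e2, integral_const_mul]
    ring_nf
    exact le_refl _
end

section
/- Let ν ≥ −1/2 and let g : (0,∞) → ℝ be Lebesgue integrable with lim_{λ→0⁺} g(λ) = 0. Then lim_{x→0⁺} ∫₀^∞ (x/y)^{ν+1} · e^{−x/y} · g(y) · y^{−1} dy = 0. -/
open MeasureTheory Filter

set_option maxHeartbeats 1000000

/-- For `p ≥ 0`, the function `t ↦ t^p e^{-t}` is bounded on `(0,∞)`. -/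
lemma aux_rpow_mul_exp_neg_le (p : ℝ) (hp : 0 ≤ p) :
    ∃ C : ℝ, 1 ≤ C ∧ ∀ t : ℝ, 0 < t → t ^ p * Real.exp (-t) ≤ C := by
  refine ⟨max 1 (Nat.factorial (Nat.ceil p) : ℝ), le_max_left _ _, fun t ht => ?_⟩
  rcases le_total t 1 with h1 | h1
  · have hb : t ^ p ≤ 1 := Real.rpow_le_one ht.le h1 hp
    have he : Real.exp (-t) ≤ 1 := by
      rw [← Real.exp_zero]
      exact Real.exp_le_exp.mpr (by linarith)
    calc t ^ p * Real.exp (-t) ≤ 1 * 1 :=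
          mul_le_mul hb he (Real.exp_pos _).le zero_le_one
      _ = 1 := by ring
      _ ≤ _ := le_max_left _ _
  · have h2 : t ^ p ≤ t ^ (Nat.ceil p : ℕ) := by
      rw [← Real.rpow_natCast]
      exact Real.rpow_le_rpow_of_exponent_le h1 (Nat.le_ceil p)
    have h3 : t ^ (Nat.ceil p) ≤ Nat.factorial (Nat.ceil p) * Real.exp t := by
      have := Real.pow_div_factorial_le_exp t ht.le (Nat.ceil p)
      rw [div_le_iff₀ (by positivity : (0:ℝ) < Nat.factorial (Nat.ceil p))] at this
      linarith [this]
    calc t ^ p * Real.exp (-t) ≤ (Nat.factorial (Nat.ceil p) * Real.exp t) * Real.exp (-t) :=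
          mul_le_mul (h2.trans h3) le_rfl (Real.exp_pos _).le (by positivity)
      _ = Nat.factorial (Nat.ceil p) := by rw [mul_assoc, ← Real.exp_add]; simp
      _ ≤ _ := le_max_right _ _

/-- if `g` is Lebesgue integrable on `(0,∞)` with `g(λ) → 0` as `λ → 0⁺`, then
`∫₀^∞ (x/y)^{ν+1} e^{−x/y} g(y) y⁻¹ dy → 0` as `x → 0⁺`, for any `ν ≥ −1/2`. -/
theorem tendsto_gammaKernel_integral_zero
    (ν : ℝ) (hν : -(1/2) ≤ ν) (g : ℝ → ℝ)
    (hg : IntegrableOn g (Set.Ioi 0))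
    (hg0 : Tendsto g (nhdsWithin 0 (Set.Ioi 0)) (nhds 0)) :
    Tendsto (fun x : ℝ =>
        ∫ y in Set.Ioi (0:ℝ), (x / y) ^ (ν + 1) * Real.exp (-(x / y)) * g y / y)
      (nhdsWithin 0 (Set.Ioi 0)) (nhds 0) := by
  obtain ⟨C₁, hC₁1, hC₁⟩ := aux_rpow_mul_exp_neg_le (ν + 3) (by linarith)
  obtain ⟨C₂, hC₂1, hC₂⟩ := aux_rpow_mul_exp_neg_le (ν + 1/2) (by linarith)
  have hC₁0 : (0:ℝ) < C₁ := lt_of_lt_of_le one_pos hC₁1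
  have hC₂0 : (0:ℝ) < C₂ := lt_of_lt_of_le one_pos hC₂1
  -- kernel bound 1 : K(x,y)/y ≤ C₁ y / x²
  have hK1 : ∀ x y : ℝ, 0 < x → 0 < y →
      (x / y) ^ (ν + 1) * Real.exp (-(x / y)) / y ≤ C₁ * y / x ^ 2 := by
    intro x y hx hy
    have ht : 0 < x / y := div_pos hx hy
    have key : (x / y) ^ (ν + 1) * Real.exp (-(x / y)) / y
        = ((x / y) ^ (ν + 3) * Real.exp (-(x / y))) * (y / x ^ 2) := by
      have h1 : (x / y) ^ (ν + 3) = (x / y) ^ (ν + 1) * (x / y) ^ (2:ℝ) := by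
        rw [← Real.rpow_add ht]; ring_nf
      rw [h1, show ((x / y) ^ (2:ℝ)) = (x / y) ^ (2:ℕ) by
        rw [← Real.rpow_natCast (x / y) 2]; norm_num]
      field_simp
    rw [key]
    calc ((x / y) ^ (ν + 3) * Real.exp (-(x / y))) * (y / x ^ 2)
        ≤ C₁ * (y / x ^ 2) :=
          mul_le_mul_of_nonneg_right (hC₁ _ ht) (by positivity)
      _ = C₁ * y / x ^ 2 := by ring
  -- kernel bound 2 : K(x,y)/y ≤ C₂ x^{1/2} y^{-3/2}
  have hK2 : ∀ x y : ℝ, 0 < x → 0 < y →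
      (x / y) ^ (ν + 1) * Real.exp (-(x / y)) / y
        ≤ C₂ * (x ^ ((1:ℝ)/2) * y ^ (-(3:ℝ)/2)) := by
    intro x y hx hy
    have ht : 0 < x / y := div_pos hx hy
    have key : (x / y) ^ (ν + 1) * Real.exp (-(x / y)) / y
        = ((x / y) ^ (ν + 1/2) * Real.exp (-(x / y))) * (x ^ ((1:ℝ)/2) * y ^ (-(3:ℝ)/2)) := by
      have h1 : (x / y) ^ (ν + 1) = (x / y) ^ (ν + 1/2) * (x / y) ^ ((1:ℝ)/2) := by
        rw [← Real.rpow_add ht]; ring_nf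
      have h2 : (x / y) ^ ((1:ℝ)/2) = x ^ ((1:ℝ)/2) / y ^ ((1:ℝ)/2) :=
        Real.div_rpow hx.le hy.le _
      have h3 : y ^ (-(3:ℝ)/2) = (y ^ ((1:ℝ)/2) * y)⁻¹ := by
        rw [show (-(3:ℝ)/2) = -(3/2) by ring, Real.rpow_neg hy.le]
        congr 1
        rw [show ((3:ℝ)/2) = 1/2 + 1 by ring, Real.rpow_add hy, Real.rpow_one]
      have hy2 : (0:ℝ) < y ^ ((1:ℝ)/2) := Real.rpow_pos_of_pos hy _
      rw [h1, h2, h3]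
      field_simp
    rw [key]
    exact mul_le_mul_of_nonneg_right (hC₂ _ ht) (by positivity)
  rw [Metric.tendsto_nhdsWithin_nhds] at hg0 ⊢
  intro ε hε
  set ε' := ε / (3 * (C₁ + 2 * C₂ + 1)) with hε'def
  have hε' : 0 < ε' := by positivity
  obtain ⟨δ₁, hδ₁, hgδ⟩ := hg0 ε' hε'
  set δ := δ₁ / 2 with hδdef
  have hδpos : 0 < δ := by positivity
  have hgsmall : ∀ y ∈ Set.Ioc (0:ℝ) δ, |g y| ≤ ε' := by
    intro y hy
    have := hgδ (show y ∈ Set.Ioi (0:ℝ) from hy.1)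
      (by rw [Real.dist_eq, sub_zero, abs_of_pos hy.1]; linarith [hy.2])
    rw [Real.dist_eq, sub_zero] at this
    exact this.le
  -- integral of |g| over (δ, ∞)
  set J := ∫ y in Set.Ioi δ, |g y| with hJdef
  have hgIntδ : IntegrableOn g (Set.Ioi δ) := hg.mono_set (Set.Ioi_subset_Ioi hδpos.le)
  have hJ0 : 0 ≤ J := setIntegral_nonneg measurableSet_Ioi (fun y _ => abs_nonneg _)
  set E := C₂ * δ ^ (-(3:ℝ)/2) * (J + 1) with hEdef
  have hδr : (0:ℝ) < δ ^ (-(3:ℝ)/2) := Real.rpow_pos_of_pos hδpos _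
  have hE0 : 0 < E := by positivity
  refine ⟨min δ ((ε / (3 * E)) ^ 2), by positivity, fun x hx hxd => ?_⟩
  have hxpos : 0 < x := hx
  rw [Real.dist_eq, sub_zero, abs_of_pos hxpos] at hxd
  have hxδ : x < δ := lt_of_lt_of_le hxd (min_le_left _ _)
  have hxE : x < (ε / (3 * E)) ^ 2 := lt_of_lt_of_le hxd (min_le_right _ _)
  rw [Real.dist_eq, sub_zero]
  set F := fun y : ℝ => (x / y) ^ (ν + 1) * Real.exp (-(x / y)) * g y / y with hFdef
  -- measurability
  have hker : Measurable fun y : ℝ => (x / y) ^ (ν + 1) * Real.exp (-(x / y)) := by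
    have h1 : Measurable fun y : ℝ => x / y := measurable_const.div measurable_id
    exact (h1.pow_const _).mul h1.neg.exp
  have hFaesm : AEStronglyMeasurable F (volume.restrict (Set.Ioi (0:ℝ))) := by
    have hm : AEMeasurable F (volume.restrict (Set.Ioi (0:ℝ))) :=
      (hker.aemeasurable.mul hg.1.aemeasurable).div aemeasurable_id
    exact hm.aestronglyMeasurable
  have haesm : ∀ s : Set ℝ, s ⊆ Set.Ioi (0:ℝ) →
      AEStronglyMeasurable F (volume.restrict s) := by
    intro s hs
    exact AEStronglyMeasurable.mono_set hs hFaesm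
  -- pointwise norm identity
  have hnorm : ∀ y : ℝ, 0 < y →
      ‖F y‖ = ((x / y) ^ (ν + 1) * Real.exp (-(x / y)) / y) * |g y| := by
    intro y hy
    have hk : 0 ≤ (x / y) ^ (ν + 1) * Real.exp (-(x / y)) := by positivity
    simp only [hFdef, Real.norm_eq_abs]
    rw [abs_div, abs_mul, abs_of_nonneg hk, abs_of_pos hy]
    ring
  -- integrability on (0, δ]
  have hbdd : ∀ y ∈ Set.Ioc (0:ℝ) δ, ‖F y‖ ≤ (C₁ * δ / x ^ 2) * ε' := by
    intro y hy
    rw [hnorm y hy.1]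
    have h1 := hK1 x y hxpos hy.1
    have h2 : C₁ * y / x ^ 2 ≤ C₁ * δ / x ^ 2 := by
      apply div_le_div_of_nonneg_right ?_ (by positivity)
      · nlinarith [hy.2]
    have hknn : 0 ≤ (x / y) ^ (ν + 1) * Real.exp (-(x / y)) / y :=
      div_nonneg (mul_nonneg (Real.rpow_nonneg (div_pos hxpos hy.1).le _)
        (Real.exp_pos _).le) hy.1.le
    exact mul_le_mul (h1.trans h2) (hgsmall y hy) (abs_nonneg _) (by positivity)
  have hInt1 : IntegrableOn F (Set.Ioc 0 δ) := by
    refine ⟨haesm _ (Set.Ioc_subset_Ioi_self), ?_⟩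
    refine HasFiniteIntegral.restrict_of_bounded (C := (C₁ * δ / x ^ 2) * ε')
      measure_Ioc_lt_top ?_
    exact (ae_restrict_iff' measurableSet_Ioc).mpr (Filter.Eventually.of_forall hbdd)
  -- integrability on (δ, ∞)
  have hbd2 : ∀ y ∈ Set.Ioi δ, ‖F y‖ ≤ (C₂ * x ^ ((1:ℝ)/2) * δ ^ (-(3:ℝ)/2)) * |g y| := by
    intro y hy
    have hy0 : 0 < y := lt_trans hδpos hy
    rw [hnorm y hy0]
    have h1 := hK2 x y hxpos hy0
    have h2 : y ^ (-(3:ℝ)/2) ≤ δ ^ (-(3:ℝ)/2) := by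
      rw [show (-(3:ℝ)/2) = -(3/2) by ring]
      exact Real.rpow_le_rpow_of_nonpos hδpos (le_of_lt hy) (by norm_num)
    have hx12 : (0:ℝ) ≤ x ^ ((1:ℝ)/2) := Real.rpow_nonneg hxpos.le _
    have h3 : C₂ * (x ^ ((1:ℝ)/2) * y ^ (-(3:ℝ)/2))
        ≤ C₂ * x ^ ((1:ℝ)/2) * δ ^ (-(3:ℝ)/2) := by
      rw [mul_assoc]
      apply mul_le_mul_of_nonneg_left ?_ hC₂0.le
      exact mul_le_mul_of_nonneg_left h2 hx12
    exact mul_le_mul (h1.trans h3) le_rfl (abs_nonneg _) (by positivity)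
  have hInt2 : IntegrableOn F (Set.Ioi δ) := by
    refine Integrable.mono ((hgIntδ.abs).const_mul (C₂ * x ^ ((1:ℝ)/2) * δ ^ (-(3:ℝ)/2)))
      (haesm _ (Set.Ioi_subset_Ioi hδpos.le)) ?_
    refine (ae_restrict_iff' measurableSet_Ioi).mpr (Filter.Eventually.of_forall ?_)
    intro y hy
    refine (hbd2 y hy).trans ?_
    rw [Real.norm_eq_abs, abs_mul, abs_abs]
    exact mul_le_mul_of_nonneg_right (le_abs_self _) (abs_nonneg _)
  -- splitting
  have hsplit1 : Set.Ioc (0:ℝ) δ ∪ Set.Ioi δ = Set.Ioi 0 :=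
    Set.Ioc_union_Ioi_eq_Ioi hδpos.le
  have hsplit2 : Set.Ioc (0:ℝ) x ∪ Set.Ioc x δ = Set.Ioc 0 δ :=
    Set.Ioc_union_Ioc_eq_Ioc hxpos.le hxδ.le
  have hdisj1 : Disjoint (Set.Ioc (0:ℝ) δ) (Set.Ioi δ) := Set.Ioc_disjoint_Ioi le_rfl
  have hdisj2 : Disjoint (Set.Ioc (0:ℝ) x) (Set.Ioc x δ) := Set.Ioc_disjoint_Ioc_of_le le_rfl
  have hIntAll : IntegrableOn F (Set.Ioi 0) := by
    rw [← hsplit1]; exact hInt1.union hInt2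
  -- the three integral bounds
  have hIntN1 : IntegrableOn (fun y => ‖F y‖) (Set.Ioc 0 δ) := hInt1.norm
  have hIntN2 : IntegrableOn (fun y => ‖F y‖) (Set.Ioi δ) := hInt2.norm
  have T1 : (∫ y in Set.Ioc (0:ℝ) x, ‖F y‖) ≤ ε' * C₁ / 2 := by
    have hIa : IntegrableOn (fun y => ‖F y‖) (Set.Ioc 0 x) :=
      hIntN1.mono_set (Set.Ioc_subset_Ioc le_rfl hxδ.le)
    have hIb : IntegrableOn (fun y : ℝ => (ε' * C₁ / x ^ 2) * y) (Set.Ioc 0 x) :=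
      Integrable.const_mul (f := fun y : ℝ => y) (μ := volume.restrict (Set.Ioc 0 x)) continuous_id.integrableOn_Ioc _
    have hmono : (∫ y in Set.Ioc (0:ℝ) x, ‖F y‖)
        ≤ ∫ y in Set.Ioc (0:ℝ) x, (ε' * C₁ / x ^ 2) * y := by
      refine setIntegral_mono_on hIa hIb measurableSet_Ioc ?_
      intro y hy
      rw [hnorm y hy.1]
      have h1 := hK1 x y hxpos hy.1
      have hgb : |g y| ≤ ε' := hgsmall y (Set.Ioc_subset_Ioc le_rfl hxδ.le hy)
      have hknn : 0 ≤ (x / y) ^ (ν + 1) * Real.exp (-(x / y)) / y :=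
        div_nonneg (mul_nonneg (Real.rpow_nonneg (div_pos hxpos hy.1).le _)
          (Real.exp_pos _).le) hy.1.le
      calc ((x / y) ^ (ν + 1) * Real.exp (-(x / y)) / y) * |g y|
          ≤ (C₁ * y / x ^ 2) * ε' :=
            mul_le_mul h1 hgb (abs_nonneg _)
              (div_nonneg (mul_nonneg hC₁0.le hy.1.le) (sq_nonneg x))
        _ = (ε' * C₁ / x ^ 2) * y := by ring
    have hval : (∫ y in Set.Ioc (0:ℝ) x, y) = x ^ 2 / 2 := by
      rw [← intervalIntegral.integral_of_le hxpos.le, integral_id]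
      ring
    rw [integral_const_mul, hval] at hmono
    calc (∫ y in Set.Ioc (0:ℝ) x, ‖F y‖) ≤ (ε' * C₁ / x ^ 2) * (x ^ 2 / 2) := hmono
      _ = ε' * C₁ / 2 := by field_simp
  have T2 : (∫ y in Set.Ioc x δ, ‖F y‖) ≤ 2 * ε' * C₂ := by
    have hIa : IntegrableOn (fun y => ‖F y‖) (Set.Ioc x δ) :=
      hIntN1.mono_set (Set.Ioc_subset_Ioc hxpos.le le_rfl)
    have hIb : IntegrableOn (fun y : ℝ => (ε' * C₂ * x ^ ((1:ℝ)/2)) * y ^ (-(3:ℝ)/2))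
        (Set.Ioc x δ) := by
      refine (IntegrableOn.mono_set ?_ Set.Ioc_subset_Icc_self).const_mul _
      refine ContinuousOn.integrableOn_compact isCompact_Icc ?_
      intro y hy
      exact ((continuousAt_id.rpow_const (Or.inl (lt_of_lt_of_le hxpos hy.1).ne')).continuousWithinAt)
    have hmono : (∫ y in Set.Ioc x δ, ‖F y‖)
        ≤ ∫ y in Set.Ioc x δ, (ε' * C₂ * x ^ ((1:ℝ)/2)) * y ^ (-(3:ℝ)/2) := by
      refine setIntegral_mono_on hIa hIb measurableSet_Ioc ?_
      intro y hy
      have hy0 : 0 < y := lt_trans hxpos hy.1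
      rw [hnorm y hy0]
      have h1 := hK2 x y hxpos hy0
      have hgb : |g y| ≤ ε' := hgsmall y ⟨hy0, hy.2⟩
      have hknn : 0 ≤ (x / y) ^ (ν + 1) * Real.exp (-(x / y)) / y :=
        div_nonneg (mul_nonneg (Real.rpow_nonneg (div_pos hxpos hy0).le _)
          (Real.exp_pos _).le) hy0.le
      calc ((x / y) ^ (ν + 1) * Real.exp (-(x / y)) / y) * |g y|
          ≤ (C₂ * (x ^ ((1:ℝ)/2) * y ^ (-(3:ℝ)/2))) * ε' :=
            mul_le_mul h1 hgb (abs_nonneg _)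
              (mul_nonneg hC₂0.le (mul_nonneg (Real.rpow_nonneg hxpos.le _)
                (Real.rpow_nonneg hy0.le _)))
        _ = (ε' * C₂ * x ^ ((1:ℝ)/2)) * y ^ (-(3:ℝ)/2) := by ring
    have hval : (∫ y in Set.Ioc x δ, y ^ (-(3:ℝ)/2)) ≤ 2 * x ^ (-(1:ℝ)/2) := by
      rw [← intervalIntegral.integral_of_le hxδ.le]
      rw [integral_rpow (Or.inr ⟨by norm_num, by
        rw [Set.uIcc_of_le hxδ.le]
        intro h
        exact absurd h.1 (not_le.mpr hxpos)⟩)]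
      have hδr2 : (0:ℝ) < δ ^ (-(3:ℝ)/2 + 1) := Real.rpow_pos_of_pos hδpos _
      have : δ ^ (-(3:ℝ)/2 + 1) - x ^ (-(3:ℝ)/2 + 1) ≥ - x ^ (-(3:ℝ)/2 + 1) := by linarith
      have hxr : x ^ (-(3:ℝ)/2 + 1) = x ^ (-(1:ℝ)/2) := by norm_num
      rw [show (-(3:ℝ)/2 + 1) = -(1:ℝ)/2 by norm_num,
        div_le_iff_of_neg (by norm_num : -(1:ℝ)/2 < 0)]
      have hxr2 : (0:ℝ) < x ^ (-(1:ℝ)/2) := Real.rpow_pos_of_pos hxpos _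
      nlinarith [Real.rpow_pos_of_pos hδpos (-(1:ℝ)/2)]
    rw [integral_const_mul] at hmono
    have hxx : x ^ ((1:ℝ)/2) * x ^ (-(1:ℝ)/2) = 1 := by
      rw [← Real.rpow_add hxpos]
      norm_num
    have hc : (0:ℝ) ≤ ε' * C₂ * x ^ ((1:ℝ)/2) := by positivity
    calc (∫ y in Set.Ioc x δ, ‖F y‖)
        ≤ (ε' * C₂ * x ^ ((1:ℝ)/2)) * ∫ y in Set.Ioc x δ, y ^ (-(3:ℝ)/2) := hmono
      _ ≤ (ε' * C₂ * x ^ ((1:ℝ)/2)) * (2 * x ^ (-(1:ℝ)/2)) :=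
          mul_le_mul_of_nonneg_left hval hc
      _ = 2 * ε' * C₂ * (x ^ ((1:ℝ)/2) * x ^ (-(1:ℝ)/2)) := by ring
      _ = 2 * ε' * C₂ := by rw [hxx]; ring
  have T3 : (∫ y in Set.Ioi δ, ‖F y‖) ≤ (C₂ * δ ^ (-(3:ℝ)/2) * J) * x ^ ((1:ℝ)/2) := by
    have hIb : IntegrableOn (fun y : ℝ => (C₂ * x ^ ((1:ℝ)/2) * δ ^ (-(3:ℝ)/2)) * |g y|)
        (Set.Ioi δ) := (hgIntδ.abs).const_mul _
    have hmono := setIntegral_mono_on hIntN2 hIb measurableSet_Ioi hbd2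
    rw [integral_const_mul] at hmono
    calc (∫ y in Set.Ioi δ, ‖F y‖)
        ≤ (C₂ * x ^ ((1:ℝ)/2) * δ ^ (-(3:ℝ)/2)) * J := hmono
      _ = (C₂ * δ ^ (-(3:ℝ)/2) * J) * x ^ ((1:ℝ)/2) := by ring
  -- assemble
  have hEq1 : (∫ y in Set.Ioi (0:ℝ), ‖F y‖)
      = (∫ y in Set.Ioc (0:ℝ) δ, ‖F y‖) + ∫ y in Set.Ioi δ, ‖F y‖ := by
    rw [← hsplit1, setIntegral_union hdisj1 measurableSet_Ioi hIntN1 hIntN2]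
  have hEq2 : (∫ y in Set.Ioc (0:ℝ) δ, ‖F y‖)
      = (∫ y in Set.Ioc (0:ℝ) x, ‖F y‖) + ∫ y in Set.Ioc x δ, ‖F y‖ := by
    rw [← hsplit2, setIntegral_union hdisj2 measurableSet_Ioc
      (hIntN1.mono_set (Set.Ioc_subset_Ioc le_rfl hxδ.le))
      (hIntN1.mono_set (Set.Ioc_subset_Ioc hxpos.le le_rfl))]
  -- final numeric estimate
  have hx12 : x ^ ((1:ℝ)/2) < ε / (3 * E) := by
    have h := Real.rpow_lt_rpow hxpos.le hxE (by norm_num : (0:ℝ) < 1/2)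
    have heq : (((ε / (3 * E)) ^ 2) : ℝ) ^ ((1:ℝ)/2) = ε / (3 * E) := by
      rw [← Real.rpow_natCast (ε / (3 * E)) 2, ← Real.rpow_mul (by positivity)]
      norm_num
    rwa [heq] at h
  have hT3' : (C₂ * δ ^ (-(3:ℝ)/2) * J) * x ^ ((1:ℝ)/2) < ε / 3 := by
    have ha : 0 ≤ C₂ * δ ^ (-(3:ℝ)/2) * J := by positivity
    have hb : C₂ * δ ^ (-(3:ℝ)/2) * J < E := by
      rw [hEdef]
      nlinarith
    have hx12nn : 0 ≤ x ^ ((1:ℝ)/2) := Real.rpow_nonneg hxpos.le _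
    calc (C₂ * δ ^ (-(3:ℝ)/2) * J) * x ^ ((1:ℝ)/2)
        ≤ E * x ^ ((1:ℝ)/2) := mul_le_mul_of_nonneg_right hb.le hx12nn
      _ < E * (ε / (3 * E)) := by
          exact mul_lt_mul_of_pos_left hx12 hE0
      _ = ε / 3 := by field_simp [hE0.ne']
  have hT12 : ε' * C₁ / 2 + 2 * ε' * C₂ ≤ 2 * ε / 3 := by
    have : ε' * (C₁ + 2 * C₂ + 1) = ε / 3 := by
      have h3 : C₁ + 2 * C₂ + 1 ≠ 0 := by positivity
      rw [hε'def]; field_simp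
    nlinarith [hε'.le]
  calc |∫ y in Set.Ioi (0:ℝ), F y|
      ≤ ∫ y in Set.Ioi (0:ℝ), ‖F y‖ := by
        rw [← Real.norm_eq_abs]; exact norm_integral_le_integral_norm _
    _ = (∫ y in Set.Ioc (0:ℝ) x, ‖F y‖) + (∫ y in Set.Ioc x δ, ‖F y‖)
        + ∫ y in Set.Ioi δ, ‖F y‖ := by rw [hEq1, hEq2]
    _ < ε := by
        have := T1; have := T2; have := T3
        linarith [hT3', hT12, T1, T2, T3]
end

section
/- Let n ≥ 1, let w₁,…,w_n : ℝ → ℝ satisfy ∫_ℝ |x|^{κ−1}·|w_b(x)| dx < ∞ for all κ ∈ [1,n] and b = 1,…,n, let C ∈ ℝ, and set p(a) = C·Δ_n(a)·det[w_b(a_c)]_{b,c=1,…,n} for a ∈ ℝ^n. Then for every s ∈ ℝ^n with pairwise distinct entries: (∏_{j=0}^{n−1} j!) · ∫_{ℝ^n} p(a) · det[exp(i·a_b·s_c)]_{b,c=1,…,n} / ( Δ_n(i·s) · Δ_n(a) ) da = C·(∏_{j=1}^n j!) · det[ ŵ_b(s_c) ]_{b,c=1,…,n} / Δ_n(i·s),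 where ŵ_b(s) = ∫_ℝ w_b(x)·e^{i·x·s} dx is the Fourier transform and Δ_n(i·s) is the Vandermonde determinant of the complex vector (i·s₁,…,i·s_n). -/
open MeasureTheory Finset

/-- The complex Vandermonde determinant. -/
noncomputable def vdmC {m : ℕ} (a : Fin m → ℂ) : ℂ :=
  ∏ p ∈ Finset.univ.filter (fun p : Fin m × Fin m => p.1 < p.2), (a p.2 - a p.1)

/-- The Fourier transform `ŵ(s) = ∫_ℝ w(x)·e^{i·x·s} dx`. -/
noncomputable def fourierT (w : ℝ → ℝ) (s : ℝ) : ℂ :=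
  ∫ x : ℝ, (w x : ℂ) * Complex.exp (Complex.I * x * s)

namespace FTPEAux
open Complex Set Matrix


local notation "ε" σ => ((Equiv.Perm.sign σ : ℤ) : ℂ)

lemma det_expand {n : ℕ} (M : Matrix (Fin n) (Fin n) ℂ) :
    M.det = ∑ σ : Equiv.Perm (Fin n), ((Equiv.Perm.sign σ : ℤ) : ℂ) * ∏ i, M (σ i) i := by
  rw [Matrix.det_apply]
  refine Finset.sum_congr rfl fun σ _ => ?_
  rw [Units.smul_def, zsmul_eq_mul]

theorem andreief {n : ℕ} (f g : Fin n → ℝ → ℂ)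
    (hfg : ∀ b c, Integrable (fun x => f b x * g c x)) :
    ∫ a : Fin n → ℝ,
      (Matrix.det (Matrix.of fun b c : Fin n => f b (a c))) *
      (Matrix.det (Matrix.of fun b c : Fin n => g b (a c)))
    = (n.factorial : ℂ) *
        Matrix.det (Matrix.of fun b c : Fin n => ∫ x : ℝ, f b x * g c x) := by
  have hterm : ∀ σ τ : Equiv.Perm (Fin n),
      Integrable (fun a : Fin n → ℝ => ∏ c, (f (σ c) (a c) * g (τ c) (a c))) := by
    intro σ τ
    exact Integrable.fintype_prod (f := fun c x => f (σ c) x * g (τ c) x)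
      (fun c => hfg (σ c) (τ c))
  calc
    ∫ a : Fin n → ℝ,
        (Matrix.det (Matrix.of fun b c : Fin n => f b (a c))) *
        (Matrix.det (Matrix.of fun b c : Fin n => g b (a c)))
      = ∫ a : Fin n → ℝ, ∑ σ : Equiv.Perm (Fin n), ∑ τ : Equiv.Perm (Fin n),
          ((ε σ) * (ε τ)) * ∏ c, (f (σ c) (a c) * g (τ c) (a c)) := by
        congr 1; funext a
        rw [det_expand, det_expand, Finset.sum_mul_sum]
        refine Finset.sum_congr rfl fun σ _ => Finset.sum_congr rfl fun τ _ => ?_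
        rw [Finset.prod_mul_distrib]
        simp only [Matrix.of_apply]
        ring
    _ = ∑ σ : Equiv.Perm (Fin n), ∑ τ : Equiv.Perm (Fin n),
          ((ε σ) * (ε τ)) * ∏ c, ∫ x : ℝ, f (σ c) x * g (τ c) x := by
        rw [MeasureTheory.integral_finset_sum]
        · refine Finset.sum_congr rfl fun σ _ => ?_
          rw [MeasureTheory.integral_finset_sum]
          · refine Finset.sum_congr rfl fun τ _ => ?_
            rw [MeasureTheory.integral_const_mul]
            congr 1
            exact MeasureTheory.integral_fintype_prod_eq_prod
              (fun c x => f (σ c) x * g (τ c) x)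
          · exact fun τ _ => ((hterm σ τ).const_mul _)
        · exact fun σ _ => integrable_finset_sum _ (fun τ _ => ((hterm σ τ).const_mul _))
    _ = ∑ σ : Equiv.Perm (Fin n),
          Matrix.det (Matrix.of fun b c : Fin n => ∫ x : ℝ, f b x * g c x) := by
        refine Finset.sum_congr rfl fun σ _ => ?_
        rw [← Matrix.det_transpose, det_expand]
        rw [← Equiv.sum_comp (Equiv.mulRight σ)]
        refine Finset.sum_congr rfl fun π _ => ?_
        simp only [Equiv.coe_mulRight, Equiv.Perm.mul_apply, Matrix.transpose_apply,
          Matrix.of_apply, _root_.map_mul, Int.cast_mul, Units.val_mul]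
        rw [Equiv.prod_comp σ (fun d => ∫ x : ℝ, f d x * g (π d) x)]
        have hsq : ((Equiv.Perm.sign σ : ℤ) : ℂ) * ((Equiv.Perm.sign σ : ℤ) : ℂ) = 1 := by
          rw [← Int.cast_mul, ← Units.val_mul, Int.units_mul_self]; norm_num
        linear_combination (((Equiv.Perm.sign π : ℤ) : ℂ) * ∏ d, ∫ x : ℝ, f d x * g (π d) x) * hsq
    _ = (n.factorial : ℂ) *
        Matrix.det (Matrix.of fun b c : Fin n => ∫ x : ℝ, f b x * g c x) := by
        rw [Finset.sum_const, Finset.card_univ, Fintype.card_perm, nsmul_eq_mul, Fintype.card_fin]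


lemma abs_exp_I_mul (x t : ℝ) : ‖Complex.exp (Complex.I * x * t)‖ = 1 := by
  rw [Complex.norm_exp]
  simp [Complex.mul_re]

lemma continuous_exp_I_mul (t : ℝ) :
    Continuous fun x : ℝ => Complex.exp (Complex.I * x * t) := by
  fun_prop

lemma integrable_w_exp {w : ℝ → ℝ} (habs : Integrable (fun x => |w x|))
    (hm : AEStronglyMeasurable (fun x => (w x : ℂ)) volume) (t : ℝ) :
    Integrable (fun x : ℝ => (w x : ℂ) * Complex.exp (Complex.I * x * t)) := by
  refine Integrable.mono' habs (hm.mul ((continuous_exp_I_mul t).aestronglyMeasurable)) ?_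
  filter_upwards with x
  rw [norm_mul, abs_exp_I_mul]
  simp

lemma vdmC_ne_zero {n : ℕ} (s : Fin n → ℝ) (hs : Function.Injective s) :
    vdmC (fun j => Complex.I * (s j)) ≠ 0 := by
  unfold vdmC
  rw [Finset.prod_ne_zero_iff]
  intro p hp
  rw [Finset.mem_filter] at hp
  rw [sub_ne_zero]
  intro h
  have h2 : ((s p.2 : ℂ)) = (s p.1 : ℂ) := mul_left_cancel₀ Complex.I_ne_zero h
  have : s p.2 = s p.1 := by exact_mod_cast h2
  exact absurd (hs this) (ne_of_gt hp.2)

lemma vdm_zero_det_zero {n : ℕ} (w : Fin n → ℝ → ℝ) (a : Fin n → ℝ) (hv : vdm a = 0) :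
    Matrix.det (Matrix.of fun b c : Fin n => w b (a c)) = 0 := by
  unfold vdm at hv
  rw [Finset.prod_eq_zero_iff] at hv
  obtain ⟨p, hp, hz⟩ := hv
  rw [Finset.mem_filter] at hp
  have hne : p.1 ≠ p.2 := ne_of_lt hp.2
  have heq : a p.1 = a p.2 := by linarith [sub_eq_zero.mp hz]
  exact Matrix.det_zero_of_column_eq hne (fun k => by simp [heq])

lemma fact_prod (n : ℕ) :
    (∏ j ∈ Finset.range n, (j.factorial : ℂ)) * (n.factorial : ℂ)
      = ∏ j ∈ Finset.Icc 1 n, (j.factorial : ℂ) := by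
  have h1 : Finset.range (n+1) = insert 0 (Finset.Icc 1 n) := by
    ext x; simp [Nat.lt_succ_iff]; omega
  have h2 := Finset.prod_range_succ (fun j => (j.factorial : ℂ)) n
  rw [h1, Finset.prod_insert (by simp)] at h2
  simpa [Nat.factorial] using h2.symm


theorem main_good (n : ℕ) (w : Fin n → ℝ → ℝ)
    (habs : ∀ b, Integrable (fun x => |w b x|))
    (hm : ∀ b, AEStronglyMeasurable (fun x => (w b x : ℂ)) volume)
    (C : ℝ) (p : (Fin n → ℝ) → ℝ)
    (hp : ∀ a : Fin n → ℝ,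
      p a = C * vdm a * Matrix.det (Matrix.of fun b c : Fin n => w b (a c)))
    (s : Fin n → ℝ) (hs : Function.Injective s) :
    (∏ j ∈ Finset.range n, (j.factorial : ℂ)) *
      ∫ a : Fin n → ℝ,
        (p a : ℂ) *
          Matrix.det (Matrix.of fun b c : Fin n => Complex.exp (Complex.I * (a b) * (s c))) /
          (vdmC (fun j => Complex.I * (s j)) * (vdm a : ℂ))
    = (C : ℂ) * (∏ j ∈ Finset.Icc 1 n, (j.factorial : ℂ)) *
        Matrix.det (Matrix.of fun b c : Fin n => fourierT (w b) (s c)) /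
        vdmC (fun j => Complex.I * (s j)) := by
  have hD := vdmC_ne_zero s hs
  set D := vdmC (fun j : Fin n => Complex.I * (s j)) with hDdef
  have key : (fun a : Fin n → ℝ => (p a : ℂ) *
        Matrix.det (Matrix.of fun b c : Fin n => Complex.exp (Complex.I * (a b) * (s c))) /
          (D * (vdm a : ℂ)))
      = fun a : Fin n → ℝ => (C : ℂ) / D *
          ((Matrix.det (Matrix.of fun b c : Fin n => ((w b (a c) : ℂ)))) *
           (Matrix.det (Matrix.of fun b c : Fin n =>
              Complex.exp (Complex.I * (a c) * (s b))))) := by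
    funext a
    have hdetmap : ((Matrix.det (Matrix.of fun b c : Fin n => w b (a c)) : ℝ) : ℂ)
        = Matrix.det (Matrix.of fun b c : Fin n => ((w b (a c) : ℂ))) := by
      have := RingHom.map_det Complex.ofRealHom (Matrix.of fun b c : Fin n => w b (a c))
      exact this
    have hdetE : Matrix.det (Matrix.of fun b c : Fin n => Complex.exp (Complex.I * (a b) * (s c)))
        = Matrix.det (Matrix.of fun b c : Fin n => Complex.exp (Complex.I * (a c) * (s b))) := by
      rw [← Matrix.det_transpose (Matrix.of fun b c : Fin n =>
        Complex.exp (Complex.I * (a c) * (s b)))]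
      rfl
    rw [hp a, ← hdetE, ← hdetmap]
    by_cases hv : vdm a = 0
    · rw [vdm_zero_det_zero w a hv, hv]
      push_cast
      ring
    · have hvC : ((vdm a : ℝ) : ℂ) ≠ 0 := by exact_mod_cast hv
      push_cast
      field_simp
  rw [key, MeasureTheory.integral_const_mul,
    andreief (fun b x => ((w b x : ℂ))) (fun b x => Complex.exp (Complex.I * x * s b))
      (fun b c => integrable_w_exp (habs b) (hm b) (s c))]
  have hFT : (Matrix.of fun b c : Fin n => ∫ x : ℝ, ((w b x : ℂ)) * Complex.exp (Complex.I * x * s c))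
      = Matrix.of fun b c : Fin n => fourierT (w b) (s c) := rfl
  rw [hFT, ← fact_prod n]
  field_simp



lemma analytic_exp_sum {k : ℕ} (t : Fin k → ℝ) (γ : Fin k → ℂ) :
    AnalyticOnNhd ℝ (fun x : ℝ => ∑ c, γ c * Complex.exp (Complex.I * x * t c)) Set.univ := by
  rw [show (fun x : ℝ => ∑ c, γ c * Complex.exp (Complex.I * x * t c))
      = ∑ c, fun x : ℝ => γ c * Complex.exp (Complex.I * x * t c) by ext; simp]
  apply Finset.analyticOnNhd_sum
  intro c _
  have h1 : AnalyticOnNhd ℝ (fun x : ℝ => ((x : ℂ))) Set.univ :=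
    Complex.ofRealCLM.analyticOnNhd _
  have h2 : AnalyticOnNhd ℝ (fun x : ℝ => Complex.I * x * t c) Set.univ :=
    (analyticOnNhd_const.mul h1).mul analyticOnNhd_const
  have h3 : AnalyticOnNhd ℝ (fun x : ℝ => Complex.exp (Complex.I * x * t c)) Set.univ :=
    analyticOnNhd_cexp.restrictScalars.comp h2 (mapsTo_univ _ _)
  exact analyticOnNhd_const.mul h3

lemma hasDerivAt_exp_term (γc : ℂ) (tc : ℝ) (x : ℝ) :
    HasDerivAt (fun x : ℝ => γc * Complex.exp (Complex.I * x * tc))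
      (γc * (Complex.I * tc) * Complex.exp (Complex.I * x * tc)) x := by
  have h1 : HasDerivAt (fun x : ℝ => ((x : ℂ))) 1 x := by
    simpa using (hasDerivAt_id x).ofReal_comp
  have h2 : HasDerivAt (fun x : ℝ => Complex.I * x * tc) (Complex.I * 1 * tc) x :=
    (h1.const_mul Complex.I).mul_const _
  have h3 := (h2.cexp).const_mul γc
  exact h3.congr_deriv (by ring)

lemma exp_poly_zero_null {k : ℕ} (t : Fin k → ℝ) (ht : Function.Injective t)
    (γ : Fin k → ℂ) (c₀ : Fin k) (hγ : γ c₀ ≠ 0) :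
    volume {x : ℝ | ∑ c, γ c * Complex.exp (Complex.I * x * t c) = 0} = 0 := by
  classical
  set f := fun x : ℝ => ∑ c, γ c * Complex.exp (Complex.I * x * t c) with hf
  have hcont : Continuous f := by
    apply continuous_finset_sum
    intro c _
    fun_prop
  have hne : ∃ x : ℝ, f x ≠ 0 := by
    by_contra h
    push_neg at h
    have hF : ∀ mo : ℕ, ∀ x : ℝ,
        ∑ c, γ c * (Complex.I * t c) ^ mo * Complex.exp (Complex.I * x * t c) = 0 := by
      intro mo
      induction mo with
      | zero => intro x; simpa using h x
      | succ mo ih =>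
        intro x
        have hd : HasDerivAt
            (fun x : ℝ => ∑ c, γ c * (Complex.I * t c) ^ mo * Complex.exp (Complex.I * x * t c))
            (∑ c, γ c * (Complex.I * t c) ^ (mo+1) * Complex.exp (Complex.I * x * t c)) x := by
          apply HasDerivAt.fun_sum
          intro c _
          have := hasDerivAt_exp_term (γ c * (Complex.I * t c) ^ mo) (t c) x
          exact this.congr_deriv (by ring)
        have h0 : (fun x : ℝ => ∑ c, γ c * (Complex.I * t c) ^ mo *
            Complex.exp (Complex.I * x * t c)) = fun _ => (0:ℂ) := funext ih
        rw [h0] at hd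
        exact ((hasDerivAt_const x (0:ℂ)).unique hd).symm
    have hvdm : ∀ mo : Fin k,
        (Matrix.of fun (mo c : Fin k) => (Complex.I * t c) ^ (mo : ℕ)).mulVec γ mo = 0 := by
      intro mo
      have := hF mo 0
      simp only [Complex.ofReal_zero, mul_zero, zero_mul, Complex.exp_zero, mul_one] at this
      simp only [Matrix.mulVec, dotProduct, Matrix.of_apply]
      rw [← this]
      refine Finset.sum_congr rfl fun c _ => by ring
    have hdet : (Matrix.of fun (mo c : Fin k) => (Complex.I * t c) ^ (mo : ℕ)).det ≠ 0 := by
      have : (Matrix.of fun (mo c : Fin k) => (Complex.I * t c) ^ (mo : ℕ))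
          = (Matrix.vandermonde (fun c => Complex.I * t c)).transpose := by
        ext i j; simp [Matrix.vandermonde]
      rw [this, Matrix.det_transpose, Matrix.det_vandermonde]
      apply Finset.prod_ne_zero_iff.mpr
      intro p _
      apply Finset.prod_ne_zero_iff.mpr
      intro j hj
      rw [Finset.mem_Ioi] at hj
      rw [sub_ne_zero]
      intro hh
      have h2 : ((t j : ℂ)) = ((t p : ℂ)) := mul_left_cancel₀ Complex.I_ne_zero hh
      have h3 : t j = t p := by exact_mod_cast h2
      exact absurd (ht h3) (ne_of_gt hj)
    have := Matrix.eq_zero_of_mulVec_eq_zero hdet (funext hvdm)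
    exact hγ (by rw [this]; rfl)
  obtain ⟨x₁, hx₁⟩ := hne
  set Z := {x : ℝ | f x = 0} with hZ
  by_contra hvol
  have hcover : Z ⊆ ⋃ R : ℕ, (Z ∩ Set.Icc (-(R:ℝ)) R) := by
    intro x hx
    obtain ⟨R, hR⟩ := exists_nat_ge |x|
    have := abs_le.mp hR
    exact Set.mem_iUnion.mpr ⟨R, hx, this.1, this.2⟩
  have hex : ∃ R : ℕ, volume (Z ∩ Set.Icc (-(R:ℝ)) R) ≠ 0 := by
    by_contra hall
    push_neg at hall
    exact hvol (measure_mono_null hcover (measure_iUnion_null hall))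
  obtain ⟨R, hR⟩ := hex
  have hinf : (Z ∩ Set.Icc (-(R:ℝ)) R).Infinite := by
    intro hfin
    exact hR (hfin.measure_zero volume)
  obtain ⟨x₀, _, hacc⟩ := hinf.exists_accPt_of_subset_isCompact isCompact_Icc
    Set.inter_subset_right
  have hfreq : ∃ᶠ y in nhdsWithin x₀ {x₀}ᶜ, f y = 0 := by
    rw [frequently_nhdsWithin_iff]
    have := accPt_iff_frequently.mp hacc
    exact this.mono fun y hy => ⟨hy.2.1, hy.1⟩
  have := (analytic_exp_sum t γ).eqOn_zero_of_preconnected_of_frequently_eq_zero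
    isPreconnected_univ (Set.mem_univ x₀) hfreq
  exact hx₁ (this (Set.mem_univ x₁))





lemma cons_slice_null {k : ℕ} {S : Set (Fin (k+1) → ℝ)} (hS : MeasurableSet S) :
    volume S = 0 ↔ ∀ᵐ z : Fin k → ℝ, ∀ᵐ x : ℝ, Fin.cons x z ∉ S := by
  have hmp := volume_preserving_piFinSuccAbove (fun _ : Fin (k+1) => ℝ) 0
  set e := MeasurableEquiv.piFinSuccAbove (fun _ : Fin (k+1) => ℝ) 0 with he
  have hT : MeasurableSet (e.symm ⁻¹' S) := e.symm.measurable hS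
  have h1 : volume S = volume (e.symm ⁻¹' S) := by
    rw [← hmp.measure_preimage hT.nullMeasurableSet]
    congr 1
    ext a
    simp
  have h2 : volume (e.symm ⁻¹' S)
      = ∫⁻ z : Fin k → ℝ, volume {x : ℝ | Fin.cons x z ∈ S} := by
    rw [Measure.volume_eq_prod, Measure.prod_apply_symm hT]
    congr 1
    funext z
    congr 1
    ext x
    simp [e, MeasurableEquiv.piFinSuccAbove_symm_apply, Fin.insertNth_zero', Fin.consEquiv]
  have hmeas : Measurable fun z : Fin k → ℝ => volume {x : ℝ | Fin.cons x z ∈ S} := by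
    have := measurable_measure_prodMk_right (μ := (volume : Measure ℝ)) hT
    convert this using 2 with z
    congr 1
    ext x
    simp [e, MeasurableEquiv.piFinSuccAbove_symm_apply, Fin.insertNth_zero', Fin.consEquiv]
  rw [h1, h2]
  rw [lintegral_eq_zero_iff hmeas]
  constructor
  · intro h
    filter_upwards [h] with z hz
    rw [ae_iff]
    simpa using hz
  · intro h
    filter_upwards [h] with z hz
    rw [ae_iff] at hz
    simpa using hz

lemma cons_slice_null_of_null {k : ℕ} {S : Set (Fin (k+1) → ℝ)} (h : volume S = 0) :
    ∀ᵐ z : Fin k → ℝ, ∀ᵐ x : ℝ, Fin.cons x z ∉ S := by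
  obtain ⟨N, hSN, hNm, hN0⟩ := exists_measurable_superset_of_null h
  filter_upwards [(cons_slice_null hNm).mp hN0] with z hz
  filter_upwards [hz] with x hx
  exact fun hmem => hx (hSN hmem)

lemma proj_succAbove_null {k : ℕ} (c : Fin (k+1)) {N : Set (Fin k → ℝ)}
    (hNm : MeasurableSet N) (hN : volume N = 0) :
    volume {a : Fin (k+1) → ℝ | (fun j => a (c.succAbove j)) ∈ N} = 0 := by
  have hmp := volume_preserving_piFinSuccAbove (fun _ : Fin (k+1) => ℝ) c
  set e := MeasurableEquiv.piFinSuccAbove (fun _ : Fin (k+1) => ℝ) c with he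
  have hset : {a : Fin (k+1) → ℝ | (fun j => a (c.succAbove j)) ∈ N}
      = e ⁻¹' (Set.univ ×ˢ N) := by
    ext a
    simp only [Set.mem_preimage, Set.mem_prod, Set.mem_univ, true_and,
      MeasurableEquiv.piFinSuccAbove_apply, e]
    rfl
  rw [hset, hmp.measure_preimage (MeasurableSet.univ.prod hNm).nullMeasurableSet,
    Measure.volume_eq_prod, Measure.prod_prod, hN, mul_zero]

lemma measurable_cons_fst {k : ℕ} (z : Fin k → ℝ) :
    Measurable (fun x : ℝ => (Fin.cons x z : Fin (k+1) → ℝ)) := by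
  apply measurable_pi_lambda
  intro i
  refine Fin.cases ?_ ?_ i
  · simpa using measurable_id'
  · intro j
    simp only [Fin.cons_succ]
    exact measurable_const

lemma ae_slice_aesm {k : ℕ} {F : (Fin (k+1) → ℝ) → ℂ}
    (hF : AEStronglyMeasurable F volume) :
    ∀ᵐ z : Fin k → ℝ, AEStronglyMeasurable (fun x : ℝ => F (Fin.cons x z)) volume := by
  obtain ⟨g, hg, hfg⟩ := hF
  have h0 : volume {y | F y ≠ g y} = 0 := by
    have := ae_iff.mp hfg
    simpa using this
  filter_upwards [cons_slice_null_of_null h0] with z hz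
  refine ⟨fun x => g (Fin.cons x z), hg.comp_measurable (measurable_cons_fst z), ?_⟩
  filter_upwards [hz] with x hx
  simpa using not_not.mp (by simpa using hx)

lemma expdet_ae_ne_zero : ∀ (k : ℕ) (t : Fin k → ℝ), Function.Injective t →
    ∀ᵐ y : Fin k → ℝ,
      Matrix.det (Matrix.of fun i j : Fin k => Complex.exp (Complex.I * y i * t j)) ≠ 0 := by
  intro k
  induction k with
  | zero =>
    intro t ht
    filter_upwards with y
    simp [Matrix.det_fin_zero]
  | succ k ih =>
    intro t ht
    rw [ae_iff]
    have hSm : MeasurableSet {y : Fin (k+1) → ℝ |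
        ¬ Matrix.det (Matrix.of fun i j => Complex.exp (Complex.I * y i * t j)) ≠ 0} := by
      have hcont : Continuous fun y : Fin (k+1) → ℝ =>
          Matrix.det (Matrix.of fun i j => Complex.exp (Complex.I * y i * t j)) := by
        apply Continuous.matrix_det
        apply continuous_matrix
        intro i j
        simp only [Matrix.of_apply]
        fun_prop
      have : {y : Fin (k+1) → ℝ |
          ¬ Matrix.det (Matrix.of fun i j => Complex.exp (Complex.I * y i * t j)) ≠ 0}
          = (fun y : Fin (k+1) → ℝ =>
            Matrix.det (Matrix.of fun i j => Complex.exp (Complex.I * y i * t j))) ⁻¹' {0} := by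
        ext y; simp [not_not]
      rw [this]
      exact hcont.measurable (measurableSet_singleton (0:ℂ))
    rw [cons_slice_null hSm]
    filter_upwards [ih (t ∘ Fin.succAbove 0) (ht.comp Fin.succAbove_right_injective)] with z hz
    rw [ae_iff]
    have hset : {x : ℝ | ¬¬¬ Matrix.det (Matrix.of fun i j : Fin (k+1) =>
        Complex.exp (Complex.I * ((Fin.cons (α := fun _ => ℝ) x z i : ℝ)) * t j)) ≠ 0}
        = {x : ℝ | ∑ c : Fin (k+1), (((-1:ℂ))^(c:ℕ) * Matrix.det (Matrix.of fun i j : Fin k =>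
            Complex.exp (Complex.I * z i * t (c.succAbove j)))) *
            Complex.exp (Complex.I * x * t c) = 0} := by
      ext x
      simp only [Set.mem_setOf_eq, not_not]
      rw [Matrix.det_succ_row_zero]
      have hsub : ∀ c : Fin (k+1),
          ((Matrix.of fun i j : Fin (k+1) =>
            Complex.exp (Complex.I * ((Fin.cons (α := fun _ => ℝ) x z i : ℝ)) * t j)).submatrix Fin.succ c.succAbove)
          = (Matrix.of fun i j : Fin k =>
              Complex.exp (Complex.I * z i * t (c.succAbove j))) := by
        intro c
        ext i j
        simp [Fin.cons_succ]
      have hsum : ∀ c : Fin (k+1), (-1:ℂ) ^ (c:ℕ) *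
            (Matrix.of fun i j : Fin (k+1) =>
              Complex.exp (Complex.I * ((Fin.cons (α := fun _ => ℝ) x z i : ℝ)) * t j)) 0 c *
            ((Matrix.of fun i j : Fin (k+1) =>
              Complex.exp (Complex.I * ((Fin.cons (α := fun _ => ℝ) x z i : ℝ)) * t j)).submatrix Fin.succ c.succAbove).det
          = ((-1:ℂ))^(c:ℕ) * Matrix.det (Matrix.of fun i j : Fin k =>
              Complex.exp (Complex.I * z i * t (c.succAbove j))) *
            Complex.exp (Complex.I * x * t c) := by
        intro c
        rw [hsub c]
        simp [Fin.cons_zero]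
        ring
      rw [Finset.sum_congr rfl fun c _ => hsum c]
    have hγ0 : (((-1:ℂ))^((0: Fin (k+1)):ℕ) * Matrix.det (Matrix.of fun i j : Fin k =>
        Complex.exp (Complex.I * z i * t ((0:Fin (k+1)).succAbove j)))) ≠ 0 := by
      simpa using hz
    have := exp_poly_zero_null t ht (fun c => ((-1:ℂ))^(c:ℕ) *
      Matrix.det (Matrix.of fun i j : Fin k =>
        Complex.exp (Complex.I * z i * t (c.succAbove j)))) 0 (by simpa using hγ0)
    rw [hset]
    exact this





section Hard

variable {m : ℕ} (w : Fin (m+1) → ℝ → ℝ) (s : Fin (m+1) → ℝ)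

/-- cofactor vector for the `w`-determinant, sliced along the first point -/
noncomputable def Avec (z : Fin m → ℝ) : Fin (m+1) → ℝ := fun b =>
  (-1:ℝ)^(b:ℕ) * Matrix.det (Matrix.of fun i j : Fin m => w (b.succAbove i) (z j))

/-- cofactor vector for the exponential determinant, sliced along the first point -/
noncomputable def Evec (z : Fin m → ℝ) : Fin (m+1) → ℂ := fun b =>
  (-1:ℂ)^(b:ℕ) * Matrix.det (Matrix.of fun i j : Fin m =>
    Complex.exp (Complex.I * z j * s (b.succAbove i)))

lemma rowdet_eq (z : Fin m → ℝ) (u : Fin (m+1) → ℝ) :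
    Matrix.det (Matrix.of (Fin.cons u (fun j b => w b (z j)))) = ∑ b, u b * Avec w z b := by
  rw [Matrix.det_succ_row_zero]
  refine Finset.sum_congr rfl fun b _ => ?_
  have hsub : ((Matrix.of (Fin.cons u (fun j b => w b (z j)))).submatrix Fin.succ b.succAbove)
      = (Matrix.of fun i j : Fin m => w (b.succAbove i) (z j))ᵀ := by
    ext i j
    simp [Fin.cons_succ]
  rw [hsub, Matrix.det_transpose]
  simp only [Matrix.of_apply, Fin.cons_zero, Avec]
  ring

lemma wdet_slice (z : Fin m → ℝ) (x : ℝ) :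
    Matrix.det (Matrix.of fun b c : Fin (m+1) => w b ((Fin.cons (α := fun _ => ℝ) x z c : ℝ)))
      = ∑ b, w b x * Avec w z b := by
  rw [← Matrix.det_transpose, ← rowdet_eq w z (fun b => w b x)]
  congr 1
  ext c b
  refine Fin.cases ?_ ?_ c
  · simp [Fin.cons_zero]
  · intro j
    simp [Fin.cons_succ]

lemma edet_slice (z : Fin m → ℝ) (x : ℝ) :
    Matrix.det (Matrix.of fun b c : Fin (m+1) =>
        Complex.exp (Complex.I * ((Fin.cons (α := fun _ => ℝ) x z c : ℝ)) * s b))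
      = ∑ b, Evec s z b * Complex.exp (Complex.I * x * s b) := by
  rw [Matrix.det_succ_column_zero]
  refine Finset.sum_congr rfl fun b _ => ?_
  have hsub : ((Matrix.of fun b c : Fin (m+1) =>
      Complex.exp (Complex.I * ((Fin.cons (α := fun _ => ℝ) x z c : ℝ)) * s b)).submatrix
        b.succAbove Fin.succ)
      = (Matrix.of fun i j : Fin m =>
          Complex.exp (Complex.I * z j * s (b.succAbove i))) := by
    ext i j
    simp [Fin.cons_succ]
  rw [hsub]
  simp only [Matrix.of_apply, Fin.cons_zero, Evec]
  ring

end Hard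



theorem hard {m : ℕ} (w : Fin (m+1) → ℝ → ℝ) (s : Fin (m+1) → ℝ)
    (hs : Function.Injective s)
    (hG : AEStronglyMeasurable (fun a : Fin (m+1) → ℝ =>
      ((Matrix.det (Matrix.of fun b c : Fin (m+1) => w b (a c)) : ℝ) : ℂ) *
      Matrix.det (Matrix.of fun b c : Fin (m+1) =>
        Complex.exp (Complex.I * (a c) * (s b)))) volume)
    (hdw : ¬ ((fun a : Fin (m+1) → ℝ =>
      Matrix.det (Matrix.of fun b c : Fin (m+1) => w b (a c))) =ᵐ[volume] 0)) :
    ∀ b, AEStronglyMeasurable (w b) volume := by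
  classical
  set V : Submodule ℝ (EuclideanSpace ℝ (Fin (m+1))) := {
    carrier := {v | AEStronglyMeasurable (fun x : ℝ => ∑ b, v b * w b x) volume}
    add_mem' := by
      intro u v hu hv
      refine (hu.add hv).congr ?_
      filter_upwards with x
      simp [add_mul, Finset.sum_add_distrib]
    zero_mem' := by
      refine (aestronglyMeasurable_const (b := (0:ℝ))).congr ?_
      filter_upwards with x
      simp
    smul_mem' := by
      intro c v hv
      refine (hv.const_mul c).congr ?_
      filter_upwards with x
      simp [Finset.mul_sum, mul_assoc] } with hV
  have hVmem : ∀ u : EuclideanSpace ℝ (Fin (m+1)), u ∈ V ↔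
      AEStronglyMeasurable (fun x : ℝ => ∑ b, u b * w b x) volume := fun u => Iff.rfl
  have hVtop : V = ⊤ := by
    by_contra hne
    have hbot : Vᗮ ≠ ⊥ := fun h => hne (Submodule.orthogonal_eq_bot_iff.mp h)
    obtain ⟨v, hvV, hv0⟩ := Submodule.exists_mem_ne_zero_of_ne_bot hbot
    -- Step A : a.e. z, the cofactor vector Avec z lies in V
    have hAmem : ∀ᵐ z : Fin m → ℝ,
        AEStronglyMeasurable (fun x : ℝ => ∑ b, Avec w z b * w b x) volume := by
      filter_upwards [ae_slice_aesm hG,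
        expdet_ae_ne_zero m (s ∘ Fin.succAbove 0) (hs.comp Fin.succAbove_right_injective)]
        with z hGz hEz
      set φ : ℝ → ℂ := fun x => ∑ b, Evec s z b * Complex.exp (Complex.I * x * s b) with hφ
      have hφcont : Continuous φ := by
        apply continuous_finset_sum
        intro b _
        fun_prop
      have hE0 : Evec s z 0 ≠ 0 := by
        simp only [Evec, pow_zero, one_mul, Fin.val_zero]
        have heq : (Matrix.of fun i j : Fin m =>
            Complex.exp (Complex.I * z j * s ((0 : Fin (m+1)).succAbove i)))
            = (Matrix.of fun i j : Fin m =>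
              Complex.exp (Complex.I * z i * (s ∘ Fin.succAbove 0) j)).transpose := by
          ext i j
          simp [Matrix.transpose_apply, Function.comp]
        rw [heq, Matrix.det_transpose]
        simpa using hEz
      have hφae : ∀ᵐ x : ℝ, φ x ≠ 0 := by
        have := exp_poly_zero_null s hs (Evec s z) 0 hE0
        rw [ae_iff]
        simpa [hφ] using this
      have hφinv : AEStronglyMeasurable (fun x : ℝ => (φ x)⁻¹) volume :=
        (hφcont.measurable.inv).aestronglyMeasurable
      have hq : AEStronglyMeasurable (fun x : ℝ =>
          (((Matrix.det (Matrix.of fun b c : Fin (m+1) =>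
              w b ((Fin.cons (α := fun _ => ℝ) x z c : ℝ))) : ℝ) : ℂ) *
            Matrix.det (Matrix.of fun b c : Fin (m+1) =>
              Complex.exp (Complex.I * ((Fin.cons (α := fun _ => ℝ) x z c : ℝ)) * s b))) * (φ x)⁻¹)
          volume := hGz.mul hφinv
      have h1 : (fun x : ℝ =>
          (((Matrix.det (Matrix.of fun b c : Fin (m+1) =>
              w b ((Fin.cons (α := fun _ => ℝ) x z c : ℝ))) : ℝ) : ℂ) *
            Matrix.det (Matrix.of fun b c : Fin (m+1) =>
              Complex.exp (Complex.I * ((Fin.cons (α := fun _ => ℝ) x z c : ℝ)) * s b))) * (φ x)⁻¹)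
          =ᵐ[volume] (fun x : ℝ => ((∑ b, w b x * Avec w z b : ℝ) : ℂ)) := by
        filter_upwards [hφae] with x hx
        rw [wdet_slice, edet_slice]
        rw [mul_inv_cancel_right₀ hx]
      have h2 := hq.congr h1
      have h3 : AEStronglyMeasurable (fun x : ℝ => ∑ b, w b x * Avec w z b) volume := by
        have := Complex.continuous_re.comp_aestronglyMeasurable h2
        refine this.congr ?_
        filter_upwards with x
        simp
      refine h3.congr ?_
      filter_upwards with x
      exact Finset.sum_congr rfl fun b _ => mul_comm _ _
    -- Step B : a.e. z, v ⬝ Avec z = 0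
    have hper : ∀ᵐ z : Fin m → ℝ, ∑ b, v b * Avec w z b = 0 := by
      filter_upwards [hAmem] with z hz
      have hmem : (WithLp.toLp 2 (Avec w z : Fin (m+1) → ℝ) : EuclideanSpace ℝ (Fin (m+1))) ∈ V :=
        (hVmem _).mpr hz
      have := (Submodule.mem_orthogonal V v).mp hvV _ hmem
      rw [← this]
      rw [PiLp.inner_apply]
      exact Finset.sum_congr rfl fun b _ => by
        simp [RCLike.inner_apply, conj_trivial, mul_comm]
    -- Step C : pick a point astar
    obtain ⟨N, hNsup, hNm, hN0⟩ := exists_measurable_superset_of_null (ae_iff.mp hper)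
    have hproj : volume (⋃ c : Fin (m+1),
        {a : Fin (m+1) → ℝ | (fun j => a (c.succAbove j)) ∈ N}) = 0 :=
      measure_iUnion_null fun c => proj_succAbove_null c hNm hN0
    have hUne : ¬ volume {a : Fin (m+1) → ℝ |
        Matrix.det (Matrix.of fun b c : Fin (m+1) => w b (a c)) ≠ 0} = 0 := by
      intro h
      apply hdw
      apply ae_iff.mpr
      simpa using h
    have hex : ∃ a : Fin (m+1) → ℝ,
        Matrix.det (Matrix.of fun b c : Fin (m+1) => w b (a c)) ≠ 0 ∧
        ∀ c : Fin (m+1), (fun j => a (c.succAbove j)) ∉ N := by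
      by_contra hall
      push_neg at hall
      apply hUne
      apply measure_mono_null _ hproj
      intro a ha
      simp only [Set.mem_setOf_eq] at ha
      obtain ⟨c, hc⟩ := hall a ha
      exact Set.mem_iUnion.mpr ⟨c, hc⟩
    obtain ⟨astar, hdet, hNa⟩ := hex
    set M : Matrix (Fin (m+1)) (Fin (m+1)) ℝ := Matrix.of fun b c => w b (astar c) with hM
    set r : Fin (m+1) → ℝ := (M⁻¹).mulVec v with hr
    have hMr : M.mulVec r = v := by
      rw [hr, Matrix.mulVec_mulVec, Matrix.mul_nonsing_inv _ (isUnit_iff_ne_zero.mpr hdet), Matrix.one_mulVec]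
    have hrc : ∀ c : Fin (m+1), r c = 0 := by
      intro c
      set tail := fun (j : Fin m) (b : Fin (m+1)) => w b (astar (c.succAbove j)) with htail
      have hzc : Matrix.det (Matrix.of (Fin.cons (v : Fin (m+1) → ℝ) tail)) = 0 := by
        rw [rowdet_eq]
        by_contra hne0
        exact hNa c (hNsup hne0)
      have hv_eq : (v : Fin (m+1) → ℝ)
          = ∑ c' : Fin (m+1), r c' • (fun b => w b (astar c')) := by
        funext b
        rw [← hMr]
        simp only [Matrix.mulVec, dotProduct, hM, Matrix.of_apply,
          Finset.sum_apply, Pi.smul_apply, smul_eq_mul]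
        exact Finset.sum_congr rfl fun c' _ => mul_comm _ _
      have hdetRA : ∀ X : Fin (m+1) → Fin (m+1) → ℝ,
          Matrix.det (Matrix.of X) = Matrix.detRowAlternating X := fun _ => rfl
      have hexp : Matrix.det (Matrix.of (Fin.cons (v : Fin (m+1) → ℝ) tail))
          = ∑ c' : Fin (m+1), r c' *
            Matrix.det (Matrix.of (Fin.cons (fun b => w b (astar c')) tail)) := by
        rw [hdetRA]
        calc Matrix.detRowAlternating (Fin.cons (v : Fin (m+1) → ℝ) tail)
            = Matrix.detRowAlternating (Function.update (Fin.cons (v : Fin (m+1) → ℝ) tail) 0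
                (∑ c' : Fin (m+1), r c' • (fun b => w b (astar c')))) := by
              rw [Fin.update_cons_zero, ← hv_eq]
          _ = ∑ c' : Fin (m+1), Matrix.detRowAlternating
                (Function.update (Fin.cons (v : Fin (m+1) → ℝ) tail) 0
                  (r c' • (fun b => w b (astar c')))) := by
              exact (Matrix.detRowAlternating (R := ℝ) (n := Fin (m+1))).toMultilinearMap.map_update_sum
                Finset.univ 0 _ _
          _ = ∑ c' : Fin (m+1), r c' *
                Matrix.det (Matrix.of (Fin.cons (fun b => w b (astar c')) tail)) := by
              refine Finset.sum_congr rfl fun c' _ => ?_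
              rw [(Matrix.detRowAlternating (R := ℝ) (n := Fin (m+1))).map_update_smul,
                Fin.update_cons_zero]
              rw [hdetRA]
              simp
      have hvanish : ∀ c' : Fin (m+1), c' ≠ c →
          Matrix.det (Matrix.of (Fin.cons (fun b => w b (astar c')) tail)) = 0 := by
        intro c' hcc
        obtain ⟨j₀, hj₀⟩ := Fin.exists_succAbove_eq hcc
        rw [hdetRA]
        have heq2 : (Fin.cons (fun b => w b (astar c')) tail : Fin (m+1) → Fin (m+1) → ℝ) 0
            = (Fin.cons (fun b => w b (astar c')) tail : Fin (m+1) → Fin (m+1) → ℝ) j₀.succ := by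
          rw [Fin.cons_zero, Fin.cons_succ, htail]
          funext b
          simp [hj₀]
        exact AlternatingMap.map_eq_zero_of_eq _ _ heq2
          (show (0 : Fin (m+1)) ≠ j₀.succ from (Fin.succ_ne_zero j₀).symm)
      have hsum0 : ∑ c' : Fin (m+1), r c' *
            Matrix.det (Matrix.of (Fin.cons (fun b => w b (astar c')) tail))
          = r c * Matrix.det (Matrix.of (Fin.cons (fun b => w b (astar c)) tail)) :=
        Finset.sum_eq_single c (fun c' _ hcc => by rw [hvanish c' hcc, mul_zero])
          (fun h => absurd (Finset.mem_univ c) h)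
      rw [hexp, hsum0] at hzc
      have hpermdet : Matrix.det (Matrix.of (Fin.cons (fun b => w b (astar c)) tail)) ≠ 0 := by
        have heqperm : Matrix.of (Fin.cons (fun b => w b (astar c)) tail)
            = (M.transpose).submatrix (c.cycleRange).symm id := by
          ext i j
          refine Fin.cases ?_ ?_ i
          · simp [Matrix.submatrix_apply, Fin.cycleRange_symm_zero, Fin.cons_zero,
              Matrix.transpose_apply, hM]
          · intro j'
            simp [Matrix.submatrix_apply, Fin.cycleRange_symm_succ, Fin.cons_succ,
              Matrix.transpose_apply, hM, htail]
        rw [heqperm, Matrix.det_permute, Matrix.det_transpose]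
        simp only [ne_eq, mul_eq_zero, not_or]
        exact ⟨by exact_mod_cast (Units.ne_zero (Equiv.Perm.sign (c.cycleRange).symm)), hdet⟩
      exact (mul_eq_zero.mp hzc).resolve_right hpermdet
    apply hv0
    have hr0 : r = 0 := funext hrc
    have : (v : Fin (m+1) → ℝ) = 0 := by rw [← hMr, hr0, Matrix.mulVec_zero]
    exact (WithLp.ofLp_eq_zero 2).mp this
  -- conclude : every w b is a.e. strongly measurable
  intro b
  have hmem : (WithLp.toLp 2 (Pi.single b 1 : Fin (m+1) → ℝ) : EuclideanSpace ℝ (Fin (m+1))) ∈ V := by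
    rw [hVtop]
    exact Submodule.mem_top
  have := (hVmem _).mp hmem
  refine this.congr ?_
  filter_upwards with x
  simp [Pi.single_apply, ite_mul]


lemma integrand_eq (n : ℕ) (w : Fin n → ℝ → ℝ) (C : ℝ) (p : (Fin n → ℝ) → ℝ)
    (hp : ∀ a : Fin n → ℝ,
      p a = C * vdm a * Matrix.det (Matrix.of fun b c : Fin n => w b (a c)))
    (s : Fin n → ℝ) :
    (fun a : Fin n → ℝ => (p a : ℂ) *
        Matrix.det (Matrix.of fun b c : Fin n => Complex.exp (Complex.I * (a b) * (s c))) /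
          (vdmC (fun j => Complex.I * (s j)) * (vdm a : ℂ)))
    = fun a : Fin n → ℝ => (C : ℂ) / (vdmC (fun j => Complex.I * (s j))) *
        (((Matrix.det (Matrix.of fun b c : Fin n => w b (a c)) : ℝ) : ℂ) *
         (Matrix.det (Matrix.of fun b c : Fin n =>
            Complex.exp (Complex.I * (a c) * (s b))))) := by
  funext a
  have hdetE : Matrix.det (Matrix.of fun b c : Fin n => Complex.exp (Complex.I * (a b) * (s c)))
      = Matrix.det (Matrix.of fun b c : Fin n => Complex.exp (Complex.I * (a c) * (s b))) := by
    rw [← Matrix.det_transpose (Matrix.of fun b c : Fin n =>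
      Complex.exp (Complex.I * (a c) * (s b)))]
    rfl
  rw [hp a, ← hdetE]
  by_cases hv : vdm a = 0
  · rw [vdm_zero_det_zero w a hv, hv]
    push_cast
    ring
  · have hvC : ((vdm a : ℝ) : ℂ) ≠ 0 := by exact_mod_cast hv
    by_cases hD : vdmC (fun j : Fin n => Complex.I * (s j)) = 0
    · rw [hD]
      simp
    · push_cast
      field_simp

end FTPEAux

open FTPEAux in
/-- the multivariate Fourier transform of a polynomial ensemble on `ℝ^n` is a
determinant of univariate Fourier transforms. -/
theorem fourierTransform_polynomial_ensemble
    (n : ℕ) (hn : 1 ≤ n) (w : Fin n → ℝ → ℝ)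
    (hint : ∀ b : Fin n, ∀ κ : ℝ, 1 ≤ κ → κ ≤ n →
      Integrable (fun x : ℝ => |x| ^ (κ - 1) * |w b x|))
    (C : ℝ) (p : (Fin n → ℝ) → ℝ)
    (hp : ∀ a : Fin n → ℝ,
      p a = C * vdm a * Matrix.det (Matrix.of fun b c : Fin n => w b (a c)))
    (s : Fin n → ℝ) (hs : Function.Injective s) :
    (∏ j ∈ Finset.range n, (j.factorial : ℂ)) *
      ∫ a : Fin n → ℝ,
        (p a : ℂ) *
          Matrix.det (Matrix.of fun b c : Fin n => Complex.exp (Complex.I * (a b) * (s c))) /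
          (vdmC (fun j => Complex.I * (s j)) * (vdm a : ℂ))
    = (C : ℂ) * (∏ j ∈ Finset.Icc 1 n, (j.factorial : ℂ)) *
        Matrix.det (Matrix.of fun b c : Fin n => fourierT (w b) (s c)) /
        vdmC (fun j => Complex.I * (s j)) := by
  classical
  have habs : ∀ b, Integrable (fun x : ℝ => |w b x|) := by
    intro b
    have h := hint b 1 le_rfl (by exact_mod_cast hn)
    have h1 : ((1:ℝ) - 1) = 0 := by norm_num
    rw [h1] at h
    simpa [Real.rpow_zero] using h
  by_cases hGood : ∀ b, AEStronglyMeasurable (fun x : ℝ => ((w b x : ℂ))) volume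
  · exact main_good n w habs hGood C p hp s hs
  · push_neg at hGood
    obtain ⟨b₀, hb₀⟩ := hGood
    obtain ⟨m, rfl⟩ : ∃ m, n = m + 1 := ⟨n - 1, by omega⟩
    have hD := vdmC_ne_zero s hs
    have hFT0 : ∀ c : Fin (m+1), fourierT (w b₀) (s c) = 0 := by
      intro c
      apply MeasureTheory.integral_undef
      intro hInt
      apply hb₀
      have h1 := hInt.aestronglyMeasurable
      have hcont : Continuous fun x : ℝ => Complex.exp (-(Complex.I * x * s c)) := by fun_prop
      have h2 := h1.mul hcont.aestronglyMeasurable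
      refine h2.congr ?_
      filter_upwards with x
      simp only [Pi.mul_apply]
      rw [mul_assoc, ← Complex.exp_add, add_neg_cancel, Complex.exp_zero, mul_one]
    have hRHS0 : Matrix.det (Matrix.of fun b c : Fin (m+1) => fourierT (w b) (s c)) = 0 :=
      Matrix.det_eq_zero_of_row_eq_zero b₀ fun c => by simp [hFT0 c]
    rw [hRHS0, integrand_eq (m+1) w C p hp s, mul_zero, zero_div]
    apply mul_eq_zero_of_right
    by_cases hC : C = 0
    · subst hC
      simp
    by_cases hdw : (fun a : Fin (m+1) → ℝ =>
        Matrix.det (Matrix.of fun b c : Fin (m+1) => w b (a c))) =ᵐ[volume] 0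
    · have hzero : (fun a : Fin (m+1) → ℝ =>
          (C : ℂ) / (vdmC fun j => Complex.I * (s j)) *
          (((Matrix.det (Matrix.of fun b c : Fin (m+1) => w b (a c)) : ℝ) : ℂ) *
            Matrix.det (Matrix.of fun b c : Fin (m+1) =>
              Complex.exp (Complex.I * (a c) * (s b)))))
          =ᵐ[volume] (fun _ => (0:ℂ)) := by
        filter_upwards [hdw] with a ha
        have h0 : Matrix.det (Matrix.of fun b c : Fin (m+1) => w b (a c)) = 0 := by
          simpa using ha
        simp [h0]
      rw [MeasureTheory.integral_congr_ae hzero, integral_zero]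
    by_cases hInt : Integrable (fun a : Fin (m+1) → ℝ =>
        (C : ℂ) / (vdmC fun j => Complex.I * (s j)) *
        (((Matrix.det (Matrix.of fun b c : Fin (m+1) => w b (a c)) : ℝ) : ℂ) *
          Matrix.det (Matrix.of fun b c : Fin (m+1) =>
            Complex.exp (Complex.I * (a c) * (s b))))) volume
    · exfalso
      have hCD : (C : ℂ) / (vdmC fun j => Complex.I * (s j)) ≠ 0 :=
        div_ne_zero (by exact_mod_cast hC) hD
      have hG : AEStronglyMeasurable (fun a : Fin (m+1) → ℝ =>
          ((Matrix.det (Matrix.of fun b c : Fin (m+1) => w b (a c)) : ℝ) : ℂ) *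
          Matrix.det (Matrix.of fun b c : Fin (m+1) =>
            Complex.exp (Complex.I * (a c) * (s b)))) volume := by
        have h2 := hInt.aestronglyMeasurable.const_mul
          (((C : ℂ) / (vdmC fun j => Complex.I * (s j)))⁻¹)
        refine h2.congr ?_
        filter_upwards with a
        rw [← mul_assoc, inv_mul_cancel₀ hCD, one_mul]
      exact hb₀ (Complex.continuous_ofReal.comp_aestronglyMeasurable (hard w s hs hG hdw b₀))
    · rw [MeasureTheory.integral_undef hInt]
end

section
/- Let n ≥ 1, let ω belong to the class L¹_{H₂}(ℝ) for n with ∫_ℝ ω > 0, and suppose p(a) = C_n[ω]·Δ_n(a)·det[(−1)^{b−1}·ω^{(b−1)}(a_c)]_{b,c=1,…,n} is a probability density on ℝ^n, where C_n[ω] is the normalization constant. Then C_n[ω] = ∏_{j=1}^n 1/(j!·ω̂(0)), and for every s ∈ ℝ^n with pairwise distinct entries: (∏_{j=0}^{n−1} j!) · ∫_{ℝ^n} p(a) · det[exp(i·a_b·s_c)]_{b,c=1,…,n} / ( Δ_n(i·s) · Δ_n(a) ) da = ∏_{j=1}^n ω̂(s_j)/ω̂(0), where ω̂(s) = ∫_ℝ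 ω(x)·e^{i·x·s} dx (so ω̂(0) = ∫_ℝ ω). -/
open MeasureTheory Finset

lemma pairProd {m : ℕ} {R : Type*} [CommMonoid R] (F : Fin m → Fin m → R) :
    ∏ p ∈ Finset.univ.filter (fun p : Fin m × Fin m => p.1 < p.2), F p.1 p.2
      = ∏ i : Fin m, ∏ j ∈ Finset.Ioi i, F i j := by
  rw [Finset.prod_filter, ← Finset.univ_product_univ, Finset.prod_product]
  refine Finset.prod_congr rfl fun i _ => ?_
  rw [← Finset.prod_filter, Finset.filter_lt_eq_Ioi]

lemma det_pow_eq_vdm {m : ℕ} (a : Fin m → ℝ) :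
    (Matrix.of fun b c : Fin m => a c ^ (b : ℕ)).det = vdm a := by
  have : (Matrix.of fun b c : Fin m => a c ^ (b : ℕ)) = (Matrix.vandermonde a).transpose := by
    ext b c; rfl
  rw [this, Matrix.det_transpose, Matrix.det_vandermonde, vdm]
  exact (pairProd fun i j => a j - a i).symm

lemma det_pow_eq_vdmC {m : ℕ} (a : Fin m → ℂ) :
    (Matrix.of fun b c : Fin m => a c ^ (b : ℕ)).det = vdmC a := by
  have : (Matrix.of fun b c : Fin m => a c ^ (b : ℕ)) = (Matrix.vandermonde a).transpose := by
    ext b c; rfl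
  rw [this, Matrix.det_transpose, Matrix.det_vandermonde, vdmC]
  exact (pairProd fun i j => a j - a i).symm

lemma vdmC_ne_zero {m : ℕ} {s : Fin m → ℝ} (hs : Function.Injective s) :
    vdmC (fun j => Complex.I * (s j)) ≠ 0 := by
  rw [vdmC]
  refine Finset.prod_ne_zero_iff.2 fun p hp => ?_
  simp only [Finset.mem_filter] at hp
  have hne : s p.1 ≠ s p.2 := fun h => absurd (hs h) (ne_of_lt hp.2)
  intro h
  rw [sub_eq_zero] at h
  have := mul_left_cancel₀ Complex.I_ne_zero h
  exact hne (by exact_mod_cast this.symm)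

lemma andreief {n : ℕ} (f g : Fin n → ℝ → ℂ)
    (h : ∀ b c, Integrable (fun x => f b x * g c x)) :
    ∫ a : Fin n → ℝ, (Matrix.of fun b c => f b (a c)).det *
        (Matrix.of fun b c => g b (a c)).det
      = (n.factorial : ℂ) * (Matrix.of fun b c => ∫ x : ℝ, f b x * g c x).det := by
  classical
  have key : ∀ (σ τ : Equiv.Perm (Fin n)),
      Integrable (fun a : Fin n → ℝ => ∏ i, (f (σ i) (a i) * g (τ i) (a i))) :=
    fun σ τ => Integrable.fintype_prod (fun i => h (σ i) (τ i))
  have step1 : ∀ a : Fin n → ℝ,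
      (Matrix.of fun b c => f b (a c)).det * (Matrix.of fun b c => g b (a c)).det
        = ∑ σ : Equiv.Perm (Fin n), ∑ τ : Equiv.Perm (Fin n),
            ((Equiv.Perm.sign σ : ℤ) : ℂ) * ((Equiv.Perm.sign τ : ℤ) : ℂ) *
              ∏ i, (f (σ i) (a i) * g (τ i) (a i)) := by
    intro a
    rw [Matrix.det_apply, Matrix.det_apply, Finset.sum_mul_sum]
    refine Finset.sum_congr rfl fun σ _ => Finset.sum_congr rfl fun τ _ => ?_
    simp only [Matrix.of_apply, Units.smul_def, zsmul_eq_mul, Finset.prod_mul_distrib]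
    ring
  simp_rw [step1]
  rw [integral_finset_sum _ (fun σ _ => integrable_finset_sum _
    (fun τ _ => ((key σ τ).const_mul _)))]
  have step2 : ∀ σ : Equiv.Perm (Fin n),
      ∫ a : Fin n → ℝ, ∑ τ : Equiv.Perm (Fin n),
          ((Equiv.Perm.sign σ : ℤ) : ℂ) * ((Equiv.Perm.sign τ : ℤ) : ℂ) *
            ∏ i, (f (σ i) (a i) * g (τ i) (a i))
        = ∑ τ : Equiv.Perm (Fin n),
            ((Equiv.Perm.sign σ : ℤ) : ℂ) * ((Equiv.Perm.sign τ : ℤ) : ℂ) *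
              ∏ i, ∫ x : ℝ, f (σ i) x * g (τ i) x := by
    intro σ
    rw [integral_finset_sum _ (fun τ _ => (key σ τ).const_mul _)]
    refine Finset.sum_congr rfl fun τ _ => ?_
    rw [MeasureTheory.integral_const_mul,
      MeasureTheory.integral_fintype_prod_volume_eq_prod (fun i x => f (σ i) x * g (τ i) x)]
  simp_rw [step2]
  have sq : ∀ σ : Equiv.Perm (Fin n),
      ((Equiv.Perm.sign σ : ℤ) : ℂ) ^ 2 = 1 := by
    intro σ
    rw [← Int.cast_pow, sq, ← Units.val_mul, Int.units_mul_self]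
    norm_num
  have step3 : ∀ σ : Equiv.Perm (Fin n),
      ∑ τ : Equiv.Perm (Fin n),
          ((Equiv.Perm.sign σ : ℤ) : ℂ) * ((Equiv.Perm.sign τ : ℤ) : ℂ) *
            ∏ i, ∫ x : ℝ, f (σ i) x * g (τ i) x
        = (Matrix.of fun b c => ∫ x : ℝ, f b x * g c x).det := by
    intro σ
    rw [← Equiv.sum_comp (Equiv.mulRight σ), ← Matrix.det_transpose, Matrix.det_apply]
    refine Finset.sum_congr rfl fun ρ _ => ?_
    have h1 : (Equiv.mulRight σ) ρ = ρ * σ := rfl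
    rw [h1, map_mul]
    have h4 : (∏ i, ∫ x : ℝ, f (σ i) x * g ((ρ * σ) i) x)
        = ∏ i, ∫ x : ℝ, f i x * g (ρ i) x :=
      Equiv.prod_comp σ (fun j => ∫ x : ℝ, f j x * g (ρ j) x)
    rw [h4]
    simp only [Matrix.transpose_apply, Matrix.of_apply, Units.smul_def, zsmul_eq_mul,
      Units.val_mul, Int.cast_mul]
    have hsq := sq σ
    ring_nf
    ring_nf at hsq
    rw [hsq, one_mul]
  simp_rw [step3]
  rw [Finset.sum_const, Finset.card_univ, Fintype.card_perm, Fintype.card_fin, nsmul_eq_mul]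

lemma cexp_integrable {g : ℝ → ℝ} (hg : Integrable g) (s : ℝ) :
    Integrable (fun x : ℝ => (g x : ℂ) * Complex.exp (Complex.I * x * s)) := by
  refine Integrable.mono' hg.abs
    ((Complex.continuous_ofReal.comp_aestronglyMeasurable hg.1).mul
      (Complex.continuous_exp.comp (by fun_prop)).aestronglyMeasurable) ?_
  filter_upwards with x
  rw [norm_mul]
  have h1 : ‖Complex.exp (Complex.I * x * s)‖ = 1 := by
    rw [Complex.norm_exp]
    simp [Complex.mul_re, Complex.mul_im]
  simp [h1]

lemma ibp_fourier {f : ℝ → ℝ} (hf : Differentiable ℝ f) (h1 : Integrable f)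
    (h2 : Integrable (deriv f)) (s : ℝ) :
    ∫ x : ℝ, ((deriv f x : ℝ) : ℂ) * Complex.exp (Complex.I * x * s)
      = (-(Complex.I * s)) * ∫ x : ℝ, (f x : ℂ) * Complex.exp (Complex.I * x * s) := by
  have hexp : ∀ x : ℝ, HasDerivAt (fun y : ℝ => Complex.exp (Complex.I * y * s))
      (Complex.I * s * Complex.exp (Complex.I * x * s)) x := by
    intro x
    have h := (((hasDerivAt_id (x : ℂ)).const_mul Complex.I).mul_const (s : ℂ)).cexp
    have h' := h.comp_ofReal
    simpa [mul_comm, mul_assoc, mul_left_comm] using h'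
  have hmul : ∀ x : ℝ, HasDerivAt (fun y : ℝ => (f y : ℂ) * Complex.exp (Complex.I * y * s))
      (((deriv f x : ℝ) : ℂ) * Complex.exp (Complex.I * x * s)
        + (Complex.I * s) * ((f x : ℂ) * Complex.exp (Complex.I * x * s))) x := by
    intro x
    have hfc : HasDerivAt (fun y : ℝ => (f y : ℂ)) (((deriv f x : ℝ) : ℂ)) x :=
      (hf x).hasDerivAt.ofReal_comp
    have := hfc.mul (hexp x)
    exact this.congr_deriv (by ring)
  have h0 : ∫ x : ℝ, (((deriv f x : ℝ) : ℂ) * Complex.exp (Complex.I * x * s)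
      + (Complex.I * s) * ((f x : ℂ) * Complex.exp (Complex.I * x * s))) = 0 :=
    integral_eq_zero_of_hasDerivAt_of_integrable hmul
      ((cexp_integrable h2 s).add ((cexp_integrable h1 s).const_mul _))
      (cexp_integrable h1 s)
  rw [integral_add (cexp_integrable h2 s) ((cexp_integrable h1 s).const_mul _),
    MeasureTheory.integral_const_mul] at h0
  linear_combination h0

lemma ibp_real {f : ℝ → ℝ} {k : ℕ} (hf : Differentiable ℝ f) (hk : 1 ≤ k)
    (h1 : Integrable (fun x : ℝ => x ^ k * f x))
    (h2 : Integrable (fun x : ℝ => x ^ k * deriv f x))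
    (h3 : Integrable (fun x : ℝ => x ^ (k - 1) * f x)) :
    ∫ x : ℝ, x ^ k * deriv f x = -(k : ℝ) * ∫ x : ℝ, x ^ (k - 1) * f x := by
  have hd : ∀ x : ℝ, HasDerivAt (fun y : ℝ => y ^ k * f y)
      ((k : ℝ) * (x ^ (k - 1) * f x) + x ^ k * deriv f x) x := by
    intro x
    have := (hasDerivAt_pow k x).mul (hf x).hasDerivAt
    exact this.congr_deriv (by ring)
  have h0 : ∫ x : ℝ, ((k : ℝ) * (x ^ (k - 1) * f x) + x ^ k * deriv f x) = 0 :=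
    integral_eq_zero_of_hasDerivAt_of_integrable hd ((h3.const_mul _).add h2) h1
  rw [integral_add (h3.const_mul _) h2, MeasureTheory.integral_const_mul] at h0
  linarith

lemma factprod (n : ℕ) :
    ∏ j ∈ Finset.Icc 1 n, (j.factorial : ℂ)
      = (n.factorial : ℂ) * ∏ j ∈ Finset.range n, (j.factorial : ℂ) := by
  induction n with
  | zero => simp
  | succ n ih =>
      rw [Finset.prod_Icc_succ_top (by omega), ih, Finset.prod_range_succ]
      push_cast [Nat.factorial_succ]
      ring

/-- for a Pólya ensemble on `H₂`, the normalization constant is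
`C_n[ω] = ∏_{j=1}^n 1/(j!·ω̂(0))` and the multivariate Fourier transform factorizes into the
univariate Fourier transforms `∏_j ω̂(s_j)/ω̂(0)`. -/
theorem fourierTransform_polyaEnsemble_hermitian
    (n : ℕ) (hn : 1 ≤ n) (ω : ℝ → ℝ)
    (hpos : ∀ x : ℝ, 0 ≤ ω x)
    (hdiff : ∀ j : ℕ, j < n - 1 → Differentiable ℝ (iteratedDeriv j ω))
    (hint : ∀ κ : ℝ, 1 ≤ κ → κ ≤ n → ∀ j : ℕ, j ≤ n - 1 →
      Integrable (fun x : ℝ => |x| ^ (κ - 1) * |iteratedDeriv j ω x|))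
    (hω0 : 0 < ∫ x : ℝ, ω x)
    (C : ℝ) (p : (Fin n → ℝ) → ℝ)
    (hp : ∀ a : Fin n → ℝ,
      p a = C * vdm a * Matrix.det (Matrix.of fun b c : Fin n =>
        (-1 : ℝ) ^ (b : ℕ) * iteratedDeriv (b : ℕ) ω (a c)))
    (hp0 : ∀ a, 0 ≤ p a) (hpint : Integrable p) (hp1 : ∫ a : Fin n → ℝ, p a = 1) :
    (C : ℂ) = (∏ j ∈ Finset.Icc 1 n, 1 / ((j.factorial : ℂ) * fourierT ω 0)) ∧
    ∀ s : Fin n → ℝ, Function.Injective s →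
      (∏ j ∈ Finset.range n, (j.factorial : ℂ)) *
        ∫ a : Fin n → ℝ,
          (p a : ℂ) *
            Matrix.det (Matrix.of fun b c : Fin n => Complex.exp (Complex.I * (a b) * (s c))) /
            (vdmC (fun j => Complex.I * (s j)) * (vdm a : ℂ))
      = ∏ j : Fin n, fourierT ω (s j) / fourierT ω 0 := by
  classical
  set m0 : ℝ := ∫ x : ℝ, ω x with hm0def
  have hm0ne : (m0 : ℂ) ≠ 0 := Complex.ofReal_ne_zero.2 (ne_of_gt hω0)
  -- measurability of ω
  have hωmeas : AEStronglyMeasurable ω (volume : Measure ℝ) := by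
    rcases lt_or_eq_of_le hn with h2 | h1
    · have := (hdiff 0 (by omega)).continuous
      rw [iteratedDeriv_zero] at this
      exact this.aestronglyMeasurable
    · have hn1 : n = 1 := h1.symm
      subst hn1
      have hC : C ≠ 0 := by
        intro hC0
        have h0 : (1 : ℝ) = 0 := by
          rw [← hp1]
          have : ∀ a : Fin 1 → ℝ, p a = 0 := fun a => by rw [hp a, hC0]; ring
          simp [this]
        norm_num at h0
      have hvdm1 : ∀ x : ℝ, vdm (fun _ : Fin 1 => x) = 1 := by
        intro x
        rw [vdm]
        refine Finset.prod_eq_one fun q hq => ?_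
        have : q.1 = q.2 := Subsingleton.elim _ _
        rw [Finset.mem_filter] at hq
        exact absurd hq.2 (by rw [this]; exact lt_irrefl _)
      have hpx : ∀ x : ℝ, ω x = C⁻¹ * p (fun _ : Fin 1 => x) := by
        intro x
        rw [hp, hvdm1 x, Matrix.det_fin_one]
        simp only [Matrix.of_apply, Fin.val_zero, pow_zero, one_mul, iteratedDeriv_zero]
        field_simp
      have hint1 : Integrable (fun x : ℝ => p (fun _ : Fin 1 => x)) := by
        exact (((volume_preserving_funUnique (Fin 1) ℝ).symm).integrable_comp_emb
          (MeasurableEquiv.measurableEmbedding _)).2 hpint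
      have hmm := (hint1.aestronglyMeasurable.const_mul C⁻¹)
      have heq : (fun x : ℝ => C⁻¹ * p (fun _ : Fin 1 => x)) = ω := by
        funext x; exact (hpx x).symm
      rwa [heq] at hmm
  -- measurability of all derivatives
  have hmeas : ∀ c : ℕ, c ≤ n - 1 → AEStronglyMeasurable (iteratedDeriv c ω)
      (volume : Measure ℝ) := by
    intro c _
    cases c with
    | zero => simpa [iteratedDeriv_zero] using hωmeas
    | succ k =>
        rw [iteratedDeriv_succ]
        exact (measurable_deriv _).aestronglyMeasurable
  -- integrability of moments
  have hInt : ∀ b c : ℕ, b ≤ n - 1 → c ≤ n - 1 →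
      Integrable (fun x : ℝ => x ^ b * iteratedDeriv c ω x) := by
    intro b c hb hc
    have hκ1 : (1 : ℝ) ≤ (b : ℝ) + 1 := by
      have : (0 : ℝ) ≤ (b : ℝ) := Nat.cast_nonneg b
      linarith
    have hκ2 : ((b : ℝ) + 1) ≤ (n : ℝ) := by
      have : b + 1 ≤ n := by omega
      exact_mod_cast this
    have h := hint ((b : ℝ) + 1) hκ1 hκ2 c hc
    refine h.mono' (((continuous_pow b).aestronglyMeasurable).mul (hmeas c hc)) ?_
    filter_upwards with x
    have he : ((b : ℝ) + 1 - 1) = ((b : ℕ) : ℝ) := by ring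
    rw [he, Real.rpow_natCast, Real.norm_eq_abs, abs_mul, abs_pow]
  -- integral of pure derivatives vanish
  have hmom_zero : ∀ c : ℕ, 1 ≤ c → c ≤ n - 1 → ∫ x : ℝ, iteratedDeriv c ω x = 0 := by
    intro c h1c hc
    have hder : deriv (iteratedDeriv (c - 1) ω) = iteratedDeriv c ω := by
      funext x
      rw [← iteratedDeriv_succ]
      congr 1
      omega
    have hdf : Differentiable ℝ (iteratedDeriv (c - 1) ω) := hdiff (c - 1) (by omega)
    have hI0 : Integrable (iteratedDeriv (c - 1) ω) := by
      simpa using hInt 0 (c - 1) (by omega) (by omega)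
    have hI1 : Integrable (iteratedDeriv c ω) := by simpa using hInt 0 c (by omega) hc
    exact integral_eq_zero_of_hasDerivAt_of_integrable
      (fun x => hder ▸ (hdf x).hasDerivAt) hI1 hI0
  -- off-diagonal moments vanish
  have hmom0 : ∀ b c : ℕ, b ≤ n - 1 → c ≤ n - 1 → b < c →
      ∫ x : ℝ, x ^ b * iteratedDeriv c ω x = 0 := by
    intro b
    induction b with
    | zero =>
        intro c _ hc hbc
        simpa using hmom_zero c (by omega) hc
    | succ b ih =>
        intro c hb hc hbc
        have hder : deriv (iteratedDeriv (c - 1) ω) = iteratedDeriv c ω := by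
          funext x
          rw [← iteratedDeriv_succ]
          congr 1
          omega
        have hdf : Differentiable ℝ (iteratedDeriv (c - 1) ω) := hdiff (c - 1) (by omega)
        have h := ibp_real (k := b + 1) hdf (by omega)
          (hInt (b + 1) (c - 1) (by omega) (by omega))
          (by rw [hder]; exact hInt (b + 1) c (by omega) hc)
          (by simpa using hInt b (c - 1) (by omega) (by omega))
        rw [hder] at h
        rw [h]
        have := ih (c - 1) (by omega) (by omega) (by omega)
        simp only [Nat.add_sub_cancel] at h ⊢
        rw [this]
        ring
  -- diagonal moments
  have hmomd : ∀ b : ℕ, b ≤ n - 1 →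
      ∫ x : ℝ, x ^ b * iteratedDeriv b ω x = (-1 : ℝ) ^ b * b.factorial * m0 := by
    intro b
    induction b with
    | zero => intro _; simp [iteratedDeriv_zero, hm0def]
    | succ b ih =>
        intro hb
        have hder : deriv (iteratedDeriv b ω) = iteratedDeriv (b + 1) ω :=
          (iteratedDeriv_succ).symm
        have hdf : Differentiable ℝ (iteratedDeriv b ω) := hdiff b (by omega)
        have h := ibp_real (k := b + 1) hdf (by omega)
          (hInt (b + 1) b (by omega) (by omega))
          (by rw [hder]; exact hInt (b + 1) (b + 1) hb hb)
          (by simpa using hInt b b (by omega) (by omega))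
        rw [hder] at h
        simp only [Nat.add_sub_cancel] at h
        rw [h, ih (by omega)]
        push_cast [Nat.factorial_succ]
        ring
  -- Fourier transforms of derivatives
  have hfour : ∀ c : ℕ, c ≤ n - 1 → ∀ t : ℝ,
      ∫ x : ℝ, ((iteratedDeriv c ω x : ℝ) : ℂ) * Complex.exp (Complex.I * x * t)
        = (-(Complex.I * t)) ^ c * fourierT ω t := by
    intro c
    induction c with
    | zero => intro _ t; simp [iteratedDeriv_zero, fourierT]
    | succ c ih =>
        intro hc t
        have hdf : Differentiable ℝ (iteratedDeriv c ω) := hdiff c (by omega)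
        have hder : deriv (iteratedDeriv c ω) = iteratedDeriv (c + 1) ω :=
          (iteratedDeriv_succ).symm
        have h := ibp_fourier hdf (by simpa using hInt 0 c (by omega) (by omega))
          (by rw [hder]; simpa using hInt 0 (c + 1) (by omega) hc) t
        rw [hder] at h
        rw [h, ih (by omega) t, pow_succ]
        ring
  have hfour0 : fourierT ω 0 = (m0 : ℂ) := by
    rw [fourierT]
    simp only [Complex.ofReal_zero, mul_zero, Complex.exp_zero, mul_one]
    exact integral_ofReal (𝕜 := ℂ) (f := ω)
  -- the two families of functions for the Andréief identity
  set f0 : Fin n → ℝ → ℂ := fun b x => (x : ℂ) ^ (b : ℕ) with hf0def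
  set g : Fin n → ℝ → ℂ :=
    fun b x => (-1 : ℂ) ^ (b : ℕ) * ((iteratedDeriv (b : ℕ) ω x : ℝ) : ℂ) with hgdef
  have hfin : ∀ b : Fin n, (b : ℕ) ≤ n - 1 := fun b => by have := b.isLt; omega
  have hfg_int : ∀ b c : Fin n, Integrable (fun x : ℝ => f0 b x * g c x) := by
    intro b c
    have h := ((hInt (b : ℕ) (c : ℕ) (hfin b) (hfin c)).ofReal (𝕜 := ℂ)).const_mul
      ((-1 : ℂ) ^ (c : ℕ))
    refine h.congr ?_
    filter_upwards with x
    simp only [hf0def, hgdef]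
    push_cast
    ring_nf
    rfl
  have hdetV : ∀ a : Fin n → ℝ,
      (Matrix.of fun b c : Fin n => f0 b (a c)).det = ((vdm a : ℝ) : ℂ) := by
    intro a
    rw [det_pow_eq_vdmC (fun i => ((a i : ℝ) : ℂ)), vdm, vdmC]
    push_cast
    rfl
  have hpC : ∀ a : Fin n → ℝ,
      ((p a : ℝ) : ℂ) = (C : ℂ) * ((Matrix.of fun b c : Fin n => f0 b (a c)).det *
        (Matrix.of fun b c : Fin n => g b (a c)).det) := by
    intro a
    rw [hp a, hdetV a]
    have hdg : ((Matrix.of fun b c : Fin n =>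
        (-1 : ℝ) ^ (b : ℕ) * iteratedDeriv (b : ℕ) ω (a c)).det : ℝ) =
        ((Matrix.of fun b c : Fin n => g b (a c)).det : ℂ) := by
      rw [show ((Matrix.of fun b c : Fin n =>
          (-1 : ℝ) ^ (b : ℕ) * iteratedDeriv (b : ℕ) ω (a c)).det : ℂ)
          = Complex.ofRealHom (Matrix.of fun b c : Fin n =>
          (-1 : ℝ) ^ (b : ℕ) * iteratedDeriv (b : ℕ) ω (a c)).det from rfl,
        RingHom.map_det]
      congr 1
      ext b c
      simp only [RingHom.mapMatrix_apply, Matrix.map_apply, Matrix.of_apply, hgdef,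
        Complex.ofRealHom_eq_coe]
      push_cast
      ring
    push_cast
    rw [hdg]
    ring
  -- normalization identity
  have hnorm : (C : ℂ) * ((n.factorial : ℂ) *
      ((∏ j ∈ Finset.range n, (j.factorial : ℂ)) * (m0 : ℂ) ^ n)) = 1 := by
    have h1 : ∫ a : Fin n → ℝ, ((p a : ℝ) : ℂ) = 1 := by
      have h0 : ∫ a : Fin n → ℝ, ((p a : ℝ) : ℂ) = ((∫ a : Fin n → ℝ, p a : ℝ) : ℂ) :=
        integral_ofReal (𝕜 := ℂ)
      rw [h0, hp1, Complex.ofReal_one]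
    have h2 : ∫ a : Fin n → ℝ, ((p a : ℝ) : ℂ)
        = (C : ℂ) * ((n.factorial : ℂ) *
            (Matrix.of fun b c : Fin n => ∫ x : ℝ, f0 b x * g c x).det) := by
      simp_rw [hpC]
      rw [MeasureTheory.integral_const_mul, andreief f0 g hfg_int]
    have hentry : ∀ b c : Fin n, (∫ x : ℝ, f0 b x * g c x)
        = (-1 : ℂ) ^ (c : ℕ) *
          ((∫ x : ℝ, x ^ (b : ℕ) * iteratedDeriv (c : ℕ) ω x : ℝ) : ℂ) := by
      intro b c
      rw [show (fun x : ℝ => f0 b x * g c x) = fun x : ℝ => (-1 : ℂ) ^ (c : ℕ) *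
          (((x ^ (b : ℕ) * iteratedDeriv (c : ℕ) ω x : ℝ)) : ℂ) from by
        funext x; simp only [hf0def, hgdef]; push_cast; ring]
      rw [MeasureTheory.integral_const_mul]
      congr 1
      exact integral_ofReal (𝕜 := ℂ)
    have hM : (Matrix.of fun b c : Fin n => ∫ x : ℝ, f0 b x * g c x).det
        = (∏ j ∈ Finset.range n, (j.factorial : ℂ)) * (m0 : ℂ) ^ n := by
      have htri : (Matrix.of fun b c : Fin n => ∫ x : ℝ, f0 b x * g c x).BlockTriangular
          OrderDual.toDual := by
        intro b c hbc
        rw [Matrix.of_apply, hentry b c,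
          hmom0 (b : ℕ) (c : ℕ) (hfin b) (hfin c) (by exact_mod_cast hbc)]
        simp
      rw [Matrix.det_of_lowerTriangular _ htri]
      have hdiag : ∀ b : Fin n, (Matrix.of fun b c : Fin n => ∫ x : ℝ, f0 b x * g c x) b b
          = (((b : ℕ).factorial : ℕ) : ℂ) * (m0 : ℂ) := by
        intro b
        rw [Matrix.of_apply, hentry b b, hmomd (b : ℕ) (hfin b)]
        have hsq : (-1 : ℂ) ^ (b : ℕ) * (-1 : ℂ) ^ (b : ℕ) = 1 := by
          rw [← pow_add]
          exact Even.neg_one_pow ⟨(b : ℕ), rfl⟩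
        push_cast
        calc (-1 : ℂ) ^ (b : ℕ) * ((-1 : ℂ) ^ (b : ℕ) * ((b : ℕ).factorial : ℂ) * (m0 : ℂ))
            = ((-1 : ℂ) ^ (b : ℕ) * (-1 : ℂ) ^ (b : ℕ)) * (((b : ℕ).factorial : ℂ) * (m0 : ℂ)) := by
              ring
          _ = ((b : ℕ).factorial : ℂ) * (m0 : ℂ) := by rw [hsq, one_mul]
      rw [Finset.prod_congr rfl (fun b _ => hdiag b), Finset.prod_mul_distrib,
        Finset.prod_const, card_univ, Fintype.card_fin]
      congr 1
      exact Fin.prod_univ_eq_prod_range (fun j => ((j.factorial : ℕ) : ℂ)) n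
    rw [h2, hM] at h1
    exact h1
  have hKne : ((n.factorial : ℂ) *
      ((∏ j ∈ Finset.range n, (j.factorial : ℂ)) * (m0 : ℂ) ^ n)) ≠ 0 := by
    refine mul_ne_zero (Nat.cast_ne_zero.2 n.factorial_ne_zero)
      (mul_ne_zero ?_ (pow_ne_zero _ hm0ne))
    exact Finset.prod_ne_zero_iff.2 fun j _ => Nat.cast_ne_zero.2 j.factorial_ne_zero
  constructor
  · rw [hfour0]
    have hprod : ∏ j ∈ Finset.Icc 1 n, (1 / ((j.factorial : ℂ) * (m0 : ℂ)))
        = 1 / ((n.factorial : ℂ) *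
            ((∏ j ∈ Finset.range n, (j.factorial : ℂ)) * (m0 : ℂ) ^ n)) := by
      rw [Finset.prod_div_distrib, Finset.prod_const_one, Finset.prod_mul_distrib,
        Finset.prod_const, Nat.card_Icc, Nat.add_sub_cancel, factprod]
      ring
    rw [hprod]
    exact eq_one_div_of_mul_eq_one_left hnorm
  · intro s hs
    have hΔ : vdmC (fun j => Complex.I * (s j)) ≠ 0 := vdmC_ne_zero hs
    set Δ : ℂ := vdmC (fun j => Complex.I * (s j)) with hΔdef
    set e : Fin n → ℝ → ℂ := fun b x => Complex.exp (Complex.I * x * s b) with hedef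
    have hge_int : ∀ b c : Fin n, Integrable (fun x : ℝ => g b x * e c x) := by
      intro b c
      have h := (cexp_integrable (g := iteratedDeriv (b : ℕ) ω)
        (by simpa using hInt 0 (b : ℕ) (by omega) (hfin b)) (s c)).const_mul
        ((-1 : ℂ) ^ (b : ℕ))
      refine h.congr ?_
      filter_upwards with x
      simp only [hgdef, hedef]
      ring
    have hpoint : ∀ a : Fin n → ℝ,
        ((p a : ℝ) : ℂ) * (Matrix.of fun b c : Fin n =>
            Complex.exp (Complex.I * (a b) * (s c))).det / (Δ * ((vdm a : ℝ) : ℂ))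
          = ((C : ℂ) / Δ) * ((Matrix.of fun b c : Fin n => g b (a c)).det *
              (Matrix.of fun b c : Fin n => e b (a c)).det) := by
      intro a
      have hdetE : (Matrix.of fun b c : Fin n =>
          Complex.exp (Complex.I * (a b) * (s c))).det
            = (Matrix.of fun b c : Fin n => e b (a c)).det := by
        rw [← Matrix.det_transpose (Matrix.of fun b c : Fin n => e b (a c))]
        rfl
      rw [hdetE, hpC a, hdetV a]
      by_cases hv : vdm a = 0
      · have hvfac : ∃ q ∈ Finset.univ.filter
            (fun q : Fin n × Fin n => q.1 < q.2), a q.2 - a q.1 = 0 := by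
          rw [vdm] at hv
          exact Finset.prod_eq_zero_iff.1 hv
        obtain ⟨q, hq, hq0⟩ := hvfac
        rw [Finset.mem_filter] at hq
        have haq : a q.1 = a q.2 := by
          have := sub_eq_zero.1 hq0
          linarith
        have hdetG : (Matrix.of fun b c : Fin n => g b (a c)).det = 0 := by
          refine Matrix.det_zero_of_column_eq (ne_of_lt hq.2) fun k => ?_
          simp only [Matrix.of_apply, haq]
        rw [hdetG, hv]
        simp
      · have hvC : ((vdm a : ℝ) : ℂ) ≠ 0 := Complex.ofReal_ne_zero.2 hv
        field_simp
    have hintexpr : (∫ a : Fin n → ℝ, ((p a : ℝ) : ℂ) * (Matrix.of fun b c : Fin n =>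
          Complex.exp (Complex.I * (a b) * (s c))).det / (Δ * ((vdm a : ℝ) : ℂ)))
        = ((C : ℂ) / Δ) * ((n.factorial : ℂ) *
            (Matrix.of fun b c : Fin n => ∫ x : ℝ, g b x * e c x).det) := by
      simp_rw [hpoint]
      rw [MeasureTheory.integral_const_mul, andreief g e hge_int]
    have hentry2 : ∀ b c : Fin n, (∫ x : ℝ, g b x * e c x)
        = fourierT ω (s c) * (Complex.I * (s c)) ^ (b : ℕ) := by
      intro b c
      have hx : (fun x : ℝ => g b x * e c x) = fun x : ℝ => (-1 : ℂ) ^ (b : ℕ) *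
          (((iteratedDeriv (b : ℕ) ω x : ℝ) : ℂ) * Complex.exp (Complex.I * x * s c)) := by
        funext x
        simp only [hgdef, hedef]
        ring
      rw [hx, MeasureTheory.integral_const_mul, hfour (b : ℕ) (hfin b) (s c)]
      have hneg : (-(Complex.I * (s c))) ^ (b : ℕ)
          = (-1 : ℂ) ^ (b : ℕ) * (Complex.I * (s c)) ^ (b : ℕ) := by
        rw [← mul_pow]
        ring_nf
      rw [hneg]
      have hsq : (-1 : ℂ) ^ (b : ℕ) * (-1 : ℂ) ^ (b : ℕ) = 1 := by
        rw [← pow_add]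
        exact Even.neg_one_pow ⟨(b : ℕ), rfl⟩
      calc (-1 : ℂ) ^ (b : ℕ) * ((-1 : ℂ) ^ (b : ℕ) * (Complex.I * (s c)) ^ (b : ℕ) *
              fourierT ω (s c))
          = ((-1 : ℂ) ^ (b : ℕ) * (-1 : ℂ) ^ (b : ℕ)) * ((Complex.I * (s c)) ^ (b : ℕ) *
              fourierT ω (s c)) := by ring
        _ = fourierT ω (s c) * (Complex.I * (s c)) ^ (b : ℕ) := by rw [hsq]; ring
    have hN : (Matrix.of fun b c : Fin n => ∫ x : ℝ, g b x * e c x).det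
        = (∏ c : Fin n, fourierT ω (s c)) * Δ := by
      have hmm : (Matrix.of fun b c : Fin n => ∫ x : ℝ, g b x * e c x)
          = Matrix.of (fun b c : Fin n => fourierT ω (s c) *
              (Matrix.of fun b c : Fin n => (Complex.I * (s c : ℝ)) ^ (b : ℕ)) b c) := by
        ext b c
        simp only [Matrix.of_apply]
        exact hentry2 b c
      rw [hmm, Matrix.det_mul_row, det_pow_eq_vdmC (fun j => Complex.I * (s j)), ← hΔdef]
    rw [hintexpr, hN, hfour0]
    have hrhs : ∏ j : Fin n, fourierT ω (s j) / (m0 : ℂ)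
        = (∏ j : Fin n, fourierT ω (s j)) / (m0 : ℂ) ^ n := by
      rw [Finset.prod_div_distrib, Finset.prod_const, card_univ, Fintype.card_fin]
    rw [hrhs]
    field_simp
    linear_combination (∏ j : Fin n, fourierT ω (s j)) * hnorm
end
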